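/- arXiv:1410.7213 — 5 statements merged into one kernel-verified Lean document; each statement's English description precedes it below -/
import Mathlib

section
/- Let p ≥ n ≥ 5 and write p ≡ r (mod n−1) with r ∈ {0,1,…,n−2}. Then ex(p;T_n) = ⌊((n−2)(p−1)−r−1)/2⌋ if n ≥ 7 and 2 ≤ r ≤ n−4, and ex(p;T_n) = ((n−2)p − r(n−1−r))/2 otherwise. -/
open SimpleGraph

/-- `G` contains a copy of `H` as a subgraph: there is an injective map
preserving adjacency. -/
def ContainsCopy {V : Type*} {W : Type*} (G : SimpleGraph V) (H : SimpleGraph W) : Prop :=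
  ∃ f : W ↪ V, ∀ a b, H.Adj a b → G.Adj (f a) (f b)

/-- `exNum p H` is the maximal number of edges in a simple graph of order `p`
not containing a copy of `H`. -/
noncomputable def exNum (p : ℕ) {W : Type*} (H : SimpleGraph W) : ℕ :=
  sSup {m : ℕ | ∃ G : SimpleGraph (Fin p), ¬ ContainsCopy G H ∧ Nat.card G.edgeSet = m}

/-- `exNum2 p H₁ H₂` is the maximal number of edges in a simple graph of order `p`
containing no copy of `H₁` and no copy of `H₂`. -/
noncomputable def exNum2 (p : ℕ) {W₁ W₂ : Type*} (H₁ : SimpleGraph W₁) (H₂ : SimpleGraph W₂) : ℕ :=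
  sSup {m : ℕ | ∃ G : SimpleGraph (Fin p),
    ¬ ContainsCopy G H₁ ∧ ¬ ContainsCopy G H₂ ∧ Nat.card G.edgeSet = m}

/-- The tree `T_n` on vertices `v_0, …, v_{n-1}` with edges
`v_0v_1, …, v_0v_{n-2}` and `v_{n-2}v_{n-1}`: the unique tree on `n` vertices
of maximal degree `n-2`. -/
def Tn (n : ℕ) : SimpleGraph (Fin n) :=
  SimpleGraph.fromRel (fun a b =>
    (a.val = 0 ∧ 1 ≤ b.val ∧ b.val ≤ n - 2) ∨ (a.val = n - 2 ∧ b.val = n - 1))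

/-- The tree `T_n^*` on vertices `v_0, …, v_{n-1}` with edges
`v_0v_1, …, v_0v_{n-3}`, `v_{n-3}v_{n-2}` and `v_{n-2}v_{n-1}`. -/
def TnStar (n : ℕ) : SimpleGraph (Fin n) :=
  SimpleGraph.fromRel (fun a b =>
    (a.val = 0 ∧ 1 ≤ b.val ∧ b.val ≤ n - 3) ∨ (a.val = n - 3 ∧ b.val = n - 2) ∨
    (a.val = n - 2 ∧ b.val = n - 1))

open Finset

lemma containsCopy_of (n : ℕ) (hn : 3 ≤ n) {V : Type*} [Fintype V] [DecidableEq V]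
    (G : SimpleGraph V) [DecidableRel G.Adj]
    (v u w : V) (hvu : G.Adj v u) (huw : G.Adj u w) (hwv : w ≠ v)
    (hcard : n - 3 ≤ (((G.neighborFinset v).erase u).erase w).card) :
    ContainsCopy G (Tn n) := by
  obtain ⟨T, hTsub, hT⟩ := Finset.exists_subset_card_eq hcard
  have hTmem : ∀ x ∈ T, G.Adj v x ∧ x ≠ u ∧ x ≠ w ∧ x ≠ v := by
    intro x hx
    have h1 := hTsub hx
    have h2 := Finset.mem_of_mem_erase h1
    have h3 := Finset.mem_of_mem_erase h2
    refine ⟨(G.mem_neighborFinset v x).1 h3, Finset.ne_of_mem_erase h2,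
      Finset.ne_of_mem_erase h1, ?_⟩
    intro h; rw [h] at h3
    exact G.irrefl ((G.mem_neighborFinset v v).1 h3)
  set e : Fin (n - 3) → {x // x ∈ T} := fun j => T.equivFin.symm (Fin.cast hT.symm j) with he
  have einj : Function.Injective e := fun a b h => by
    have := T.equivFin.symm.injective h
    exact Fin.ext (congrArg Fin.val (by exact (Fin.cast_injective _) this))
  set f : Fin n → V := fun i =>
    if h : 1 ≤ i.val ∧ i.val ≤ n - 3 then (e ⟨i.val - 1, by omega⟩ : V)
    else if i.val = n - 2 then u else if i.val = n - 1 then w else v with hf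
  have hfT : ∀ i : Fin n, 1 ≤ i.val → i.val ≤ n - 3 → f i ∈ T := by
    intro i h1 h2
    simp only [hf, dif_pos (And.intro h1 h2)]
    exact (e ⟨i.val - 1, by omega⟩).2
  have hf0 : ∀ i : Fin n, i.val = 0 → f i = v := by
    intro i h; simp only [hf]
    rw [dif_neg (by omega), if_neg (by omega), if_neg (by omega)]
  have hfu : ∀ i : Fin n, i.val = n - 2 → f i = u := by
    intro i h; simp only [hf]
    rw [dif_neg (by omega), if_pos h]
  have hfw : ∀ i : Fin n, i.val = n - 1 → f i = w := by
    intro i h; simp only [hf]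
    rw [dif_neg (by omega), if_neg (by omega), if_pos h]
  have hvu' : v ≠ u := G.ne_of_adj hvu
  have huw' : u ≠ w := G.ne_of_adj huw
  have hinj : Function.Injective f := by
    intro a b hab
    by_contra hne
    have hne' : a.val ≠ b.val := fun h => hne (Fin.ext h)
    -- classify each index
    have hcases : ∀ i : Fin n, (1 ≤ i.val ∧ i.val ≤ n - 3) ∨ i.val = 0 ∨ i.val = n - 2
        ∨ i.val = n - 1 := by intro i; omega
    rcases hcases a with ha | ha | ha | ha <;> rcases hcases b with hb | hb | hb | hb
    · -- both in T
      have : (e ⟨a.val - 1, by omega⟩ : V) = (e ⟨b.val - 1, by omega⟩ : V) := by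
        simpa only [hf, dif_pos ha, dif_pos hb] using hab
      have := einj (Subtype.ext this)
      have : a.val - 1 = b.val - 1 := congrArg Fin.val this
      omega
    · have := hTmem _ (hfT a ha.1 ha.2); rw [hab, hf0 b hb] at this; exact this.2.2.2 rfl
    · have := hTmem _ (hfT a ha.1 ha.2); rw [hab, hfu b hb] at this; exact this.2.1 rfl
    · have := hTmem _ (hfT a ha.1 ha.2); rw [hab, hfw b hb] at this; exact this.2.2.1 rfl
    · have := hTmem _ (hfT b hb.1 hb.2); rw [← hab, hf0 a ha] at this; exact this.2.2.2 rfl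
    · omega
    · rw [hf0 a ha, hfu b hb] at hab; exact hvu' hab
    · rw [hf0 a ha, hfw b hb] at hab; exact hwv hab.symm
    · have := hTmem _ (hfT b hb.1 hb.2); rw [← hab, hfu a ha] at this; exact this.2.1 rfl
    · rw [hfu a ha, hf0 b hb] at hab; exact hvu' hab.symm
    · omega
    · rw [hfu a ha, hfw b hb] at hab; exact huw' hab
    · have := hTmem _ (hfT b hb.1 hb.2); rw [← hab, hfw a ha] at this; exact this.2.2.1 rfl
    · rw [hfw a ha, hf0 b hb] at hab; exact hwv hab
    · rw [hfw a ha, hfu b hb] at hab; exact huw' hab.symm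
    · omega
  have key : ∀ a b : Fin n,
      ((a.val = 0 ∧ 1 ≤ b.val ∧ b.val ≤ n - 2) ∨ (a.val = n - 2 ∧ b.val = n - 1)) →
      G.Adj (f a) (f b) := by
    rintro a b (⟨ha, hb1, hb2⟩ | ⟨ha, hb⟩)
    · rw [hf0 a ha]
      rcases Nat.lt_or_ge b.val (n - 2) with hb3 | hb3
      · have hb3' : b.val ≤ n - 3 := by omega
        exact (hTmem _ (hfT b hb1 hb3')).1
      · have : b.val = n - 2 := by omega
        rw [hfu b this]; exact hvu
    · rw [hfu a ha, hfw b hb]; exact huw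
  refine ⟨⟨f, hinj⟩, ?_⟩
  intro a b hab
  rw [Tn, SimpleGraph.fromRel_adj] at hab
  rcases hab.2 with h | h
  · exact key a b h
  · exact (key b a h).symm


/-- deficiency function -/
def dfun (n s : ℕ) : ℕ := if s ≤ n - 1 then s * (n - 1 - s) else s

def Dval (n r : ℕ) : ℕ := if 7 ≤ n ∧ 2 ≤ r ∧ r ≤ n - 4 then n - 1 + r else r * (n - 1 - r)

lemma dfun_bad_ge {n s : ℕ} (hn : 5 ≤ n) (hs : 1 ≤ s) (hne : s ≠ n - 1) :
    n - 2 ≤ dfun n s := by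
  unfold dfun
  split
  · rename_i h
    have h2 : s ≤ n - 2 := by omega
    obtain ⟨a, rfl⟩ : ∃ a, s = 1 + a := ⟨s - 1, by omega⟩
    obtain ⟨b, hb⟩ : ∃ b, n - 1 - (1 + a) = 1 + b := ⟨n - 2 - (1 + a), by omega⟩
    rw [hb]
    have : n - 2 = 1 + a + b := by omega
    rw [this]
    nlinarith [Nat.zero_le (a * b)]
  · omega

lemma Dval_le_single {n r : ℕ} (hn : 5 ≤ n) (hr : r ≤ n - 2) :
    Dval n r ≤ r * (n - 1 - r) := by
  unfold Dval
  split
  · rename_i h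
    obtain ⟨h7, h2, h4⟩ := h
    rcases Nat.eq_or_lt_of_le h2 with h2' | h3
    · rw [← h2']; omega
    · -- r ≥ 3, b := n-1-r ≥ 3
      obtain ⟨a, rfl⟩ : ∃ a, r = 3 + a := ⟨r - 3, by omega⟩
      obtain ⟨b, hb⟩ : ∃ b, n - 1 - (3 + a) = 3 + b := ⟨n - 4 - (3 + a), by omega⟩
      rw [hb]
      have h9 : n - 1 = 6 + a + b := by omega
      rw [h9]
      nlinarith [Nat.zero_le (a * b)]
  · exact le_refl _

lemma Dval_le_big {n r : ℕ} (hn : 5 ≤ n) (hr : r ≤ n - 2) :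
    Dval n r ≤ n - 1 + r := by
  unfold Dval
  split
  · exact le_refl _
  · rename_i h
    rcases le_or_gt r 1 with h1 | h1
    · interval_cases r <;> simp <;> omega
    · rcases le_or_gt (n - 3) r with h3 | h3
      · have : n - 1 - r ≤ 2 := by omega
        calc r * (n - 1 - r) ≤ r * 2 := Nat.mul_le_mul_left r this
        _ ≤ n - 1 + r := by omega
      · -- 2 ≤ r ≤ n-4, so n ≤ 6 from ¬cond
        have hn6 : n ≤ 6 := by
          by_contra hc
          exact h ⟨by omega, by omega, by omega⟩
        interval_cases n <;> interval_cases r <;> simp_all <;> omega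

lemma Dval_le_two {n r : ℕ} (hn : 5 ≤ n) (hr : r ≤ n - 2) :
    Dval n r ≤ 2 * (n - 2) := by
  unfold Dval
  split
  · rename_i h; omega
  · rename_i h
    rcases le_or_gt r 1 with h1 | h1
    · interval_cases r <;> simp <;> omega
    · rcases le_or_gt (n - 3) r with h3 | h3
      · have : n - 1 - r ≤ 2 := by omega
        calc r * (n - 1 - r) ≤ r * 2 := Nat.mul_le_mul_left r this
        _ ≤ 2 * (n - 2) := by omega
      · have hn6 : n ≤ 6 := by
          by_contra hc
          exact h ⟨by omega, by omega, by omega⟩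
        interval_cases n <;> interval_cases r <;> simp_all <;> omega

lemma partition_lemma {n r : ℕ} (hn : 5 ≤ n) (hr : r ≤ n - 2) {ι : Type*}
    (s : Finset ι) (f : ι → ℕ) (hf : ∀ i ∈ s, 1 ≤ f i)
    (hsum : (∑ i ∈ s, f i) % (n - 1) = r) :
    Dval n r ≤ ∑ i ∈ s, dfun n (f i) := by
  classical
  set B := s.filter (fun i => f i ≠ n - 1) with hB
  have hgood : ∑ i ∈ s.filter (fun i => ¬ f i ≠ n - 1), f i
      = (s.filter (fun i => ¬ f i ≠ n - 1)).card * (n - 1) := by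
    rw [Finset.sum_congr rfl (fun i hi => ?_), Finset.sum_const, smul_eq_mul]
    simpa using (Finset.mem_filter.1 hi).2
  have hBmod : (∑ i ∈ B, f i) % (n - 1) = r := by
    have := Finset.sum_filter_add_sum_filter_not s (fun i => f i ≠ n - 1) f
    rw [hgood] at this
    rw [← hsum, ← this, Nat.add_mul_mod_self_right]
  have hDsub : ∑ i ∈ B, dfun n (f i) ≤ ∑ i ∈ s, dfun n (f i) :=
    Finset.sum_le_sum_of_subset (Finset.filter_subset _ _)
  refine le_trans ?_ hDsub
  rcases Nat.lt_or_ge B.card 2 with hc | hc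
  · rcases Nat.lt_or_ge B.card 1 with hc0 | hc1
    · -- B empty
      have hBe : B = ∅ := Finset.card_eq_zero.1 (by omega)
      rw [hBe] at hBmod
      simp at hBmod
      have hr0 : r = 0 := by omega
      subst hr0
      simp [Dval, hBe]
    · have hc1' : B.card = 1 := by omega
      obtain ⟨i, hi⟩ := Finset.card_eq_one.1 hc1'
      rw [hi] at hBmod ⊢
      simp only [Finset.sum_singleton] at hBmod ⊢
      have his : i ∈ s := Finset.filter_subset _ _ (hi ▸ Finset.mem_singleton_self i)
      have hine : f i ≠ n - 1 := by
        have : i ∈ B := hi ▸ Finset.mem_singleton_self i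
        exact (Finset.mem_filter.1 this).2
      have hfi1 : 1 ≤ f i := hf i his
      rcases le_or_gt (f i) (n - 2) with hle | hgt
      · have : f i % (n - 1) = f i := Nat.mod_eq_of_lt (by omega)
        rw [this] at hBmod
        subst hBmod
        have : dfun n (f i) = f i * (n - 1 - f i) := by unfold dfun; rw [if_pos (by omega)]
        rw [this]
        exact Dval_le_single hn hr
      · have hfn : n ≤ f i := by omega
        have hd : dfun n (f i) = f i := by unfold dfun; rw [if_neg (by omega)]
        rw [hd]
        refine le_trans (Dval_le_big hn hr) ?_
        have hdm := Nat.div_add_mod (f i) (n - 1)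
        rw [hBmod] at hdm
        have hq : 1 ≤ f i / (n - 1) := (Nat.one_le_div_iff (by omega)).2 (by omega)
        have : n - 1 ≤ (n - 1) * (f i / (n - 1)) := Nat.le_mul_of_pos_right _ hq
        omega
  · obtain ⟨a, ha, b, hb, hab⟩ := Finset.one_lt_card.1 hc
    have hsub : {a, b} ⊆ B := by
      intro x hx
      rcases Finset.mem_insert.1 hx with rfl | hx
      · exact ha
      · rw [Finset.mem_singleton.1 hx]; exact hb
    have hpair : ∑ i ∈ ({a, b} : Finset ι), dfun n (f i) = dfun n (f a) + dfun n (f b) :=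
      Finset.sum_pair hab
    refine le_trans ?_ (le_trans (le_of_eq hpair.symm) (Finset.sum_le_sum_of_subset hsub))
    have hda : n - 2 ≤ dfun n (f a) := by
      obtain ⟨has, hane⟩ := Finset.mem_filter.1 ha
      exact dfun_bad_ge hn (hf a has) hane
    have hdb : n - 2 ≤ dfun n (f b) := by
      obtain ⟨hbs, hbne⟩ := Finset.mem_filter.1 hb
      exact dfun_bad_ge hn (hf b hbs) hbne
    refine le_trans (Dval_le_two hn hr) (by omega)

lemma exists_exit {V : Type*} (G : SimpleGraph V) (S : Set V) :
    ∀ {u x : V}, (w : G.Walk u x) → u ∈ S → x ∉ S →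
      ∃ a b, a ∈ S ∧ b ∉ S ∧ G.Adj a b := by
  intro u x w
  induction w with
  | nil => intro hu hx; exact absurd hu hx
  | @cons a b c hadj p ih =>
    intro hu hx
    by_cases hb : b ∈ S
    · exact ih hb hx
    · exact ⟨a, b, hu, hb, hadj⟩

set_option maxHeartbeats 1000000 in
theorem UB {n p r : ℕ} (hn : 5 ≤ n) (hr : r ≤ n - 2) (hmod : p % (n - 1) = r)
    (G : SimpleGraph (Fin p)) [DecidableRel G.Adj] (hfree : ¬ ContainsCopy G (Tn n)) :
    2 * G.edgeFinset.card + Dval n r ≤ (n - 2) * p := by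
  classical
  haveI : Fintype G.ConnectedComponent := Fintype.ofFinite _
  let mk : Fin p → G.ConnectedComponent := G.connectedComponentMk
  let Sc : G.ConnectedComponent → Finset (Fin p) := fun c => univ.filter (fun v => mk v = c)
  have hmem : ∀ c v, v ∈ Sc c ↔ mk v = c := by
    intro c v; simp [Sc]
  have hsub : ∀ c, ∀ v ∈ Sc c, G.neighborFinset v ⊆ (Sc c).erase v := by
    intro c v hv b hb
    have hadj : G.Adj v b := (G.mem_neighborFinset v b).1 hb
    refine Finset.mem_erase.2 ⟨hadj.ne', ?_⟩
    rw [hmem]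
    rw [hmem] at hv
    rw [← hv]
    exact ConnectedComponent.sound hadj.symm.reachable
  have e0 : ∀ v, (G.neighborFinset v).card = G.degree v := fun v => rfl
  have hdegle : ∀ c, ∀ v ∈ Sc c, G.degree v ≤ (Sc c).card - 1 := by
    intro c v hv
    have h1 := Finset.card_le_card (hsub c v hv)
    rw [Finset.card_erase_of_mem ((hmem c v).2 ((hmem c v).1 hv))] at h1
    rw [e0] at h1
    exact h1
  have comp_bound : ∀ c, (∑ v ∈ Sc c, G.degree v) + dfun n (Sc c).card
      ≤ (n - 2) * (Sc c).card := by
    intro c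
    rcases le_or_gt (Sc c).card (n - 1) with hsmall | hbig
    · have h1 : ∑ v ∈ Sc c, G.degree v ≤ (Sc c).card * ((Sc c).card - 1) :=
        Finset.sum_le_card_nsmul _ _ _ (hdegle c)
      have hd : dfun n (Sc c).card = (Sc c).card * (n - 1 - (Sc c).card) := by
        unfold dfun; rw [if_pos hsmall]
      rw [hd]
      rcases Nat.eq_zero_or_pos (Sc c).card with h0 | h0
      · rw [Finset.card_eq_zero] at h0
        simp [h0]
      · have h2 : (Sc c).card * ((Sc c).card - 1) + (Sc c).card * (n - 1 - (Sc c).card)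
            = (Sc c).card * (n - 2) := by
          rw [← Nat.mul_add]; congr 1; omega
        have h3 : (Sc c).card * (n - 2) = (n - 2) * (Sc c).card := Nat.mul_comm _ _
        omega
    · have hd : dfun n (Sc c).card = (Sc c).card := by
        unfold dfun; rw [if_neg (by omega)]
      rw [hd]
      by_cases hdeg : ∀ v ∈ Sc c, G.degree v ≤ n - 3
      · have h1 : ∑ v ∈ Sc c, G.degree v ≤ (Sc c).card * (n - 3) :=
          Finset.sum_le_card_nsmul _ _ _ hdeg
        have h2 : (Sc c).card * (n - 3) + (Sc c).card = (Sc c).card * (n - 2) := by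
          rw [← Nat.mul_succ]; congr 1; omega
        have h3 : (Sc c).card * (n - 2) = (n - 2) * (Sc c).card := Nat.mul_comm _ _
        omega
      · push_neg at hdeg
        obtain ⟨v, hv, hvdeg⟩ := hdeg
        have hvdeg' : n - 2 ≤ G.degree v := by omega
        -- star lemma
        have hA : ∀ u, G.Adj v u → ∀ w, G.Adj u w → w = v := by
          intro u hu w hw
          by_contra hwv
          apply hfree
          rcases le_or_gt (n - 1) (G.degree v) with hbigdeg | hdeg2
          · refine containsCopy_of n (by omega) G v u w hu hw hwv ?_
            have e1 : (G.neighborFinset v).card - 1 ≤ ((G.neighborFinset v).erase u).card :=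
              Finset.pred_card_le_card_erase
            have e2 : ((G.neighborFinset v).erase u).card - 1
                ≤ (((G.neighborFinset v).erase u).erase w).card :=
              Finset.pred_card_le_card_erase
            have := e0 v
            omega
          · have hdegeq : G.degree v = n - 2 := by omega
            by_cases hwN : w ∈ G.neighborFinset v
            · -- need exit edge
              have hNvcard : (insert v (G.neighborFinset v)).card ≤ n - 1 := by
                have h4 := Finset.card_insert_le v (G.neighborFinset v)
                have := e0 v
                omega
              have hNvsub : ∀ x ∈ insert v (G.neighborFinset v), x ∈ Sc c := by
                intro x hx
                rcases Finset.mem_insert.1 hx with rfl | hxN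
                · exact hv
                · exact Finset.mem_of_mem_erase (hsub c v hv hxN)
              have hx : ∃ x ∈ Sc c, x ∉ insert v (G.neighborFinset v) := by
                by_contra hcon
                push_neg at hcon
                have := Finset.card_le_card (fun x hx => hcon x hx)
                omega
              obtain ⟨x, hxS, hxN⟩ := hx
              have hreach : G.Reachable v x :=
                ConnectedComponent.exact (((hmem c v).1 hv).trans ((hmem c x).1 hxS).symm)
              obtain ⟨wk⟩ := hreach
              obtain ⟨a, b, haS, hbS, hab⟩ :=
                exists_exit G (↑(insert v (G.neighborFinset v)) : Set (Fin p)) wk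
                  (by simp) (by simpa using hxN)
              simp only [Finset.coe_insert, Set.mem_insert_iff, Finset.mem_coe] at haS hbS
              push_neg at hbS
              rcases haS with rfl | haN
              · exact absurd (Or.inr ((G.mem_neighborFinset _ _).2 hab)) (by tauto)
              · refine containsCopy_of n (by omega) G v a b
                  ((G.mem_neighborFinset _ _).1 haN) hab hbS.1 ?_
                have hbNv : b ∉ (G.neighborFinset v).erase a :=
                  fun h => hbS.2 (Finset.mem_of_mem_erase h)
                rw [Finset.erase_eq_of_notMem hbNv,
                  Finset.card_erase_of_mem haN, e0 v]
                omega
            · refine containsCopy_of n (by omega) G v u w hu hw hwv ?_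
              have hwNe : w ∉ (G.neighborFinset v).erase u :=
                fun h => hwN (Finset.mem_of_mem_erase h)
              rw [Finset.erase_eq_of_notMem hwNe,
                Finset.card_erase_of_mem ((G.mem_neighborFinset _ _).2 hu), e0 v]
              omega
        -- Sc c is the star N[v]
        have hNv : Sc c = insert v (G.neighborFinset v) := by
          apply Finset.Subset.antisymm
          · intro x hx
            by_contra hxN
            have hreach : G.Reachable v x :=
              ConnectedComponent.exact (((hmem c v).1 hv).trans ((hmem c x).1 hx).symm)
            obtain ⟨wk⟩ := hreach
            obtain ⟨a, b, haS, hbS, hab⟩ :=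
              exists_exit G (↑(insert v (G.neighborFinset v)) : Set (Fin p)) wk
                (by simp) (by simpa using hxN)
            simp only [Finset.coe_insert, Set.mem_insert_iff, Finset.mem_coe] at haS hbS
            push_neg at hbS
            rcases haS with rfl | haN
            · exact hbS.2 ((G.mem_neighborFinset _ _).2 hab)
            · have := hA a ((G.mem_neighborFinset _ _).1 haN) b hab
              exact hbS.1 this
          · intro x hx
            rcases Finset.mem_insert.1 hx with rfl | hxN
            · exact hv
            · exact Finset.mem_of_mem_erase (hsub c v hv hxN)
        have hdeg1 : ∀ u ∈ G.neighborFinset v, G.degree u ≤ 1 := by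
          intro u huN
          have hss : G.neighborFinset u ⊆ {v} := by
            intro b hb
            rw [Finset.mem_singleton]
            exact hA u ((G.mem_neighborFinset _ _).1 huN) b ((G.mem_neighborFinset _ _).1 hb)
          have := Finset.card_le_card hss
          rw [e0 u, Finset.card_singleton] at this
          exact this
        have hsum2 : ∑ x ∈ Sc c, G.degree x
            = G.degree v + ∑ u ∈ G.neighborFinset v, G.degree u := by
          rw [hNv, Finset.sum_insert (G.notMem_neighborFinset_self v)]
        have h2 : ∑ u ∈ G.neighborFinset v, G.degree u ≤ (G.neighborFinset v).card * 1 :=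
          Finset.sum_le_card_nsmul _ _ _ hdeg1
        have hcard : (Sc c).card = G.degree v + 1 := by
          rw [hNv, Finset.card_insert_of_notMem (G.notMem_neighborFinset_self v), e0 v]
        have h3 : 3 * (Sc c).card ≤ (n - 2) * (Sc c).card :=
          Nat.mul_le_mul_right _ (by omega)
        have := e0 v
        omega
  -- global assembly
  have hsum1 : ∑ v : Fin p, G.degree v = 2 * G.edgeFinset.card :=
    G.sum_degrees_eq_twice_card_edges
  have hfib : ∑ c : G.ConnectedComponent, ∑ v ∈ Sc c, G.degree v = ∑ v : Fin p, G.degree v := by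
    simp only [Sc]
    convert Finset.sum_fiberwise (univ : Finset (Fin p)) mk (fun v => G.degree v) using 2 with c
  have hfibcard : ∑ c : G.ConnectedComponent, (Sc c).card = p := by
    have h := Finset.sum_fiberwise (univ : Finset (Fin p)) mk (fun _ => (1 : ℕ))
    simp only [Finset.sum_const, smul_eq_mul, mul_one] at h
    simpa using h
  have hpart : Dval n r ≤ ∑ c : G.ConnectedComponent, dfun n (Sc c).card := by
    apply partition_lemma hn hr
    · intro c _
      obtain ⟨v, hv⟩ := c.exists_rep
      have : v ∈ Sc c := (hmem c v).2 hv
      exact Finset.card_pos.2 ⟨v, this⟩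
    · rw [hfibcard, hmod]
  have hmain := Finset.sum_le_sum (fun c (_ : c ∈ (univ : Finset G.ConnectedComponent)) =>
    comp_bound c)
  rw [Finset.sum_add_distrib, hfib, hsum1, ← Finset.mul_sum, hfibcard] at hmain
  omega

lemma card_filter_val (p : ℕ) (P : ℕ → Prop) [DecidablePred P] :
    ((univ : Finset (Fin p)).filter (fun x => P x.val)).card
      = ((Finset.range p).filter P).card := by
  apply Finset.card_bij (fun a _ => a.val)
  · intro a ha
    simp only [Finset.mem_filter, Finset.mem_univ, true_and] at ha
    simp [Finset.mem_filter, Finset.mem_range, a.isLt, ha]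
  · intro a _ b _ h; exact Fin.ext h
  · intro t ht
    simp only [Finset.mem_filter, Finset.mem_range] at ht
    exact ⟨⟨t, ht.1⟩, by simp [Finset.mem_filter, ht.2], rfl⟩

lemma range_filter_div (p q d : ℕ) (hd : 0 < d) :
    (Finset.range p).filter (fun t => t / d = q) = Finset.Ico (q*d) (min ((q+1)*d) p) := by
  ext t
  simp only [Finset.mem_filter, Finset.mem_range, Finset.mem_Ico, lt_min_iff]
  constructor
  · rintro ⟨h1, h2⟩
    subst h2
    have h4 : t < (t / d + 1) * d := (Nat.div_lt_iff_lt_mul hd).1 (Nat.lt_succ_self _)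
    exact ⟨Nat.div_mul_le_self t d, h4, h1⟩
  · rintro ⟨h1, h2, h3⟩
    exact ⟨h3, Nat.div_eq_of_lt_le h1 h2⟩

lemma fiber_card (p q d : ℕ) (hd : 0 < d) :
    ((univ : Finset (Fin p)).filter (fun x => x.val / d = q)).card
      = min ((q+1)*d) p - q*d := by
  rw [card_filter_val p (fun t => t / d = q), range_filter_div p q d hd, Nat.card_Ico]

def cliqueG (n p : ℕ) : SimpleGraph (Fin p) where
  Adj a b := a ≠ b ∧ a.val / (n-1) = b.val / (n-1)
  symm := ⟨by rintro a b ⟨h1, h2⟩; exact ⟨h1.symm, h2.symm⟩⟩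
  loopless := ⟨by rintro a ⟨h, _⟩; exact h rfl⟩

instance (n p : ℕ) : DecidableRel (cliqueG n p).Adj := fun _ _ => instDecidableAnd

lemma cliqueG_nbr (n p : ℕ) (x : Fin p) :
    (cliqueG n p).neighborFinset x
      = ((univ : Finset (Fin p)).filter
          (fun b => b.val / (n-1) = x.val / (n-1))).erase x := by
  ext b
  simp only [SimpleGraph.mem_neighborFinset, Finset.mem_erase, Finset.mem_filter,
    Finset.mem_univ, true_and]
  constructor
  · rintro ⟨h1, h2⟩; exact ⟨Ne.symm h1, h2.symm⟩
  · rintro ⟨h1, h2⟩; exact ⟨Ne.symm h1, h2.symm⟩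

lemma cliqueG_deg (n p k r : ℕ) (hn : 5 ≤ n) (hkr : p = k*(n-1) + r) (hrn : r < n-1)
    (x : Fin p) :
    (cliqueG n p).degree x = if x.val < k*(n-1) then n-2 else r-1 := by
  have e0 : (cliqueG n p).degree x = ((cliqueG n p).neighborFinset x).card := rfl
  rw [e0, cliqueG_nbr,
    Finset.card_erase_of_mem (by simp), fiber_card p _ (n-1) (by omega)]
  set q := x.val / (n-1) with hq
  split
  · rename_i hx
    have hqk : q < k := by
      rw [hq]
      exact (Nat.div_lt_iff_lt_mul (by omega)).2 hx
    have h1 : (q+1)*(n-1) ≤ p := by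
      calc (q+1)*(n-1) ≤ k*(n-1) := Nat.mul_le_mul_right _ (by omega)
      _ ≤ p := by omega
    rw [min_eq_left h1]
    have h2 : (q+1)*(n-1) = q*(n-1) + (n-1) := Nat.succ_mul q (n-1)
    omega
  · rename_i hx
    push_neg at hx
    have hqk : q = k := by
      rw [hq]
      apply Nat.div_eq_of_lt_le hx
      have h2 : (k+1)*(n-1) = k*(n-1) + (n-1) := Nat.succ_mul k (n-1)
      have := x.isLt
      omega
    rw [hqk]
    have h2 : (k+1)*(n-1) = k*(n-1) + (n-1) := Nat.succ_mul k (n-1)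
    rw [min_eq_right (by omega)]
    omega

lemma cliqueG_sum (n p k r : ℕ) (hn : 5 ≤ n) (hkr : p = k*(n-1) + r) (hrn : r < n-1) :
    ∑ x : Fin p, (cliqueG n p).degree x = (n-2)*(k*(n-1)) + (r-1)*r := by
  rw [Finset.sum_congr rfl (fun x _ => cliqueG_deg n p k r hn hkr hrn x)]
  rw [Finset.sum_ite, Finset.sum_const, Finset.sum_const, smul_eq_mul, smul_eq_mul]
  have h1 : ((univ : Finset (Fin p)).filter (fun x => x.val < k*(n-1))).card = k*(n-1) := by
    rw [card_filter_val p (fun t => t < k*(n-1))]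
    have : (Finset.range p).filter (fun t => t < k*(n-1)) = Finset.range (k*(n-1)) := by
      ext t
      simp only [Finset.mem_filter, Finset.mem_range]
      omega
    rw [this, Finset.card_range]
  have h2 : ((univ : Finset (Fin p)).filter (fun x => ¬ x.val < k*(n-1))).card = r := by
    have h3 := Finset.card_filter_add_card_filter_not
      (s := (univ : Finset (Fin p))) (p := fun x => x.val < k*(n-1))
    rw [Finset.card_univ, Fintype.card_fin] at h3
    omega
  rw [h1, h2]
  ring

lemma cliqueG_free (n p : ℕ) (hn : 5 ≤ n) : ¬ ContainsCopy (cliqueG n p) (Tn n) := by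
  rintro ⟨f, hf⟩
  set z : Fin n := ⟨0, by omega⟩ with hz
  set q := (f z).val / (n-1) with hqdef
  have hedge : ∀ i : Fin n, 1 ≤ i.val → i.val ≤ n-2 → (f i).val / (n-1) = q := by
    intro i h1 h2
    have hadj : (Tn n).Adj z i := by
      rw [Tn, SimpleGraph.fromRel_adj]
      refine ⟨?_, Or.inl (Or.inl ⟨rfl, h1, h2⟩)⟩
      intro h
      have := congrArg Fin.val h
      simp only [hz] at this
      omega
    exact ((hf z i hadj).2).symm
  have hq : ∀ i : Fin n, (f i).val / (n-1) = q := by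
    intro i
    rcases Nat.lt_or_ge i.val 1 with h0 | h1
    · have : i = z := Fin.ext (by simp [hz]; omega)
      rw [this]
    · rcases le_or_gt i.val (n-2) with h2 | h3
      · exact hedge i h1 h2
      · have hival : i.val = n - 1 := by have := i.isLt; omega
        set y : Fin n := ⟨n-2, by omega⟩ with hy
        have hyq : (f y).val / (n-1) = q := hedge y (by simp [hy]; omega) (by simp [hy])
        have hadj : (Tn n).Adj y i := by
          rw [Tn, SimpleGraph.fromRel_adj]
          refine ⟨?_, Or.inl (Or.inr ⟨by simp [hy], hival⟩)⟩
          intro h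
          have := congrArg Fin.val h
          simp only [hy, hival] at this
          omega
        have := (hf y i hadj).2
        rw [← this, hyq]
  have hle : (univ : Finset (Fin n)).card
      ≤ ((univ : Finset (Fin p)).filter (fun b => b.val/(n-1) = q)).card := by
    apply Finset.card_le_card_of_injOn (fun i => f i)
    · intro i _; simp [hq i]
    · intro a _ b _ h; exact f.injective h
  rw [Finset.card_univ, Fintype.card_fin] at hle
  have hfc : ((univ : Finset (Fin p)).filter (fun b => b.val/(n-1) = q)).card ≤ n - 1 := by
    rw [fiber_card p q (n-1) (by omega)]
    have h1 : min ((q+1)*(n-1)) p ≤ (q+1)*(n-1) := min_le_left _ _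
    have h2 : (q+1)*(n-1) = q*(n-1) + (n-1) := Nat.succ_mul q (n-1)
    omega
  omega


def Jset (m t : ℕ) : Finset (ZMod m) :=
  ((Finset.Icc 1 t) ∪ (Finset.Icc (m-t) (m-1))).image (Nat.cast)

def blockG (m d : ℕ) : SimpleGraph (ZMod m) where
  Adj a b := a ≠ b ∧ (a - b ∈ Jset m (d/2) ∨ b - a ∈ Jset m (d/2) ∨
    (Odd d ∧ ((b - a = ((m/2 : ℕ) : ZMod m) ∧ a.val < m/2)
      ∨ (a - b = ((m/2 : ℕ) : ZMod m) ∧ b.val < m/2))))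
  symm := ⟨by
    rintro a b ⟨h0, h⟩
    refine ⟨h0.symm, ?_⟩
    rcases h with h | h | ⟨hodd, h | h⟩
    · exact Or.inr (Or.inl h)
    · exact Or.inl h
    · exact Or.inr (Or.inr ⟨hodd, Or.inr h⟩)
    · exact Or.inr (Or.inr ⟨hodd, Or.inl h⟩)⟩
  loopless := ⟨by rintro a ⟨h, _⟩; exact h rfl⟩

instance (m d : ℕ) : DecidableRel (blockG m d).Adj := fun a b => by
  unfold blockG; infer_instance

section Block
variable {m d : ℕ} [NeZero m]

lemma cast_m_sub (δ : ℕ) (hδ : δ ≤ m) : ((m - δ : ℕ) : ZMod m) = -(δ : ZMod m) := by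
  have h : ((m - δ : ℕ) : ZMod m) + (δ : ZMod m) = 0 := by
    rw [← Nat.cast_add, Nat.sub_add_cancel hδ, ZMod.natCast_self]
  linear_combination h

lemma Jset_val (hd : 2 ≤ d) (hdm : d + 2 ≤ m) {x : ZMod m} :
    x ∈ Jset m (d/2) ↔ (1 ≤ x.val ∧ x.val ≤ d/2) ∨ (m - d/2 ≤ x.val ∧ x.val ≤ m-1) := by
  unfold Jset
  simp only [Finset.mem_image, Finset.mem_union, Finset.mem_Icc]
  constructor
  · rintro ⟨δ, hδ, rfl⟩
    rw [ZMod.val_cast_of_lt (by omega)]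
    exact hδ
  · intro h
    refine ⟨x.val, h, ZMod.natCast_rightInverse x⟩

lemma Jset_zero_not (hd : 2 ≤ d) (hdm : d + 2 ≤ m) : (0 : ZMod m) ∉ Jset m (d/2) := by
  rw [Jset_val hd hdm, ZMod.val_zero]
  omega

lemma Jset_neg (hd : 2 ≤ d) (hdm : d + 2 ≤ m) {x : ZMod m} (hx : x ∈ Jset m (d/2)) :
    -x ∈ Jset m (d/2) := by
  rw [Jset_val hd hdm] at hx
  rw [Jset_val hd hdm]
  have hneg : -x = ((m - x.val : ℕ) : ZMod m) := by
    rw [cast_m_sub x.val (le_of_lt (ZMod.val_lt x)), ZMod.natCast_rightInverse x]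
  rw [hneg, ZMod.val_cast_of_lt (by omega)]
  omega

lemma Jset_card (hd : 2 ≤ d) (hdm : d + 2 ≤ m) : (Jset m (d/2)).card = 2*(d/2) := by
  unfold Jset
  rw [Finset.card_image_of_injOn, Finset.card_union_of_disjoint, Nat.card_Icc, Nat.card_Icc]
  · omega
  · simp only [Finset.disjoint_left, Finset.mem_Icc]
    intro a ha hb
    omega
  · intro x hx y hy hxy
    simp only [Finset.coe_union, Set.mem_union, Finset.coe_Icc, Set.mem_Icc] at hx hy
    have hx' : x < m := by omega
    have hy' : y < m := by omega
    have := congrArg ZMod.val hxy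
    rwa [ZMod.val_cast_of_lt hx', ZMod.val_cast_of_lt hy'] at this

lemma val_add_nat (v : ZMod m) (c : ℕ) (hc : c < m) :
    (v + (c : ZMod m)).val = (v.val + c) % m := by
  rw [ZMod.val_add, ZMod.val_cast_of_lt hc]

/-- the matching partner -/
def pnr (m : ℕ) (v : ZMod m) : ZMod m :=
  if v.val < m/2 then v + ((m/2 : ℕ) : ZMod m) else v - ((m/2 : ℕ) : ZMod m)

lemma zsub_half (hm : 4 ≤ m) (v : ZMod m) :
    (v - ((m/2 : ℕ) : ZMod m)).val
      = if v.val < m/2 then v.val + (m - m/2) else v.val - m/2 := by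
  have h1 : v - ((m/2 : ℕ) : ZMod m) = v + ((m - m/2 : ℕ) : ZMod m) := by
    rw [cast_m_sub (m/2) (by omega), sub_eq_add_neg]
  rw [h1, val_add_nat v _ (by omega)]
  have hv := ZMod.val_lt v
  split
  · rename_i h; rw [Nat.mod_eq_of_lt (by omega)]
  · rename_i h
    push_neg at h
    have h2 : v.val + (m - m/2) = (v.val - m/2) + m := by omega
    rw [h2, Nat.add_mod_right, Nat.mod_eq_of_lt (by omega)]

lemma add_half (hm : 4 ≤ m) (v : ZMod m) (hv : v.val < m/2) :
    (v + ((m/2 : ℕ) : ZMod m)).val = v.val + m/2 := by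
  rw [val_add_nat v _ (by omega), Nat.mod_eq_of_lt (by omega)]

lemma pnr_val (hm : 4 ≤ m) (v : ZMod m) :
    (pnr m v).val = if v.val < m/2 then v.val + m/2 else v.val - m/2 := by
  unfold pnr
  split
  · rename_i h; rw [add_half hm v h]
  · rename_i h; rw [zsub_half hm v, if_neg h]

lemma blockG_nbr (hd : 2 ≤ d) (hdm : d + 2 ≤ m) (v : ZMod m) :
    (blockG m d).neighborFinset v
      = (Jset m (d/2)).image (fun j => v + j) ∪
        (if Odd d ∧ v.val < 2*(m/2) then {pnr m v} else ∅) := by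
  have hm : 4 ≤ m := by omega
  have hvlt := ZMod.val_lt v
  have hhval : (((m/2 : ℕ) : ZMod m)).val = m/2 := ZMod.val_cast_of_lt (by omega)
  have hhne : (((m/2 : ℕ) : ZMod m)) ≠ 0 := by
    intro h
    rw [h, ZMod.val_zero] at hhval
    omega
  ext b
  simp only [SimpleGraph.mem_neighborFinset, Finset.mem_union, Finset.mem_image]
  constructor
  · rintro ⟨hne, hcase⟩
    rcases hcase with h | h | ⟨hodd, h | h⟩
    · refine Or.inl ⟨b - v, ?_, by ring⟩
      have h2 := Jset_neg hd hdm h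
      rwa [neg_sub] at h2
    · exact Or.inl ⟨b - v, h, by ring⟩
    · -- b - v = h, v.val < m/2
      obtain ⟨hbv, hvval⟩ := h
      refine Or.inr ?_
      rw [if_pos ⟨hodd, by omega⟩, Finset.mem_singleton]
      have hb : b = v + ((m/2 : ℕ) : ZMod m) := by linear_combination hbv
      rw [hb]
      unfold pnr
      rw [if_pos hvval]
    · -- v - b = h, b.val < m/2
      obtain ⟨hvb, hbval⟩ := h
      have hb : b = v - ((m/2 : ℕ) : ZMod m) := by linear_combination (-1 : ZMod m) * hvb
      have hveq : v = b + ((m/2 : ℕ) : ZMod m) := by rw [hb]; ring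
      have hvv : v.val = b.val + m/2 := by
        rw [hveq, add_half hm b hbval]
      refine Or.inr ?_
      rw [if_pos ⟨hodd, by omega⟩, Finset.mem_singleton]
      rw [hb]
      unfold pnr
      rw [if_neg (by omega)]
  · intro hcase
    rcases hcase with ⟨j, hj, rfl⟩ | h
    · have hjne : j ≠ 0 := fun h => Jset_zero_not hd hdm (h ▸ hj)
      refine ⟨by simpa using hjne, Or.inr (Or.inl ?_)⟩
      simpa using hj
    · split at h
      · rename_i hcond
        rw [Finset.mem_singleton] at h
        subst h
        obtain ⟨hodd, hv2⟩ := hcond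
        unfold pnr
        split
        · rename_i hvh
          refine ⟨?_, Or.inr (Or.inr ⟨hodd, Or.inl ⟨by ring, hvh⟩⟩)⟩
          intro hcon
          exact hhne (by linear_combination - hcon)
        · rename_i hvh
          push_neg at hvh
          refine ⟨?_, Or.inr (Or.inr ⟨hodd, Or.inr ⟨by ring, ?_⟩⟩)⟩
          · intro hcon
            exact hhne (by linear_combination hcon)
          · rw [zsub_half hm v, if_neg (by omega)]
            omega
      · simp at h

lemma blockG_deg (hd : 2 ≤ d) (hdm : d + 2 ≤ m) (v : ZMod m) :
    (blockG m d).degree v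
      = 2*(d/2) + (if Odd d ∧ v.val < 2*(m/2) then 1 else 0) := by
  have hm : 4 ≤ m := by omega
  have e0 : (blockG m d).degree v = ((blockG m d).neighborFinset v).card := rfl
  rw [e0, blockG_nbr hd hdm v]
  have himg : ((Jset m (d/2)).image (fun j => v + j)).card = 2*(d/2) := by
    rw [Finset.card_image_of_injective _ (add_right_injective v), Jset_card hd hdm]
  have hpnr : pnr m v ∉ (Jset m (d/2)).image (fun j => v + j) := by
    rw [Finset.mem_image]
    rintro ⟨j, hj, hjeq⟩
    rw [Jset_val hd hdm] at hj
    have hjval : j = pnr m v - v := by linear_combination hjeq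
    unfold pnr at hjval
    split at hjval
    · have : j = ((m/2 : ℕ) : ZMod m) := by rw [hjval]; ring
      rw [this, ZMod.val_cast_of_lt (by omega)] at hj
      omega
    · have : j = -((m/2 : ℕ) : ZMod m) := by rw [hjval]; ring
      rw [← cast_m_sub (m/2) (by omega)] at this
      rw [this, ZMod.val_cast_of_lt (by omega)] at hj
      omega
  split
  · rw [Finset.card_union_of_disjoint (Finset.disjoint_singleton_right.2 hpnr), himg,
      Finset.card_singleton]
  · rw [Finset.union_empty, himg]; omega

lemma blockG_deg_le (hd : 2 ≤ d) (hdm : d + 2 ≤ m) (v : ZMod m) :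
    (blockG m d).degree v ≤ d := by
  rw [blockG_deg hd hdm v]
  by_cases hodd : Odd d
  · rw [Nat.odd_iff] at hodd
    split <;> omega
  · rw [if_neg (by tauto)]
    rw [Nat.odd_iff] at hodd
    omega

lemma card_filter_val_zmod (P : ℕ → Prop) [DecidablePred P] :
    ((univ : Finset (ZMod m)).filter (fun x => P x.val)).card
      = ((Finset.range m).filter P).card := by
  apply Finset.card_bij (fun a _ => a.val)
  · intro a ha
    simp only [Finset.mem_filter, Finset.mem_univ, true_and] at ha
    simp [Finset.mem_filter, Finset.mem_range, ZMod.val_lt a, ha]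
  · intro a _ b _ h; exact ZMod.val_injective m h
  · intro t ht
    simp only [Finset.mem_filter, Finset.mem_range] at ht
    refine ⟨(t : ZMod m), ?_, ZMod.val_cast_of_lt ht.1⟩
    simp [Finset.mem_filter, ZMod.val_cast_of_lt ht.1, ht.2]

lemma blockG_sum (hd : 2 ≤ d) (hdm : d + 2 ≤ m) :
    ∑ v : ZMod m, (blockG m d).degree v
      = 2*(d/2)*m + (if Odd d then 2*(m/2) else 0) := by
  rw [Finset.sum_congr rfl (fun v _ => blockG_deg hd hdm v), Finset.sum_add_distrib,
    Finset.sum_const, Finset.card_univ, ZMod.card, smul_eq_mul,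
    Nat.mul_comm m (2*(d/2))]
  congr 1
  by_cases hodd : Odd d
  · rw [if_pos hodd]
    simp only [hodd, true_and]
    rw [Finset.sum_ite, Finset.sum_const, Finset.sum_const, smul_eq_mul, smul_eq_mul,
      Nat.mul_zero, Nat.add_zero, Nat.mul_one]
    rw [card_filter_val_zmod (fun t => t < 2*(m/2))]
    have : (Finset.range m).filter (fun t => t < 2*(m/2)) = Finset.range (2*(m/2)) := by
      ext t
      simp only [Finset.mem_filter, Finset.mem_range]
      omega
    rw [this, Finset.card_range]
  · rw [if_neg hodd]
    simp [hodd]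

end Block

section GBsec

def GB (n p k : ℕ) : SimpleGraph (Fin p) where
  Adj a b :=
    (a.val < (k-1)*(n-1) ∧ b.val < (k-1)*(n-1) ∧ a ≠ b ∧ a.val/(n-1) = b.val/(n-1)) ∨
    ((k-1)*(n-1) ≤ a.val ∧ (k-1)*(n-1) ≤ b.val ∧
      (blockG (p - (k-1)*(n-1)) (n-3)).Adj
        (((a.val - (k-1)*(n-1) : ℕ)) : ZMod (p - (k-1)*(n-1)))
        (((b.val - (k-1)*(n-1) : ℕ)) : ZMod (p - (k-1)*(n-1))))
  symm := ⟨by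
    rintro a b (⟨h1, h2, h3, h4⟩ | ⟨h1, h2, h3⟩)
    · exact Or.inl ⟨h2, h1, h3.symm, h4.symm⟩
    · exact Or.inr ⟨h2, h1, h3.symm⟩⟩
  loopless := ⟨by
    rintro a (⟨_, _, h, _⟩ | ⟨_, _, h⟩)
    · exact h rfl
    · exact (blockG _ _).loopless.irrefl _ h⟩

instance (n p k : ℕ) : DecidableRel (GB n p k).Adj := fun a b => by
  unfold GB; infer_instance

variable {n p k r : ℕ}

lemma GB_mul_helper (hk : 1 ≤ k) : k*(n-1) = (k-1)*(n-1) + (n-1) := by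
  have e1 : ((k-1)+1)*(n-1) = (k-1)*(n-1) + (n-1) := Nat.succ_mul _ _
  have e2 : (k-1)+1 = k := by omega
  rw [e2] at e1
  exact e1

lemma GB_m_eq (hk : 1 ≤ k) (hkr : p = k*(n-1) + r) : p - (k-1)*(n-1) = (n-1) + r := by
  have := GB_mul_helper (n := n) hk
  omega

lemma GB_deg_clique (hn : 7 ≤ n) (hk : 1 ≤ k) (hkr : p = k*(n-1) + r) (hrn : r < n - 1)
    (x : Fin p) (hx : x.val < (k-1)*(n-1)) :
    (GB n p k).degree x = n - 2 := by
  have hmul := GB_mul_helper (n := n) hk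
  have hq1 : x.val / (n-1) < k - 1 := (Nat.div_lt_iff_lt_mul (by omega)).2 hx
  have hfib : ∀ b : Fin p, b.val/(n-1) = x.val/(n-1) → b.val < (k-1)*(n-1) := by
    intro b hb
    have h1 : b.val / (n-1) < x.val/(n-1) + 1 := by omega
    have h2 : b.val < (x.val/(n-1) + 1) * (n-1) := (Nat.div_lt_iff_lt_mul (by omega)).1 h1
    calc b.val < (x.val/(n-1) + 1) * (n-1) := h2
    _ ≤ (k-1) * (n-1) := Nat.mul_le_mul_right _ (by omega)
  have hnbr : (GB n p k).neighborFinset x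
      = ((univ : Finset (Fin p)).filter
          (fun b => b.val / (n-1) = x.val / (n-1))).erase x := by
    ext b
    simp only [SimpleGraph.mem_neighborFinset, Finset.mem_erase, Finset.mem_filter,
      Finset.mem_univ, true_and]
    constructor
    · rintro (⟨h1, h2, h3, h4⟩ | ⟨h1, _, _⟩)
      · exact ⟨fun h => h3 h.symm, h4.symm⟩
      · omega
    · rintro ⟨h1, h2⟩
      exact Or.inl ⟨hx, hfib b h2, fun h => h1 h.symm, h2.symm⟩
  have e0 : (GB n p k).degree x = ((GB n p k).neighborFinset x).card := rfl
  rw [e0, hnbr, Finset.card_erase_of_mem (by simp), fiber_card p _ (n-1) (by omega)]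
  have h1 : (x.val/(n-1) + 1)*(n-1) ≤ p := by
    calc (x.val/(n-1) + 1)*(n-1) ≤ (k-1)*(n-1) := Nat.mul_le_mul_right _ (by omega)
    _ ≤ p := by omega
  rw [min_eq_left h1]
  have h2 : (x.val/(n-1) + 1)*(n-1) = (x.val/(n-1))*(n-1) + (n-1) := Nat.succ_mul _ _
  omega

lemma GB_deg_block [NeZero (p - (k-1)*(n-1))] (hn : 7 ≤ n) (hk : 1 ≤ k)
    (hkr : p = k*(n-1) + r) (hr2 : 2 ≤ r)
    (hrn : r < n - 1) (x : Fin p) (hx : (k-1)*(n-1) ≤ x.val) :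
    (GB n p k).degree x
      = (blockG (p - (k-1)*(n-1)) (n-3)).degree
          (((x.val - (k-1)*(n-1) : ℕ)) : ZMod (p - (k-1)*(n-1))) := by
  set K₀ := (k-1)*(n-1) with hK
  set m := p - K₀ with hm
  have hmval : m = (n-1) + r := GB_m_eq hk hkr
  rw [show (GB n p k).degree x = ((GB n p k).neighborFinset x).card from rfl,
    show (blockG m (n-3)).degree (((x.val - K₀ : ℕ)) : ZMod m)
      = ((blockG m (n-3)).neighborFinset (((x.val - K₀ : ℕ)) : ZMod m)).card from rfl]
  apply Finset.card_bij (fun b _ => (((b.val - K₀ : ℕ)) : ZMod m))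
  · intro b hb
    rw [SimpleGraph.mem_neighborFinset] at hb ⊢
    rcases hb with ⟨h1, _, _, _⟩ | ⟨h1, h2, h3⟩
    · omega
    · exact h3
  · intro b hb c hc hbc
    rw [SimpleGraph.mem_neighborFinset] at hb hc
    have hbK : K₀ ≤ b.val := by
      rcases hb with ⟨h1, _⟩ | ⟨_, h2, _⟩
      · omega
      · exact h2
    have hcK : K₀ ≤ c.val := by
      rcases hc with ⟨h1, _⟩ | ⟨_, h2, _⟩
      · omega
      · exact h2
    have h1 := congrArg ZMod.val hbc
    rw [ZMod.val_cast_of_lt (by omega), ZMod.val_cast_of_lt (by omega)] at h1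
    exact Fin.ext (by omega)
  · intro w hw
    rw [SimpleGraph.mem_neighborFinset] at hw
    have hwlt : w.val < m := ZMod.val_lt w
    refine ⟨⟨K₀ + w.val, by omega⟩, ?_, ?_⟩
    · rw [SimpleGraph.mem_neighborFinset]
      refine Or.inr ⟨hx, by exact Nat.le_add_right _ _, ?_⟩
      have : ((K₀ + w.val - K₀ : ℕ) : ZMod m) = w := by
        rw [Nat.add_sub_cancel_left]
        exact ZMod.natCast_rightInverse w
      rw [this]
      exact hw
    · show (((K₀ + w.val - K₀ : ℕ)) : ZMod m) = w
      rw [Nat.add_sub_cancel_left]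
      exact ZMod.natCast_rightInverse w

lemma GB_sum (hn : 7 ≤ n) (hk : 1 ≤ k) (hkr : p = k*(n-1) + r) (hr2 : 2 ≤ r)
    (hrn : r < n - 1) :
    ∑ x : Fin p, (GB n p k).degree x
      = (n-2) * ((k-1)*(n-1))
        + (2*((n-3)/2)*(p - (k-1)*(n-1))
            + (if Odd (n-3) then 2*((p - (k-1)*(n-1))/2) else 0)) := by
  set K₀ := (k-1)*(n-1) with hK
  set m := p - K₀ with hm
  have hmval : m = (n-1) + r := GB_m_eq hk hkr
  haveI : NeZero m := ⟨by omega⟩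
  rw [← Finset.sum_filter_add_sum_filter_not univ (fun x : Fin p => x.val < K₀)]
  congr 1
  · rw [Finset.sum_congr rfl (fun x hx => GB_deg_clique hn hk hkr hrn x
      (by simpa using (Finset.mem_filter.1 hx).2)), Finset.sum_const, smul_eq_mul]
    rw [card_filter_val p (fun t => t < K₀)]
    have : (Finset.range p).filter (fun t => t < K₀) = Finset.range K₀ := by
      ext t
      simp only [Finset.mem_filter, Finset.mem_range]
      omega
    rw [this, Finset.card_range, Nat.mul_comm]
  · rw [Finset.sum_congr rfl (fun x hx => GB_deg_block hn hk hkr hr2 hrn x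
      (by simpa using (Finset.mem_filter.1 hx).2))]
    rw [← blockG_sum (d := n-3) (by omega) (by omega)]
    apply Finset.sum_bij (fun (b : Fin p) _ => (((b.val - K₀ : ℕ)) : ZMod m))
    · intro b _; exact Finset.mem_univ _
    · intro b hb c hc hbc
      simp only [Finset.mem_filter, Finset.mem_univ, true_and, not_lt] at hb hc
      have h1 := congrArg ZMod.val hbc
      rw [ZMod.val_cast_of_lt (by omega), ZMod.val_cast_of_lt (by omega)] at h1
      exact Fin.ext (by omega)
    · intro w _
      have hwlt : w.val < m := ZMod.val_lt w
      refine ⟨⟨K₀ + w.val, by omega⟩, ?_, ?_⟩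
      · simp only [Finset.mem_filter, Finset.mem_univ, true_and, not_lt]
        simp
      · show (((K₀ + w.val - K₀ : ℕ)) : ZMod m) = w
        rw [Nat.add_sub_cancel_left]
        exact ZMod.natCast_rightInverse w
    · intro b _; rfl

lemma GB_free (hn : 7 ≤ n) (hk : 1 ≤ k) (hkr : p = k*(n-1) + r) (hr2 : 2 ≤ r)
    (hrn : r < n - 1) : ¬ ContainsCopy (GB n p k) (Tn n) := by
  rintro ⟨f, hf⟩
  set K₀ := (k-1)*(n-1) with hK
  set m := p - K₀ with hm
  have hmval : m = (n-1) + r := GB_m_eq hk hkr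
  haveI : NeZero m := ⟨by omega⟩
  set z : Fin n := ⟨0, by omega⟩ with hz
  -- f z has at least n-2 neighbors
  have hdeg0 : n - 2 ≤ (GB n p k).degree (f z) := by
    have hsub : ((univ : Finset (Fin n)).filter
        (fun i => 1 ≤ i.val ∧ i.val ≤ n-2)).image (fun i => f i)
        ⊆ (GB n p k).neighborFinset (f z) := by
      intro b hb
      rw [Finset.mem_image] at hb
      obtain ⟨i, hi, rfl⟩ := hb
      rw [Finset.mem_filter] at hi
      rw [SimpleGraph.mem_neighborFinset]
      apply hf
      rw [Tn, SimpleGraph.fromRel_adj]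
      refine ⟨?_, Or.inl (Or.inl ⟨rfl, hi.2⟩)⟩
      intro hzi
      have := congrArg Fin.val hzi
      simp only [hz] at this
      omega
    have hcard : (((univ : Finset (Fin n)).filter
        (fun i => 1 ≤ i.val ∧ i.val ≤ n-2)).image (fun i => f i)).card = n - 2 := by
      rw [Finset.card_image_of_injOn (fun a _ b _ h => f.injective h)]
      rw [card_filter_val n (fun t => 1 ≤ t ∧ t ≤ n-2)]
      have : (Finset.range n).filter (fun t => 1 ≤ t ∧ t ≤ n-2) = Finset.Ico 1 (n-1) := by
        ext t
        simp only [Finset.mem_filter, Finset.mem_range, Finset.mem_Ico]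
        omega
      rw [this, Nat.card_Ico]
      omega
    calc n - 2 = (((univ : Finset (Fin n)).filter
        (fun i => 1 ≤ i.val ∧ i.val ≤ n-2)).image (fun i => f i)).card := hcard.symm
    _ ≤ ((GB n p k).neighborFinset (f z)).card := Finset.card_le_card hsub
    _ = (GB n p k).degree (f z) := rfl
  rcases Nat.lt_or_ge (f z).val K₀ with hzK | hzK
  · -- clique part: pigeonhole
    set q := (f z).val / (n-1) with hq
    have hprop : ∀ a b : Fin p, (GB n p k).Adj a b → a.val < K₀ →
        b.val < K₀ ∧ b.val/(n-1) = a.val/(n-1) := by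
      rintro a b (⟨h1, h2, h3, h4⟩ | ⟨h1, _, _⟩) ha
      · exact ⟨h2, h4.symm⟩
      · omega
    have hadj01 : ∀ i : Fin n, 1 ≤ i.val → i.val ≤ n-2 → (Tn n).Adj z i := by
      intro i h1 h2
      rw [Tn, SimpleGraph.fromRel_adj]
      refine ⟨?_, Or.inl (Or.inl ⟨rfl, h1, h2⟩)⟩
      intro hzi
      have := congrArg Fin.val hzi
      simp only [hz] at this
      omega
    have hqall : ∀ i : Fin n, (f i).val < K₀ ∧ (f i).val/(n-1) = q := by
      intro i
      rcases Nat.lt_or_ge i.val 1 with h0 | h1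
      · have : i = z := Fin.ext (by simp [hz]; omega)
        rw [this]
        exact ⟨hzK, rfl⟩
      · rcases le_or_gt i.val (n-2) with h2 | h3
        · exact hprop _ _ (hf z i (hadj01 i h1 h2)) hzK
        · have hival : i.val = n - 1 := by have := i.isLt; omega
          set y : Fin n := ⟨n-2, by omega⟩ with hy
          have hyq := hprop _ _ (hf z y (hadj01 y (by simp [hy]; omega) (by simp [hy]))) hzK
          have hadjyi : (Tn n).Adj y i := by
            rw [Tn, SimpleGraph.fromRel_adj]
            refine ⟨?_, Or.inl (Or.inr ⟨by simp [hy], hival⟩)⟩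
            intro hcon
            have := congrArg Fin.val hcon
            simp only [hy, hival] at this
            omega
          have := hprop _ _ (hf y i hadjyi) hyq.1
          exact ⟨this.1, by rw [this.2, hyq.2]⟩
    have hle : (univ : Finset (Fin n)).card
        ≤ ((univ : Finset (Fin p)).filter (fun b => b.val/(n-1) = q)).card := by
      apply Finset.card_le_card_of_injOn (fun i => f i)
      · intro i _; simp [(hqall i).2]
      · intro a _ b _ h; exact f.injective h
    rw [Finset.card_univ, Fintype.card_fin] at hle
    have hfc : ((univ : Finset (Fin p)).filter (fun b => b.val/(n-1) = q)).card ≤ n - 1 := by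
      rw [fiber_card p q (n-1) (by omega)]
      have h1 : min ((q+1)*(n-1)) p ≤ (q+1)*(n-1) := min_le_left _ _
      have h2 : (q+1)*(n-1) = q*(n-1) + (n-1) := Nat.succ_mul q (n-1)
      omega
    omega
  · -- block part: degree too small
    have hble := blockG_deg_le (m := m) (d := n-3) (by omega) (by omega)
      (((f z).val - K₀ : ℕ) : ZMod m)
    rw [← GB_deg_block hn hk hkr hr2 hrn (f z) hzK] at hble
    omega

end GBsec

lemma card_edge_eq (p : ℕ) (G : SimpleGraph (Fin p)) [Fintype G.edgeSet] :
    Nat.card G.edgeSet = G.edgeFinset.card := by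
  rw [Nat.card_coe_set_eq, Set.ncard_eq_toFinset_card']
  rfl

theorem stmt2 (p n r : ℕ) (hn : 5 ≤ n) (hp : n ≤ p) (hr : r ≤ n - 2)
    (hmod : p % (n - 1) = r) :
    exNum p (Tn n) =
      if 7 ≤ n ∧ 2 ≤ r ∧ r ≤ n - 4 then ((n - 2) * (p - 1) - r - 1) / 2
      else ((n - 2) * p - r * (n - 1 - r)) / 2 := by
  classical
  set k := p / (n - 1) with hk
  have hkr : p = k * (n - 1) + r := by
    rw [hk, ← hmod, Nat.mul_comm]
    exact (Nat.div_add_mod p (n - 1)).symm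
  have hk1 : 1 ≤ k := (Nat.one_le_div_iff (by omega)).2 (by omega)
  have hrn : r < n - 1 := by omega
  set E := ((n - 2) * p - Dval n r) / 2 with hE
  -- the target value equals E
  have hVeq : (if 7 ≤ n ∧ 2 ≤ r ∧ r ≤ n - 4 then ((n - 2) * (p - 1) - r - 1) / 2
      else ((n - 2) * p - r * (n - 1 - r)) / 2) = E := by
    rw [hE]
    unfold Dval
    by_cases hcond : 7 ≤ n ∧ 2 ≤ r ∧ r ≤ n - 4
    · rw [if_pos hcond, if_pos hcond]
      have h5 : (n - 2) * ((p - 1) + 1) = (n - 2) * (p - 1) + (n - 2) := Nat.mul_succ _ _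
      have h6 : (p - 1) + 1 = p := by omega
      rw [h6] at h5
      have hXbig : 1 * (n - 1) ≤ (n - 2) * (p - 1) :=
        Nat.mul_le_mul (by omega) (by omega)
      omega
    · rw [if_neg hcond, if_neg hcond]
  rw [hVeq]
  -- upper bound for any Tₙ-free graph
  have hub : ∀ (G : SimpleGraph (Fin p)) (_ : ¬ ContainsCopy G (Tn n)),
      Nat.card G.edgeSet ≤ E := by
    intro G hfree
    haveI : DecidableRel G.Adj := Classical.decRel _
    rw [card_edge_eq]
    have h1 := UB hn hr hmod G hfree
    omega
  -- the extremal graph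
  have hexist : ∃ G : SimpleGraph (Fin p), ¬ ContainsCopy G (Tn n)
      ∧ Nat.card G.edgeSet = E := by
    by_cases hcond : 7 ≤ n ∧ 2 ≤ r ∧ r ≤ n - 4
    · -- construction B
      obtain ⟨hn7, hr2, hr4⟩ := hcond
      refine ⟨GB n p k, GB_free hn7 hk1 hkr hr2 hrn, ?_⟩
      have hsum := GB_sum hn7 hk1 hkr hr2 hrn
      have htwice := (GB n p k).sum_degrees_eq_twice_card_edges
      rw [card_edge_eq]
      set K₀ := (k-1)*(n-1) with hK0
      set m := p - K₀ with hm
      have hmval : m = (n-1) + r := GB_m_eq hk1 hkr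
      have hmulk : k*(n-1) = K₀ + (n-1) := GB_mul_helper hk1
      have hpm : p = K₀ + m := by omega
      have hmulp : (n-2)*p = (n-2)*K₀ + (n-2)*m := by rw [hpm, Nat.mul_add]
      have hm3 : (n-2)*m = (n-3)*m + m := by
        have h7 : ((n-3)+1)*m = (n-3)*m + m := Nat.succ_mul _ _
        have h8 : (n-3)+1 = n-2 := by omega
        rw [h8] at h7
        exact h7
      have hDv : Dval n r = n - 1 + r := by
        unfold Dval; rw [if_pos ⟨hn7, hr2, hr4⟩]
      rw [hE, hDv]
      have hsm : ((n-3)-1)*m + m = (n-3)*m := by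
        have h7 : (((n-3)-1)+1)*m = ((n-3)-1)*m + m := Nat.succ_mul _ _
        have h8 : ((n-3)-1)+1 = n-3 := by omega
        rw [h8] at h7
        exact h7.symm
      by_cases hodd : Odd (n-3)
      · rw [if_pos hodd] at hsum
        rw [Nat.odd_iff] at hodd
        have h9 : 2*((n-3)/2)*m = ((n-3)-1)*m := by
          have : 2*((n-3)/2) = (n-3)-1 := by omega
          rw [this]
        rw [h9] at hsum
        rw [hsum] at htwice
        omega
      · rw [if_neg hodd] at hsum
        rw [Nat.odd_iff] at hodd
        have h9 : 2*((n-3)/2)*m = (n-3)*m := by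
          have : 2*((n-3)/2) = n-3 := by omega
          rw [this]
        rw [h9] at hsum
        rw [hsum] at htwice
        omega
    · -- construction A
      refine ⟨cliqueG n p, cliqueG_free n p hn, ?_⟩
      have hsum := cliqueG_sum n p k r hn hkr hrn
      have htwice := (cliqueG n p).sum_degrees_eq_twice_card_edges
      rw [card_edge_eq]
      rw [hsum] at htwice
      have hDv : Dval n r = r * (n - 1 - r) := by
        unfold Dval; rw [if_neg hcond]
      rw [hE, hDv]
      have hmulp : (n-2)*p = (n-2)*(k*(n-1)) + (n-2)*r := by
        rw [hkr, Nat.mul_add]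
      have hsplit : (r-1)*r + r*(n-1-r) = (n-2)*r := by
        rcases Nat.eq_zero_or_pos r with rfl | hr1
        · simp
        · have h1 : (r-1) + (n-1-r) = n-2 := by omega
          calc (r-1)*r + r*(n-1-r) = r*((r-1) + (n-1-r)) := by ring
          _ = r*(n-2) := by rw [h1]
          _ = (n-2)*r := Nat.mul_comm _ _
      omega
  obtain ⟨G₀, hG₀free, hG₀count⟩ := hexist
  unfold exNum
  have hSne : Set.Nonempty {m : ℕ | ∃ G : SimpleGraph (Fin p),
      ¬ ContainsCopy G (Tn n) ∧ Nat.card G.edgeSet = m} := ⟨E, G₀, hG₀free, hG₀count⟩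
  have hSbdd : BddAbove {m : ℕ | ∃ G : SimpleGraph (Fin p),
      ¬ ContainsCopy G (Tn n) ∧ Nat.card G.edgeSet = m} := by
    refine ⟨E, ?_⟩
    rintro b ⟨G, hGfree, rfl⟩
    exact hub G hGfree
  refine le_antisymm (csSup_le hSne ?_) (le_csSup hSbdd ⟨G₀, hG₀free, hG₀count⟩)
  rintro b ⟨G, hGfree, rfl⟩
  exact hub G hGfree
end

section
/- Let G be an extremal graph of order p not containing T_n (p ≥ n ≥ 5). Then the maximum degree of G is at most n−2, and every vertex of degree exactly n−2 lies in a component of G isomorphic to K_{n−1}. -/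
open SimpleGraph

/-- The surgery graph: a clique on `B`, plus all edges of `G` avoiding `B`. -/
private def Gmod {p : ℕ} (G : SimpleGraph (Fin p)) (B : Finset (Fin p)) : SimpleGraph (Fin p) where
  Adj x y := x ≠ y ∧ ((x ∈ B ∧ y ∈ B) ∨ (G.Adj x y ∧ x ∉ B ∧ y ∉ B))
  symm := by
    constructor
    rintro x y ⟨h1, h2 | h2⟩
    · exact ⟨h1.symm, Or.inl ⟨h2.2, h2.1⟩⟩
    · exact ⟨h1.symm, Or.inr ⟨h2.1.symm, h2.2.2, h2.2.1⟩⟩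
  loopless := ⟨fun x h => h.1 rfl⟩

private lemma gmod_adj {p : ℕ} (G : SimpleGraph (Fin p)) (B : Finset (Fin p)) (x y : Fin p) :
    (Gmod G B).Adj x y ↔ x ≠ y ∧ ((x ∈ B ∧ y ∈ B) ∨ (G.Adj x y ∧ x ∉ B ∧ y ∉ B)) := Iff.rfl

private lemma gmod_free {p n : ℕ} (hn : 5 ≤ n) (G : SimpleGraph (Fin p))
    (hfree : ¬ ContainsCopy G (Tn n)) (B : Finset (Fin p)) (hB : B.card = n - 1) :
    ¬ ContainsCopy (Gmod G B) (Tn n) := by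
  rintro ⟨f, hf⟩
  have hn0 : 0 < n := by omega
  set i0 : Fin n := ⟨0, hn0⟩ with hi0
  have key : ∀ a b, (Tn n).Adj a b → (f a ∈ B ↔ f b ∈ B) := by
    intro a b h
    rcases (hf a b h).2 with h' | h'
    · simp [h'.1, h'.2]
    · simp [h'.2.1, h'.2.2]
  have adj0 : ∀ b : Fin n, 1 ≤ b.val → b.val ≤ n - 2 → (Tn n).Adj i0 b := by
    intro b h1 h2
    rw [Tn, SimpleGraph.fromRel_adj]
    refine ⟨?_, Or.inl (Or.inl ⟨rfl, h1, h2⟩)⟩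
    intro h
    have := congrArg Fin.val h
    simp [hi0] at this
    omega
  have adjlast : (Tn n).Adj ⟨n-2, by omega⟩ ⟨n-1, by omega⟩ := by
    rw [Tn, SimpleGraph.fromRel_adj]
    refine ⟨?_, Or.inl (Or.inr ⟨rfl, rfl⟩)⟩
    intro h
    have := congrArg Fin.val h
    simp at this
    omega
  have inv : ∀ i : Fin n, (f i ∈ B ↔ f i0 ∈ B) := by
    intro i
    by_cases h0 : i.val = 0
    · have : i = i0 := Fin.ext h0
      rw [this]
    by_cases hl : i.val = n - 1
    · have hi : i = ⟨n-1, by omega⟩ := Fin.ext hl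
      rw [hi]
      have h2 := key _ _ adjlast
      have h1 := key i0 ⟨n-2, by omega⟩
        (adj0 _ (show 1 ≤ n-2 by omega) (show n-2 ≤ n-2 by omega))
      rw [← h2, ← h1]
    · have hle : i.val ≤ n - 2 := by omega
      exact (key i0 i (adj0 i (by omega) hle)).symm
  by_cases hin : f i0 ∈ B
  · have hall : ∀ i, f i ∈ B := fun i => (inv i).mpr hin
    have hcard : Fintype.card (Fin n) ≤ Fintype.card {x // x ∈ B} :=
      Fintype.card_le_of_injective (fun i => ⟨f i, hall i⟩)
        (fun a b h => f.injective (congrArg Subtype.val h))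
    rw [Fintype.card_coe, Fintype.card_fin, hB] at hcard
    omega
  · apply hfree
    refine ⟨f, fun a b h => ?_⟩
    rcases (hf a b h).2 with h' | h'
    · exact absurd h'.1 (fun hh => hin ((inv a).mp hh))
    · exact h'.1

private lemma le_ex {p n : ℕ} (G' : SimpleGraph (Fin p)) (h' : ¬ ContainsCopy G' (Tn n)) :
    Nat.card G'.edgeSet ≤ exNum p (Tn n) := by
  apply le_csSup
  · refine ⟨Nat.card (Sym2 (Fin p)), ?_⟩
    rintro m ⟨H, -, rfl⟩
    exact Nat.card_le_card_of_injective _ Subtype.coe_injective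
  · exact ⟨G', h', rfl⟩

private lemma embed_tn {p n : ℕ} (hn : 5 ≤ n) (G : SimpleGraph (Fin p)) [DecidableRel G.Adj]
    {v u w : Fin p} (hvu : G.Adj v u) (huw : G.Adj u w) (hwv : w ≠ v)
    (hcard : n - 3 ≤ (((G.neighborFinset v).erase u).erase w).card) :
    ContainsCopy G (Tn n) := by
  obtain ⟨T, hT, hTcard⟩ :=
    Finset.exists_subset_card_eq (s := ((G.neighborFinset v).erase u).erase w) hcard
  set g := T.orderIsoOfFin hTcard with hg
  have hTmem : ∀ x ∈ T, x ≠ u ∧ x ≠ w ∧ G.Adj v x := by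
    intro x hx
    have h1 := hT hx
    have h2 := Finset.mem_of_mem_erase h1
    exact ⟨Finset.ne_of_mem_erase h2, Finset.ne_of_mem_erase h1,
      (G.mem_neighborFinset v x).mp (Finset.mem_of_mem_erase h2)⟩
  classical
  set f : Fin n → Fin p := fun i =>
    if h0 : i.val = 0 then v else if h2 : i.val = n - 2 then u else if h1 : i.val = n - 1 then w
    else (g ⟨i.val - 1, by have := i.isLt; omega⟩ : Fin p) with hfdef
  have hf0 : ∀ i : Fin n, i.val = 0 → f i = v := by
    intro i h; simp only [hfdef]; rw [dif_pos h]
  have hfn2 : ∀ i : Fin n, i.val = n - 2 → f i = u := by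
    intro i h; simp only [hfdef]; rw [dif_neg (by omega), dif_pos h]
  have hfn1 : ∀ i : Fin n, i.val = n - 1 → f i = w := by
    intro i h; simp only [hfdef]; rw [dif_neg (by omega), dif_neg (by omega), dif_pos h]
  have hfmid : ∀ (i : Fin n) (h1 : 1 ≤ i.val) (h2 : i.val ≤ n - 3),
      f i = (g ⟨i.val - 1, by omega⟩ : Fin p) := by
    intro i h1 h2
    simp only [hfdef]
    rw [dif_neg (by omega), dif_neg (by omega), dif_neg (by omega)]
  have hmidT : ∀ i : Fin n, 1 ≤ i.val → i.val ≤ n - 3 → f i ∈ T := by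
    intro i h1 h2
    rw [hfmid i h1 h2]
    exact (g ⟨i.val - 1, by omega⟩).2
  have hcases : ∀ i : Fin n, i.val = 0 ∨ (1 ≤ i.val ∧ i.val ≤ n - 3) ∨ i.val = n - 2 ∨
      i.val = n - 1 := by
    intro i; have := i.isLt; omega
  have hvne : v ∉ T := by
    intro h; exact G.irrefl (hTmem v h).2.2
  have hinj : Function.Injective f := by
    intro a b hab
    rcases hcases a with ha | ha | ha | ha <;> rcases hcases b with hb | hb | hb | hb
    · exact Fin.ext (ha.trans hb.symm)
    · rw [hf0 a ha] at hab
      exact absurd (hab ▸ hmidT b hb.1 hb.2) hvne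
    · rw [hf0 a ha, hfn2 b hb] at hab; exact absurd hab hvu.ne
    · rw [hf0 a ha, hfn1 b hb] at hab; exact absurd hab.symm hwv
    · rw [hf0 b hb] at hab
      exact absurd (hab ▸ hmidT a ha.1 ha.2) hvne
    · rw [hfmid a ha.1 ha.2, hfmid b hb.1 hb.2] at hab
      have := g.injective (Subtype.ext hab)
      have := congrArg Fin.val this
      simp at this
      exact Fin.ext (by omega)
    · rw [hfn2 b hb] at hab
      exact absurd hab ((hTmem _ (hmidT a ha.1 ha.2)).1)
    · rw [hfn1 b hb] at hab
      exact absurd hab ((hTmem _ (hmidT a ha.1 ha.2)).2.1)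
    · rw [hf0 b hb, hfn2 a ha] at hab; exact absurd hab.symm hvu.ne
    · rw [hfn2 a ha] at hab
      exact absurd hab.symm ((hTmem _ (hmidT b hb.1 hb.2)).1)
    · exact Fin.ext (ha.trans hb.symm)
    · rw [hfn2 a ha, hfn1 b hb] at hab; exact absurd hab huw.ne
    · rw [hf0 b hb, hfn1 a ha] at hab; exact absurd hab hwv
    · rw [hfn1 a ha] at hab
      exact absurd hab.symm ((hTmem _ (hmidT b hb.1 hb.2)).2.1)
    · rw [hfn1 a ha, hfn2 b hb] at hab; exact absurd hab.symm huw.ne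
    · exact Fin.ext (ha.trans hb.symm)
  have hstar : ∀ b : Fin n, 1 ≤ b.val → b.val ≤ n - 2 → G.Adj v (f b) := by
    intro b h1 h2
    by_cases hb2 : b.val = n - 2
    · rw [hfn2 b hb2]; exact hvu
    · have : b.val ≤ n - 3 := by omega
      exact (hTmem _ (hmidT b h1 this)).2.2
  refine ⟨⟨f, hinj⟩, ?_⟩
  intro a b hab
  simp only [Function.Embedding.coeFn_mk]
  rw [Tn, SimpleGraph.fromRel_adj] at hab
  obtain ⟨-, hr | hr⟩ := hab <;> rcases hr with ⟨h1, h2⟩ | ⟨h1, h2⟩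
  · rw [hf0 a h1]
    exact hstar b h2.1 h2.2
  · rw [hfn2 a h1, hfn1 b h2]
    exact huw
  · rw [hf0 b h1]
    exact (hstar a h2.1 h2.2).symm
  · rw [hfn2 b h1, hfn1 a h2]
    exact huw.symm

theorem stmt3 (p n : ℕ) (hn : 5 ≤ n) (hp : n ≤ p) (G : SimpleGraph (Fin p))
    (hfree : ¬ ContainsCopy G (Tn n))
    (hext : Nat.card G.edgeSet = exNum p (Tn n)) :
    (∀ v, Nat.card (G.neighborSet v) ≤ n - 2) ∧
      ∀ v, Nat.card (G.neighborSet v) = n - 2 →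
        Nonempty (G.induce (G.connectedComponentMk v).supp ≃g
          (⊤ : SimpleGraph (Fin (n - 1)))) := by
  classical
  have hNatdeg : ∀ v : Fin p, Nat.card (G.neighborSet v) = G.degree v := by
    intro v; rw [Nat.card_eq_fintype_card, SimpleGraph.card_neighborSet_eq_degree]
  constructor
  · -- Part 1 : maximum degree at most n - 2
    intro v
    by_contra hdeg
    rw [hNatdeg] at hdeg
    have hdv : n - 1 ≤ G.degree v := by omega
    have hdF : n - 1 ≤ (G.neighborFinset v).card := hdv
    have step1 : ∀ u ∈ G.neighborFinset v, ∀ w, G.Adj u w → w = v := by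
      intro u hu w hadj
      by_contra hne
      apply hfree
      refine embed_tn hn G ((G.mem_neighborFinset v u).mp hu) hadj hne ?_
      have e1 : (G.neighborFinset v).card - 1 ≤ ((G.neighborFinset v).erase u).card :=
        Finset.pred_card_le_card_erase
      have e2 : ((G.neighborFinset v).erase u).card - 1 ≤
          (((G.neighborFinset v).erase u).erase w).card :=
        Finset.pred_card_le_card_erase
      omega
    obtain ⟨B, hBsub, hBcard⟩ :=
      Finset.exists_subset_card_eq (show n - 1 ≤ (G.neighborFinset v).card from hdF)
    have hfree' : ¬ ContainsCopy (Gmod G B) (Tn n) := gmod_free hn G hfree B hBcard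
    have hle : Nat.card (Gmod G B).edgeSet ≤ Nat.card G.edgeSet := by
      rw [hext]; exact le_ex _ hfree'
    rw [Nat.card_eq_fintype_card, Nat.card_eq_fintype_card,
      ← SimpleGraph.edgeFinset_card, ← SimpleGraph.edgeFinset_card] at hle
    set R := G.edgeFinset.filter (fun e => ∀ x ∈ e, x ∉ B) with hR
    set M := G.edgeFinset.filter (fun e => ¬ ∀ x ∈ e, x ∉ B) with hM
    have hsplit : R.card + M.card = G.edgeFinset.card :=
      Finset.card_filter_add_card_filter_not (p := fun e => ∀ x ∈ e, x ∉ B)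
    have hMsub : M ⊆ B.image (fun u => s(v, u)) := by
      intro e he
      rw [hM, Finset.mem_filter] at he
      obtain ⟨heE, hmeet⟩ := he
      push_neg at hmeet
      obtain ⟨x, hxe, hxB⟩ := hmeet
      induction e using Sym2.ind with
      | _ a b =>
        have hadj : G.Adj a b := (G.mem_edgeSet).mp (SimpleGraph.mem_edgeFinset.mp heE)
        rcases Sym2.mem_iff.mp hxe with rfl | rfl
        · have hb : b = v := step1 x (hBsub hxB) b hadj
          rw [hb, Sym2.eq_swap]
          exact Finset.mem_image_of_mem _ hxB
        · have ha : a = v := step1 x (hBsub hxB) a hadj.symm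
          rw [ha]
          exact Finset.mem_image_of_mem _ hxB
    have hMcard : M.card ≤ n - 1 := by
      calc M.card ≤ (B.image (fun u => s(v, u))).card := Finset.card_le_card hMsub
      _ ≤ B.card := Finset.card_image_le
      _ = n - 1 := hBcard
    -- pick four distinct elements of B
    obtain ⟨b0, hb0⟩ : B.Nonempty := Finset.card_pos.mp (by omega)
    obtain ⟨b1, hb1⟩ : (B.erase b0).Nonempty := by
      apply Finset.card_pos.mp
      rw [Finset.card_erase_of_mem hb0]; omega
    obtain ⟨b2, hb2⟩ : ((B.erase b0).erase b1).Nonempty := by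
      apply Finset.card_pos.mp
      rw [Finset.card_erase_of_mem hb1, Finset.card_erase_of_mem hb0]; omega
    obtain ⟨b3, hb3⟩ : (((B.erase b0).erase b1).erase b2).Nonempty := by
      apply Finset.card_pos.mp
      rw [Finset.card_erase_of_mem hb2, Finset.card_erase_of_mem hb1,
        Finset.card_erase_of_mem hb0]; omega
    have hb1B : b1 ∈ B := Finset.mem_of_mem_erase hb1
    have hb2B : b2 ∈ B := Finset.mem_of_mem_erase (Finset.mem_of_mem_erase hb2)
    have hb3B : b3 ∈ B :=
      Finset.mem_of_mem_erase (Finset.mem_of_mem_erase (Finset.mem_of_mem_erase hb3))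
    have h10 : b1 ≠ b0 := Finset.ne_of_mem_erase hb1
    have h21 : b2 ≠ b1 := Finset.ne_of_mem_erase hb2
    have h20 : b2 ≠ b0 := Finset.ne_of_mem_erase (Finset.mem_of_mem_erase hb2)
    have h32 : b3 ≠ b2 := Finset.ne_of_mem_erase hb3
    have h31 : b3 ≠ b1 := Finset.ne_of_mem_erase (Finset.mem_of_mem_erase hb3)
    have h30 : b3 ≠ b0 :=
      Finset.ne_of_mem_erase (Finset.mem_of_mem_erase (Finset.mem_of_mem_erase hb3))
    set K : Finset (Sym2 (Fin p)) :=
      (B.erase b0).image (fun u => s(b0, u)) ∪ {s(b1,b2), s(b1,b3), s(b2,b3)} with hK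
    have hKB : ∀ e ∈ K, ∃ x ∈ e, x ∈ B := by
      intro e he
      rw [hK, Finset.mem_union] at he
      rcases he with he | he
      · obtain ⟨u, hu, rfl⟩ := Finset.mem_image.mp he
        exact ⟨b0, Sym2.mem_mk_left _ _, hb0⟩
      · simp only [Finset.mem_insert, Finset.mem_singleton] at he
        rcases he with rfl | rfl | rfl
        · exact ⟨b1, Sym2.mem_mk_left _ _, hb1B⟩
        · exact ⟨b1, Sym2.mem_mk_left _ _, hb1B⟩
        · exact ⟨b2, Sym2.mem_mk_left _ _, hb2B⟩
    have hKsub : K ⊆ (Gmod G B).edgeFinset := by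
      intro e he
      rw [SimpleGraph.mem_edgeFinset]
      rw [hK, Finset.mem_union] at he
      rcases he with he | he
      · obtain ⟨u, hu, rfl⟩ := Finset.mem_image.mp he
        exact ⟨(Finset.ne_of_mem_erase hu).symm, Or.inl ⟨hb0, Finset.mem_of_mem_erase hu⟩⟩
      · simp only [Finset.mem_insert, Finset.mem_singleton] at he
        rcases he with rfl | rfl | rfl
        · exact ⟨fun h => h21 (h.symm), Or.inl ⟨hb1B, hb2B⟩⟩
        · exact ⟨fun h => h31 (h.symm), Or.inl ⟨hb1B, hb3B⟩⟩
        · exact ⟨fun h => h32 (h.symm), Or.inl ⟨hb2B, hb3B⟩⟩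
    have hRsub : R ⊆ (Gmod G B).edgeFinset := by
      intro e he
      rw [hR, Finset.mem_filter] at he
      obtain ⟨heE, havoid⟩ := he
      rw [SimpleGraph.mem_edgeFinset]
      induction e using Sym2.ind with
      | _ a b =>
        have hadj : G.Adj a b := (G.mem_edgeSet).mp (SimpleGraph.mem_edgeFinset.mp heE)
        exact ⟨hadj.ne, Or.inr ⟨hadj, havoid a (Sym2.mem_mk_left _ _),
          havoid b (Sym2.mem_mk_right _ _)⟩⟩
    have hdisj : Disjoint K R := by
      rw [Finset.disjoint_left]
      intro e heK heR
      rw [hR, Finset.mem_filter] at heR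
      obtain ⟨x, hxe, hxB⟩ := hKB e heK
      exact heR.2 x hxe hxB
    have hKcard : K.card = n + 1 := by
      rw [hK]
      have himg : ((B.erase b0).image (fun u => s(b0, u))).card = n - 2 := by
        rw [Finset.card_image_of_injective _ (fun x y h => Sym2.congr_right.mp h),
          Finset.card_erase_of_mem hb0, hBcard]
        omega
      have hdisj2 : Disjoint ((B.erase b0).image (fun u => s(b0, u)))
          ({s(b1,b2), s(b1,b3), s(b2,b3)} : Finset (Sym2 (Fin p))) := by
        rw [Finset.disjoint_left]
        intro e he he'
        obtain ⟨u, hu, rfl⟩ := Finset.mem_image.mp he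
        simp only [Finset.mem_insert, Finset.mem_singleton, Sym2.eq_iff] at he'
        rcases he' with (⟨h, -⟩ | ⟨h, -⟩) | (⟨h, -⟩ | ⟨h, -⟩) | (⟨h, -⟩ | ⟨h, -⟩) <;>
          first
            | exact h10 h.symm
            | exact h20 h.symm
            | exact h30 h.symm
      have htriple : ({s(b1,b2), s(b1,b3), s(b2,b3)} : Finset (Sym2 (Fin p))).card = 3 := by
        rw [Finset.card_insert_of_notMem, Finset.card_insert_of_notMem,
          Finset.card_singleton]
        · rw [Finset.mem_singleton]
          intro h
          rcases Sym2.eq_iff.mp h with ⟨h1, h2⟩ | ⟨h1, h2⟩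
          · exact h21 h1.symm
          · exact h32 h2
        · rw [Finset.mem_insert, Finset.mem_singleton]
          rintro (h | h) <;> rcases Sym2.eq_iff.mp h with ⟨h1, h2⟩ | ⟨h1, h2⟩
          · exact h32 h2.symm
          · exact h31 h1.symm
          · exact h21 h1.symm
          · exact h31 h1.symm
      rw [Finset.card_union_of_disjoint hdisj2, himg, htriple]
      omega
    have hfin : K.card + R.card ≤ (Gmod G B).edgeFinset.card := by
      rw [← Finset.card_union_of_disjoint hdisj]
      exact Finset.card_le_card (Finset.union_subset hKsub hRsub)
    omega
  · -- Part 2 : vertices of degree n - 2 lie in a K_{n-1} component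
    intro v hdeg
    rw [hNatdeg] at hdeg
    set S : Finset (Fin p) := insert v (G.neighborFinset v) with hS
    have hvS : v ∈ S := Finset.mem_insert_self _ _
    have hnbrS : ∀ x, G.Adj v x → x ∈ S := fun x h =>
      Finset.mem_insert_of_mem ((G.mem_neighborFinset v x).mpr h)
    have hNcard : (G.neighborFinset v).card = n - 2 := hdeg
    have hScard : S.card = n - 1 := by
      rw [hS, Finset.card_insert_of_notMem (G.notMem_neighborFinset_self v), hNcard]
      omega
    have closure : ∀ x ∈ S, ∀ y, G.Adj x y → y ∈ S := by
      intro x hx y hxy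
      rcases Finset.mem_insert.mp hx with rfl | hx'
      · exact hnbrS y hxy
      · by_contra hy
        apply hfree
        have hvx : G.Adj v x := (G.mem_neighborFinset v x).mp hx'
        have hyv : y ≠ v := by rintro rfl; exact hy hvS
        refine embed_tn hn G hvx hxy hyv ?_
        have h1 : ((G.neighborFinset v).erase x).card = n - 3 := by
          rw [Finset.card_erase_of_mem hx', hNcard]
          omega
        have hynot : y ∉ (G.neighborFinset v).erase x := by
          intro hmem
          exact hy (Finset.mem_insert_of_mem (Finset.mem_of_mem_erase hmem))
        rw [Finset.erase_eq_of_notMem hynot, h1]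
    have complete : ∀ x ∈ S, ∀ y ∈ S, x ≠ y → G.Adj x y := by
      by_contra hc
      push_neg at hc
      obtain ⟨x, hx, y, hy, hxy, hnadj⟩ := hc
      have hfree' := gmod_free hn G hfree S hScard
      have hle := le_ex (Gmod G S) hfree'
      rw [← hext] at hle
      have hsub : G.edgeSet ⊆ (Gmod G S).edgeSet := by
        intro e
        induction e using Sym2.ind with
        | _ a b =>
          intro he
          rw [SimpleGraph.mem_edgeSet] at he ⊢
          by_cases haS : a ∈ S
          · exact ⟨he.ne, Or.inl ⟨haS, closure a haS b he⟩⟩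
          · have hbS : b ∉ S := fun hbS => haS (closure b hbS a he.symm)
            exact ⟨he.ne, Or.inr ⟨he, haS, hbS⟩⟩
      have hmem : s(x,y) ∈ (Gmod G S).edgeSet := ⟨hxy, Or.inl ⟨hx, hy⟩⟩
      have hnot : s(x,y) ∉ G.edgeSet := fun h => hnadj ((G.mem_edgeSet).mp h)
      have hlt : Nat.card G.edgeSet < Nat.card (Gmod G S).edgeSet := by
        rw [Nat.card_coe_set_eq, Nat.card_coe_set_eq]
        exact Set.ncard_lt_ncard ⟨hsub, fun hsup => hnot (hsup hmem)⟩ (Set.toFinite _)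
      omega
    have hwalk : ∀ (a b : Fin p), G.Walk a b → a ∈ S → b ∈ S := by
      intro a b wab
      induction wab with
      | nil => exact id
      | cons h q ih => exact fun ha => ih (closure _ ha _ h)
    have hsupp : (G.connectedComponentMk v).supp = (↑S : Set (Fin p)) := by
      ext x
      rw [SimpleGraph.ConnectedComponent.mem_supp_iff, SimpleGraph.ConnectedComponent.eq]
      constructor
      · intro h
        obtain ⟨wvx⟩ := h.symm
        exact hwalk v x wvx hvS
      · intro hx
        rcases Finset.mem_insert.mp hx with rfl | hx'
        · rfl
        · exact (((G.mem_neighborFinset v x).mp hx').symm).reachable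
    have hcardsupp : Nat.card ((G.connectedComponentMk v).supp) = n - 1 := by
      rw [hsupp, Nat.card_coe_set_eq, Set.ncard_coe_finset, hScard]
    have eqv : ((G.connectedComponentMk v).supp : Set (Fin p)) ≃ Fin (n-1) :=
      Finite.equivFinOfCardEq hcardsupp
    refine ⟨{ toEquiv := eqv, map_rel_iff' := ?_ }⟩
    intro a b
    simp only [SimpleGraph.top_adj, SimpleGraph.comap_adj, Function.Embedding.coe_subtype]
    constructor
    · intro hne
      have haS : (a : Fin p) ∈ S :=
        Finset.mem_coe.mp ((Set.ext_iff.mp hsupp (a : Fin p)).mp a.2)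
      have hbS : (b : Fin p) ∈ S :=
        Finset.mem_coe.mp ((Set.ext_iff.mp hsupp (b : Fin p)).mp b.2)
      refine complete _ haS _ hbS ?_
      intro h
      exact hne (congrArg eqv (Subtype.ext h))
    · intro hadj h
      exact hadj.ne (congrArg Subtype.val (eqv.injective h))
end

section
/- Let p ≥ n ≥ 6 and let G be a graph of order p with e(G) = ex(p;T_n*) containing no copy of T_n*. Then the maximum degree of G is at most n−2. -/
open SimpleGraph

/-- the candidate embedding of `TnStar n` -/
def buildF (n : ℕ) {p : ℕ} (v a b c : Fin p) (ℓ : ℕ → Fin p) (i : Fin n) : Fin p :=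
  if 1 ≤ i.val ∧ i.val ≤ n - 4 then ℓ (i.val - 1)
  else if i.val = n - 3 then a
  else if i.val = n - 2 then b
  else if i.val = n - 1 then c
  else v

section buildF
variable {n p : ℕ} {v a b c : Fin p} {ℓ : ℕ → Fin p} {i : Fin n}

lemma buildF_leaf (h1 : 1 ≤ i.val) (h2 : i.val ≤ n - 4) :
    buildF n v a b c ℓ i = ℓ (i.val - 1) := by
  unfold buildF; rw [if_pos ⟨h1, h2⟩]

lemma buildF_a (hn : 6 ≤ n) (h : i.val = n - 3) : buildF n v a b c ℓ i = a := by
  unfold buildF; rw [if_neg (by omega), if_pos h]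

lemma buildF_b (hn : 6 ≤ n) (h : i.val = n - 2) : buildF n v a b c ℓ i = b := by
  unfold buildF; rw [if_neg (by omega), if_neg (by omega), if_pos h]

lemma buildF_c (hn : 6 ≤ n) (h : i.val = n - 1) : buildF n v a b c ℓ i = c := by
  unfold buildF; rw [if_neg (by omega), if_neg (by omega), if_neg (by omega), if_pos h]

lemma buildF_v (hn : 6 ≤ n) (h : i.val = 0) : buildF n v a b c ℓ i = v := by
  unfold buildF
  rw [if_neg (by omega), if_neg (by omega), if_neg (by omega), if_neg (by omega)]

end buildF

lemma stepA {p n : ℕ} (hn : 6 ≤ n) (G : SimpleGraph (Fin p)) [DecidableRel G.Adj]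
    (hfree : ¬ ContainsCopy G (TnStar n)) (v a b c : Fin p)
    (hdeg : n - 1 ≤ G.degree v) (hva : G.Adj v a) (hab : G.Adj a b) (hbv : b ≠ v)
    (hbc : G.Adj b c) (hcv : c ≠ v) (hca : c ≠ a) : False := by
  classical
  apply hfree
  have hLcard : n - 4 ≤ ((((G.neighborFinset v).erase a).erase b).erase c).card := by
    have h1 : (G.neighborFinset v).card = G.degree v := G.card_neighborFinset_eq_degree v
    have h2 := Finset.pred_card_le_card_erase
      (s := (G.neighborFinset v)) (a := a)
    have h3 := Finset.pred_card_le_card_erase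
      (s := ((G.neighborFinset v).erase a)) (a := b)
    have h4 := Finset.pred_card_le_card_erase
      (s := (((G.neighborFinset v).erase a).erase b)) (a := c)
    omega
  obtain ⟨L', hL'sub, hL'card⟩ := Finset.exists_subset_card_eq hLcard
  set o := L'.orderIsoOfFin hL'card with ho
  set ℓ : ℕ → Fin p := fun m => if h : m < n - 4 then (o ⟨m, h⟩ : Fin p) else v with hℓ
  have hmem : ∀ m, m < n - 4 → G.Adj v (ℓ m) ∧ ℓ m ≠ a ∧ ℓ m ≠ b ∧ ℓ m ≠ c := by
    intro m hm
    have h1 : (ℓ m) ∈ L' := by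
      rw [hℓ]; simp only [hm, dif_pos]
      exact (o ⟨m, hm⟩).2
    have h2 := hL'sub h1
    have h3 := Finset.mem_of_mem_erase h2
    have h4 := Finset.mem_of_mem_erase h3
    have h5 := Finset.mem_of_mem_erase h4
    exact ⟨(G.mem_neighborFinset v _).1 h5, Finset.ne_of_mem_erase h4,
      Finset.ne_of_mem_erase h3, Finset.ne_of_mem_erase h2⟩
  have hinjℓ : ∀ m m', m < n - 4 → m' < n - 4 → ℓ m = ℓ m' → m = m' := by
    intro m m' hm hm' h
    rw [hℓ] at h; simp only [hm, hm', dif_pos] at h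
    have := o.injective (Subtype.coe_injective h)
    exact congrArg Fin.val this
  have hLv : ∀ m, m < n - 4 → ℓ m ≠ v := fun m hm => ((hmem m hm).1).ne'
  have hLa : ∀ m, m < n - 4 → ℓ m ≠ a := fun m hm => (hmem m hm).2.1
  have hLb : ∀ m, m < n - 4 → ℓ m ≠ b := fun m hm => (hmem m hm).2.2.1
  have hLc : ∀ m, m < n - 4 → ℓ m ≠ c := fun m hm => (hmem m hm).2.2.2
  have hvane : v ≠ a := hva.ne
  have habne : a ≠ b := hab.ne
  have hbcne : b ≠ c := hbc.ne
  have hvb : v ≠ b := Ne.symm hbv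
  have hvc : v ≠ c := Ne.symm hcv
  have hac : a ≠ c := Ne.symm hca
  have hreg : ∀ i : Fin n, i.val = 0 ∨ (1 ≤ i.val ∧ i.val ≤ n - 4) ∨ i.val = n - 3 ∨
      i.val = n - 2 ∨ i.val = n - 1 := by
    intro i; have := i.isLt; omega
  refine ⟨⟨buildF n v a b c ℓ, ?_⟩, ?_⟩
  · intro i j hij
    rcases hreg i with hi | hi | hi | hi | hi
    · rw [buildF_v hn hi] at hij
      rcases hreg j with hj | hj | hj | hj | hj
      · exact Fin.ext (by omega)
      · rw [buildF_leaf hj.1 hj.2] at hij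
        exact absurd hij.symm (hLv _ (by omega))
      · rw [buildF_a hn hj] at hij; exact absurd hij hvane
      · rw [buildF_b hn hj] at hij; exact absurd hij hvb
      · rw [buildF_c hn hj] at hij; exact absurd hij hvc
    · rw [buildF_leaf hi.1 hi.2] at hij
      rcases hreg j with hj | hj | hj | hj | hj
      · rw [buildF_v hn hj] at hij; exact absurd hij (hLv _ (by omega))
      · rw [buildF_leaf hj.1 hj.2] at hij
        have := hinjℓ _ _ (by omega) (by omega) hij
        exact Fin.ext (by omega)
      · rw [buildF_a hn hj] at hij; exact absurd hij (hLa _ (by omega))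
      · rw [buildF_b hn hj] at hij; exact absurd hij (hLb _ (by omega))
      · rw [buildF_c hn hj] at hij; exact absurd hij (hLc _ (by omega))
    · rw [buildF_a hn hi] at hij
      rcases hreg j with hj | hj | hj | hj | hj
      · rw [buildF_v hn hj] at hij; exact absurd hij.symm hvane
      · rw [buildF_leaf hj.1 hj.2] at hij; exact absurd hij.symm (hLa _ (by omega))
      · exact Fin.ext (by omega)
      · rw [buildF_b hn hj] at hij; exact absurd hij habne
      · rw [buildF_c hn hj] at hij; exact absurd hij hac
    · rw [buildF_b hn hi] at hij
      rcases hreg j with hj | hj | hj | hj | hj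
      · rw [buildF_v hn hj] at hij; exact absurd hij.symm hvb
      · rw [buildF_leaf hj.1 hj.2] at hij; exact absurd hij.symm (hLb _ (by omega))
      · rw [buildF_a hn hj] at hij; exact absurd hij.symm habne
      · exact Fin.ext (by omega)
      · rw [buildF_c hn hj] at hij; exact absurd hij hbcne
    · rw [buildF_c hn hi] at hij
      rcases hreg j with hj | hj | hj | hj | hj
      · rw [buildF_v hn hj] at hij; exact absurd hij.symm hvc
      · rw [buildF_leaf hj.1 hj.2] at hij; exact absurd hij.symm (hLc _ (by omega))
      · rw [buildF_a hn hj] at hij; exact absurd hij.symm hac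
      · rw [buildF_b hn hj] at hij; exact absurd hij.symm hbcne
      · exact Fin.ext (by omega)
  · intro x y hxy
    rw [TnStar, fromRel_adj] at hxy
    obtain ⟨hne, hrel⟩ := hxy
    have hx := x.isLt; have hy := y.isLt
    have main : ∀ x y : Fin n,
        (x.val = 0 ∧ 1 ≤ y.val ∧ y.val ≤ n - 3) ∨ (x.val = n - 3 ∧ y.val = n - 2) ∨
          (x.val = n - 2 ∧ y.val = n - 1) →
        G.Adj (buildF n v a b c ℓ x) (buildF n v a b c ℓ y) := by
      intro x y hrel
      rcases hrel with ⟨hx0, hy1, hy2⟩ | ⟨hx1, hy1⟩ | ⟨hx1, hy1⟩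
      · rw [buildF_v hn hx0]
        rcases (by omega : y.val ≤ n - 4 ∨ y.val = n - 3) with hy | hy
        · rw [buildF_leaf hy1 hy]
          exact (hmem _ (by omega)).1
        · rw [buildF_a hn hy]; exact hva
      · rw [buildF_a hn hx1, buildF_b hn hy1]; exact hab
      · rw [buildF_b hn hx1, buildF_c hn hy1]; exact hbc
    rcases hrel with h | h
    · exact main x y h
    · exact (main y x h).symm

lemma exists_better {p n : ℕ} (hn : 6 ≤ n) (G : SimpleGraph (Fin p)) [DecidableRel G.Adj]
    (hfree : ¬ ContainsCopy G (TnStar n)) (v : Fin p) (hdeg : n - 1 ≤ G.degree v) :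
    ∃ H : SimpleGraph (Fin p), ¬ ContainsCopy H (TnStar n) ∧
      Nat.card G.edgeSet < Nat.card H.edgeSet := by
  classical
  have key : ∀ a b c : Fin p, G.Adj v a → G.Adj a b → b ≠ v → G.Adj b c → c ≠ v →
      c ≠ a → False := fun a b c h1 h2 h3 h4 h5 h6 =>
    stepA hn G hfree v a b c hdeg h1 h2 h3 h4 h5 h6
  set D : Finset (Fin p) := G.neighborFinset v with hD
  set P : Finset (Fin p) := Finset.univ.filter
    (fun x => ¬ G.Adj v x ∧ x ≠ v ∧ ∃ u, G.Adj v u ∧ G.Adj u x) with hP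
  set W : Finset (Fin p) := insert v (D ∪ P) with hW
  have hPmem : ∀ x : Fin p, x ∈ P ↔ (¬ G.Adj v x ∧ x ≠ v ∧ ∃ u, G.Adj v u ∧ G.Adj u x) := by
    intro x; simp [hP]
  have hDmem : ∀ x : Fin p, x ∈ D ↔ G.Adj v x := fun x => G.mem_neighborFinset v x
  have hvD : v ∉ D := by rw [hDmem]; exact fun h => G.irrefl h
  have hvP : v ∉ P := by rw [hPmem]; tauto
  have hDP : Disjoint D P := by
    rw [Finset.disjoint_left]
    intro x hxD hxP
    exact ((hPmem x).1 hxP).1 ((hDmem x).1 hxD)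
  have hvW : v ∈ W := Finset.mem_insert_self _ _
  have hDW : D ⊆ W := fun x hx => Finset.mem_insert_of_mem (Finset.mem_union_left _ hx)
  have hPW : P ⊆ W := fun x hx => Finset.mem_insert_of_mem (Finset.mem_union_right _ hx)
  have hWmem : ∀ x : Fin p, x ∈ W ↔ (x = v ∨ x ∈ D ∨ x ∈ P) := by
    intro x; simp [hW, Finset.mem_insert, Finset.mem_union]
  -- no edge of G leaves W
  have F1 : ∀ x ∈ W, ∀ y, G.Adj x y → y ∈ W := by
    intro x hx y hxy
    rcases (hWmem x).1 hx with rfl | hx | hx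
    · exact hDW ((hDmem y).2 hxy)
    · by_cases hyv : y = v
      · rw [hyv]; exact hvW
      by_cases hyD : G.Adj v y
      · exact hDW ((hDmem y).2 hyD)
      · exact hPW ((hPmem y).2 ⟨hyD, hyv, x, (hDmem x).1 hx, hxy⟩)
    · obtain ⟨hnvx, hxv, u, hvu, hux⟩ := (hPmem x).1 hx
      have hyu : y = u := by
        by_contra hyu
        have hyv : y ≠ v := by
          intro h; rw [h] at hxy; exact hnvx hxy.symm
        exact key u x y hvu hux hxv hxy hyv hyu
      rw [hyu]; exact hDW ((hDmem u).2 hvu)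
  -- pendants have degree ≤ 1
  have F2 : ∀ b ∈ P, G.degree b ≤ 1 := by
    intro b hb
    obtain ⟨hnvb, hbv, u, hvu, hub⟩ := (hPmem b).1 hb
    rw [← G.card_neighborFinset_eq_degree]
    refine Finset.card_le_one.2 ?_
    have huniq : ∀ y ∈ G.neighborFinset b, y = u := by
      intro y hy
      rw [G.mem_neighborFinset] at hy
      by_contra hyu
      have hyv : y ≠ v := fun h => hnvb (h ▸ hy).symm
      exact key u b y hvu hub hbv hy hyv hyu
    intro y1 h1 y2 h2
    rw [huniq y1 h1, huniq y2 h2]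
  -- a neighbour of v has at most one neighbour in D
  have F3 : ∀ x ∈ D, (D.filter (fun y => G.Adj x y)).card ≤ 1 := by
    intro x hx
    refine Finset.card_le_one.2 ?_
    intro y1 h1 y2 h2
    rw [Finset.mem_filter] at h1 h2
    by_contra hne
    exact key y1 x y2 ((hDmem y1).1 h1.1) h1.2.symm ((hDmem x).1 hx).ne'
      h2.2 ((hDmem y2).1 h2.1).ne' (Ne.symm hne)
  -- degree bound in D
  have F4 : ∀ x ∈ D, G.degree x ≤ 2 + (P.filter (fun b => G.Adj x b)).card := by
    intro x hx
    rw [← G.card_neighborFinset_eq_degree]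
    have hsub : G.neighborFinset x ⊆
        insert v ((D.filter (fun y => G.Adj x y)) ∪ (P.filter (fun b => G.Adj x b))) := by
      intro y hy
      rw [G.mem_neighborFinset] at hy
      by_cases hyv : y = v
      · rw [hyv]; exact Finset.mem_insert_self _ _
      by_cases hyD : G.Adj v y
      · exact Finset.mem_insert_of_mem (Finset.mem_union_left _
          (Finset.mem_filter.2 ⟨(hDmem y).2 hyD, hy⟩))
      · refine Finset.mem_insert_of_mem (Finset.mem_union_right _
          (Finset.mem_filter.2 ⟨(hPmem y).2 ⟨hyD, hyv, x, (hDmem x).1 hx, hy⟩, hy⟩))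
    calc (G.neighborFinset x).card ≤ _ := Finset.card_le_card hsub
      _ ≤ ((D.filter (fun y => G.Adj x y)) ∪ (P.filter (fun b => G.Adj x b))).card + 1 :=
          Finset.card_insert_le _ _
      _ ≤ ((D.filter (fun y => G.Adj x y)).card + (P.filter (fun b => G.Adj x b)).card) + 1 :=
          by gcongr; exact Finset.card_union_le _ _
      _ ≤ 2 + (P.filter (fun b => G.Adj x b)).card := by
          have := F3 x hx; omega
  -- double counting D-P edges
  have F5 : ∑ x ∈ D, (P.filter (fun b => G.Adj x b)).card ≤ P.card := by
    have h1 : ∀ x ∈ D, (P.filter (fun b => G.Adj x b)).card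
        = ∑ b ∈ P, if G.Adj x b then 1 else 0 := by
      intro x _; rw [Finset.card_filter]
    rw [Finset.sum_congr rfl h1, Finset.sum_comm]
    have h2 : ∀ b ∈ P, (∑ x ∈ D, if G.Adj x b then 1 else 0) ≤ 1 := by
      intro b hb
      have : (∑ x ∈ D, if G.Adj x b then 1 else 0) = (D.filter (fun x => G.Adj x b)).card := by
        rw [Finset.card_filter]
      rw [this]
      have hsub : D.filter (fun x => G.Adj x b) ⊆ G.neighborFinset b := by
        intro x hx
        rw [G.mem_neighborFinset]
        exact ((Finset.mem_filter.1 hx).2).symm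
      calc (D.filter (fun x => G.Adj x b)).card ≤ (G.neighborFinset b).card :=
            Finset.card_le_card hsub
        _ = G.degree b := G.card_neighborFinset_eq_degree b
        _ ≤ 1 := F2 b hb
    calc (∑ b ∈ P, ∑ x ∈ D, if G.Adj x b then 1 else 0) ≤ ∑ b ∈ P, 1 :=
          Finset.sum_le_sum h2
      _ = P.card := by simp
  -- cardinalities
  have hvDP : v ∉ D ∪ P := by rw [Finset.mem_union]; tauto
  have hWcard : W.card = 1 + D.card + P.card := by
    rw [hW, Finset.card_insert_of_notMem hvDP, Finset.card_union_of_disjoint hDP]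
    omega
  have hdcard : D.card = G.degree v := G.card_neighborFinset_eq_degree v
  set c := W.card with hc
  have hc6 : 6 ≤ c := by
    have : n - 1 ≤ D.card := by rw [hdcard]; exact hdeg
    omega
  -- the graph G1: edges of G inside W
  set G1 : SimpleGraph (Fin p) := {
    Adj := fun x y => G.Adj x y ∧ x ∈ W ∧ y ∈ W
    symm := ⟨fun x y ⟨h1, h2, h3⟩ => ⟨h1.symm, h3, h2⟩⟩
    loopless := ⟨fun x ⟨h1, _⟩ => G.irrefl h1⟩ } with hG1
  letI : DecidableRel G1.Adj := Classical.decRel _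
  have hG1adj : ∀ x y, G1.Adj x y ↔ (G.Adj x y ∧ x ∈ W ∧ y ∈ W) := fun _ _ => Iff.rfl
  have hG1deg0 : ∀ x, x ∉ W → G1.degree x = 0 := by
    intro x hx
    rw [← G1.card_neighborFinset_eq_degree, Finset.card_eq_zero,
      Finset.eq_empty_iff_forall_notMem]
    intro y hy
    rw [G1.mem_neighborFinset, hG1adj] at hy
    exact hx hy.2.1
  have hG1degle : ∀ x, G1.degree x ≤ G.degree x := by
    intro x
    rw [← G1.card_neighborFinset_eq_degree, ← G.card_neighborFinset_eq_degree]
    apply Finset.card_le_card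
    intro y hy
    rw [G1.mem_neighborFinset, hG1adj] at hy
    rw [G.mem_neighborFinset]
    exact hy.1
  have hG1degv : G1.degree v ≤ D.card := by
    rw [← G1.card_neighborFinset_eq_degree]
    apply Finset.card_le_card
    intro y hy
    rw [G1.mem_neighborFinset, hG1adj] at hy
    exact (hDmem y).2 hy.1
  have hsum1 : 2 * G1.edgeFinset.card ≤ 3 * (c - 1) := by
    have e1 : ∑ x : Fin p, G1.degree x = 2 * G1.edgeFinset.card :=
      G1.sum_degrees_eq_twice_card_edges
    have e2 : ∑ x ∈ W, G1.degree x = ∑ x : Fin p, G1.degree x :=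
      Finset.sum_subset (Finset.subset_univ W) (fun x _ hx => hG1deg0 x hx)
    have e3 : ∑ x ∈ W, G1.degree x ≤ 3 * D.card + 2 * P.card := by
      rw [hW, Finset.sum_insert hvDP, Finset.sum_union hDP]
      have t2 : ∑ x ∈ D, G1.degree x ≤ 2 * D.card + P.card := by
        calc ∑ x ∈ D, G1.degree x
            ≤ ∑ x ∈ D, (2 + (P.filter (fun b => G.Adj x b)).card) :=
              Finset.sum_le_sum (fun x hx => le_trans (hG1degle x) (F4 x hx))
          _ = 2 * D.card + ∑ x ∈ D, (P.filter (fun b => G.Adj x b)).card := by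
              rw [Finset.sum_add_distrib, Finset.sum_const, smul_eq_mul, mul_comm]
          _ ≤ 2 * D.card + P.card := by have := F5; omega
      have t3 : ∑ x ∈ P, G1.degree x ≤ P.card := by
        calc ∑ x ∈ P, G1.degree x ≤ ∑ _x ∈ P, 1 :=
              Finset.sum_le_sum (fun x hx => le_trans (hG1degle x) (F2 x hx))
          _ = P.card := by simp
      have t1 : G1.degree v ≤ D.card := hG1degv
      omega
    omega
  -- index function on W
  set ι : Fin p → ℕ :=
    fun x => if hx : x ∈ W then ((W.equivFin ⟨x, hx⟩ : Fin W.card) : ℕ) else 0 with hι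
  have hιlt : ∀ x ∈ W, ι x < c := by
    intro x hx
    simp only [hι, dif_pos hx]
    exact (W.equivFin ⟨x, hx⟩).isLt
  have hιinj : ∀ x ∈ W, ∀ y ∈ W, ι x = ι y → x = y := by
    intro x hx y hy h
    simp only [hι, dif_pos hx, dif_pos hy] at h
    have := W.equivFin.injective (Fin.ext h)
    exact congrArg Subtype.val this
  have hιimg : W.image ι = Finset.range c := by
    apply Finset.eq_of_subset_of_card_le
    · intro j hj
      rw [Finset.mem_image] at hj
      obtain ⟨x, hx, rfl⟩ := hj
      rw [Finset.mem_range]; exact hιlt x hx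
    · rw [Finset.card_range, Finset.card_image_of_injOn (fun x hx y hy => hιinj x hx y hy)]
  set Nsize : ℕ → ℕ := fun t => ((Finset.range c).filter (fun j => j / 5 = t)).card with hNs
  have hNsle : ∀ t, Nsize t ≤ 5 := by
    intro t
    have hsub : (Finset.range c).filter (fun j => j / 5 = t) ⊆ Finset.Ico (5*t) (5*t+5) := by
      intro j hj
      rw [Finset.mem_filter, Finset.mem_range] at hj
      rw [Finset.mem_Ico]; omega
    calc Nsize t ≤ (Finset.Ico (5*t) (5*t+5)).card := Finset.card_le_card hsub
      _ = 5 := by rw [Nat.card_Ico]; omega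
  have hcellcard : ∀ t, (W.filter (fun y => ι y / 5 = t)).card = Nsize t := by
    intro t
    have h1 : (W.filter (fun y => ι y / 5 = t)).image ι
        = (Finset.range c).filter (fun j => j / 5 = t) := by
      ext j
      rw [Finset.mem_image, Finset.mem_filter, ← hιimg, Finset.mem_image]
      constructor
      · rintro ⟨x, hx, rfl⟩
        rw [Finset.mem_filter] at hx
        exact ⟨⟨x, hx.1, rfl⟩, hx.2⟩
      · rintro ⟨⟨x, hx, rfl⟩, hj⟩
        exact ⟨x, Finset.mem_filter.2 ⟨hx, hj⟩, rfl⟩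
    have h2 : ((W.filter (fun y => ι y / 5 = t)).image ι).card
        = (W.filter (fun y => ι y / 5 = t)).card :=
      Finset.card_image_of_injOn (fun x hx y hy h =>
        hιinj x (Finset.mem_of_mem_filter _ hx) y (Finset.mem_of_mem_filter _ hy) h)
    calc (W.filter (fun y => ι y / 5 = t)).card
        = ((W.filter (fun y => ι y / 5 = t)).image ι).card := h2.symm
      _ = ((Finset.range c).filter (fun j => j / 5 = t)).card := by rw [h1]
      _ = Nsize t := rfl
  -- the clique-cells graph K on W
  set K : SimpleGraph (Fin p) := {
    Adj := fun x y => x ≠ y ∧ x ∈ W ∧ y ∈ W ∧ ι x / 5 = ι y / 5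
    symm := ⟨fun x y ⟨h1, h2, h3, h4⟩ => ⟨h1.symm, h3, h2, h4.symm⟩⟩
    loopless := ⟨fun x ⟨h1, _⟩ => h1 rfl⟩ } with hK
  letI : DecidableRel K.Adj := Classical.decRel _
  have hKadj : ∀ x y, K.Adj x y ↔ (x ≠ y ∧ x ∈ W ∧ y ∈ W ∧ ι x / 5 = ι y / 5) :=
    fun _ _ => Iff.rfl
  have hKdeg : ∀ x ∈ W, K.degree x = Nsize (ι x / 5) - 1 := by
    intro x hx
    rw [← K.card_neighborFinset_eq_degree, ← hcellcard (ι x / 5)]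
    have hNB : K.neighborFinset x = (W.filter (fun y => ι y / 5 = ι x / 5)).erase x := by
      ext y
      rw [K.mem_neighborFinset, Finset.mem_erase, Finset.mem_filter, hKadj]
      constructor
      · rintro ⟨h1, _, h3, h4⟩
        exact ⟨fun h => h1 h.symm, h3, h4.symm⟩
      · rintro ⟨h1, h2, h3⟩
        exact ⟨fun h => h1 h.symm, hx, h2, h3.symm⟩
    rw [hNB, Finset.card_erase_of_mem
      (show x ∈ W.filter (fun y => ι y / 5 = ι x / 5) from Finset.mem_filter.2 ⟨hx, rfl⟩)]
  have hKdeg0 : ∀ x, x ∉ W → K.degree x = 0 := by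
    intro x hx
    rw [← K.card_neighborFinset_eq_degree, Finset.card_eq_zero,
      Finset.eq_empty_iff_forall_notMem]
    intro y hy
    rw [K.mem_neighborFinset, hKadj] at hy
    exact hx hy.2.1
  have hKsum : 3 * c - 2 ≤ 2 * K.edgeFinset.card := by
    have e1 : ∑ x : Fin p, K.degree x = 2 * K.edgeFinset.card :=
      K.sum_degrees_eq_twice_card_edges
    have e2 : ∑ x ∈ W, K.degree x = ∑ x : Fin p, K.degree x :=
      Finset.sum_subset (Finset.subset_univ W) (fun x _ hx => hKdeg0 x hx)
    have e3 : ∑ x ∈ W, K.degree x = ∑ j ∈ Finset.range c, (Nsize (j / 5) - 1) := by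
      rw [← hιimg, Finset.sum_image (fun x hx y hy => hιinj x hx y hy)]
      exact Finset.sum_congr rfl (fun x hx => hKdeg x hx)
    set q := c / 5 with hq
    set r := c % 5 with hr
    have hsize_full : ∀ t, 5*t+5 ≤ c → Nsize t = 5 := by
      intro t ht
      have heq : (Finset.range c).filter (fun j => j / 5 = t) = Finset.Ico (5*t) (5*t+5) := by
        ext j
        rw [Finset.mem_filter, Finset.mem_range, Finset.mem_Ico]
        omega
      rw [hNs]
      simp only []
      rw [heq, Nat.card_Ico]
      omega
    have hsize_part : Nsize q = r := by
      have heq : (Finset.range c).filter (fun j => j / 5 = q) = Finset.Ico (5*q) c := by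
        ext j
        rw [Finset.mem_filter, Finset.mem_range, Finset.mem_Ico]
        omega
      rw [hNs]
      simp only []
      rw [heq, Nat.card_Ico]
      omega
    have e4 : ∑ j ∈ Finset.range c, (Nsize (j / 5) - 1)
        = 4 * (5 * q) + (c - 5 * q) * (r - 1) := by
      rw [Finset.range_eq_Ico, ← Finset.sum_Ico_consecutive _ (Nat.zero_le (5*q)) (by omega)]
      have p1' : ∀ j ∈ Finset.Ico 0 (5*q), Nsize (j / 5) - 1 = 4 := by
        intro j hj
        rw [Finset.mem_Ico] at hj
        rw [hsize_full (j/5) (by omega)]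
      have p2' : ∀ j ∈ Finset.Ico (5*q) c, Nsize (j / 5) - 1 = r - 1 := by
        intro j hj
        rw [Finset.mem_Ico] at hj
        have hj5 : j / 5 = q := by omega
        rw [hj5, hsize_part]
      have p1 : ∑ j ∈ Finset.Ico 0 (5*q), (Nsize (j / 5) - 1) = 4 * (5 * q) := by
        rw [Finset.sum_congr rfl p1', Finset.sum_const, Nat.card_Ico, smul_eq_mul]
        omega
      have p2 : ∑ j ∈ Finset.Ico (5*q) c, (Nsize (j / 5) - 1) = (c - 5*q) * (r - 1) := by
        rw [Finset.sum_congr rfl p2', Finset.sum_const, Nat.card_Ico, smul_eq_mul]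
      rw [p1, p2]
    have hr5 : r = 0 ∨ r = 1 ∨ r = 2 ∨ r = 3 ∨ r = 4 := by omega
    have hcqr : c = 5 * q + r := by omega
    have hq1 : 1 ≤ q := by omega
    rw [← e1, ← e2, e3, e4]
    rcases hr5 with h | h | h | h | h <;> rw [h] <;> omega
  have hKe_gt : G1.edgeFinset.card < K.edgeFinset.card := by omega
  -- the graph G2: edges of G outside W
  set G2 : SimpleGraph (Fin p) := {
    Adj := fun x y => G.Adj x y ∧ x ∉ W ∧ y ∉ W
    symm := ⟨fun x y ⟨h1, h2, h3⟩ => ⟨h1.symm, h3, h2⟩⟩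
    loopless := ⟨fun x ⟨h1, _⟩ => G.irrefl h1⟩ } with hG2
  letI : DecidableRel G2.Adj := Classical.decRel _
  have hG2adj : ∀ x y, G2.Adj x y ↔ (G.Adj x y ∧ x ∉ W ∧ y ∉ W) := fun _ _ => Iff.rfl
  have hcardG : G.edgeFinset.card = G1.edgeFinset.card + G2.edgeFinset.card := by
    have hdisj : Disjoint G1.edgeFinset G2.edgeFinset := by
      rw [Finset.disjoint_left]
      intro e he1 he2
      induction e with
      | h x y =>
        rw [mem_edgeFinset, mem_edgeSet] at he1 he2
        exact he2.2.1 he1.2.1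
    have hunion : G.edgeFinset = G1.edgeFinset ∪ G2.edgeFinset := by
      ext e
      induction e with
      | h x y =>
        simp only [Finset.mem_union, mem_edgeFinset, mem_edgeSet, hG1adj, hG2adj]
        constructor
        · intro h
          by_cases hx : x ∈ W
          · exact Or.inl ⟨h, hx, F1 x hx y h⟩
          · exact Or.inr ⟨h, hx, fun hy => hx (F1 y hy x h.symm)⟩
        · rintro (⟨h, _⟩ | ⟨h, _⟩) <;> exact h
    rw [hunion, Finset.card_union_of_disjoint hdisj]
  -- the new graph H
  set H : SimpleGraph (Fin p) := G2 ⊔ K with hH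
  letI : DecidableRel H.Adj := Classical.decRel _
  have hHadj : ∀ x y, H.Adj x y ↔ (G2.Adj x y ∨ K.Adj x y) := fun x y => sup_adj G2 K x y
  have hcardH : H.edgeFinset.card = G2.edgeFinset.card + K.edgeFinset.card := by
    have hdisj : Disjoint G2.edgeFinset K.edgeFinset := by
      rw [Finset.disjoint_left]
      intro e he1 he2
      induction e with
      | h x y =>
        rw [mem_edgeFinset, mem_edgeSet] at he1 he2
        exact ((hG2adj x y).1 he1).2.1 ((hKadj x y).1 he2).2.1
    have hunion : H.edgeFinset = G2.edgeFinset ∪ K.edgeFinset := by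
      ext e
      induction e with
      | h x y =>
        simp only [Finset.mem_union, mem_edgeFinset, mem_edgeSet, hHadj]
    rw [hunion, Finset.card_union_of_disjoint hdisj]
  -- H contains no copy of TnStar
  have hHfree : ¬ ContainsCopy H (TnStar n) := by
    rintro ⟨f, hf⟩
    set Inv : Fin p → Fin p → Prop := fun x y =>
      (x ∉ W ∧ y ∉ W) ∨ (x ∈ W ∧ y ∈ W ∧ ι x / 5 = ι y / 5) with hInv
    have hInvAdj : ∀ x y, H.Adj x y → Inv x y := by
      intro x y h
      rcases (hHadj x y).1 h with h | h
      · exact Or.inl ⟨((hG2adj x y).1 h).2.1, ((hG2adj x y).1 h).2.2⟩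
      · exact Or.inr ⟨((hKadj x y).1 h).2.1, ((hKadj x y).1 h).2.2.1, ((hKadj x y).1 h).2.2.2⟩
    have hInvRefl : ∀ x, Inv x x := by
      intro x
      by_cases hx : x ∈ W
      · exact Or.inr ⟨hx, hx, rfl⟩
      · exact Or.inl ⟨hx, hx⟩
    have hInvTrans : ∀ x y z, Inv x y → Inv y z → Inv x z := by
      intro x y z h1 h2
      rcases h1 with ⟨h1a, h1b⟩ | ⟨h1a, h1b, h1c⟩
      · rcases h2 with ⟨h2a, h2b⟩ | ⟨h2a, h2b, h2c⟩
        · exact Or.inl ⟨h1a, h2b⟩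
        · exact absurd h2a h1b
      · rcases h2 with ⟨h2a, h2b⟩ | ⟨h2a, h2b, h2c⟩
        · exact absurd h1b h2a
        · exact Or.inr ⟨h1a, h2b, h1c.trans h2c⟩
    have hadj0 : ∀ i : Fin n, 1 ≤ i.val → i.val ≤ n - 3 →
        (TnStar n).Adj ⟨0, by omega⟩ i := by
      intro i h1 h2
      rw [TnStar, fromRel_adj]
      exact ⟨Fin.ne_of_val_ne (by show (0:ℕ) ≠ i.val; omega),
        Or.inl (Or.inl ⟨rfl, h1, h2⟩)⟩
    have hadj1 : (TnStar n).Adj ⟨n-3, by omega⟩ ⟨n-2, by omega⟩ := by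
      rw [TnStar, fromRel_adj]
      exact ⟨Fin.ne_of_val_ne (by show n - 3 ≠ n - 2; omega),
        Or.inl (Or.inr (Or.inl ⟨rfl, rfl⟩))⟩
    have hadj2 : (TnStar n).Adj ⟨n-2, by omega⟩ ⟨n-1, by omega⟩ := by
      rw [TnStar, fromRel_adj]
      exact ⟨Fin.ne_of_val_ne (by show n - 2 ≠ n - 1; omega),
        Or.inl (Or.inr (Or.inr ⟨rfl, rfl⟩))⟩
    have hchain : ∀ i : Fin n, Inv (f ⟨0, by omega⟩) (f i) := by
      intro i
      have hlt := i.isLt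
      rcases (by omega : i.val = 0 ∨ (1 ≤ i.val ∧ i.val ≤ n - 3) ∨ i.val = n - 2 ∨
          i.val = n - 1) with h | h | h | h
      · have hi : i = ⟨0, by omega⟩ := Fin.ext h
        rw [hi]; exact hInvRefl _
      · exact hInvAdj _ _ (hf _ _ (hadj0 i h.1 h.2))
      · have h3 : Inv (f ⟨0, by omega⟩) (f ⟨n-3, by omega⟩) :=
          hInvAdj _ _ (hf _ _ (hadj0 ⟨n-3, by omega⟩ (by show (1:ℕ) ≤ n - 3; omega) (by show n - 3 ≤ n - 3; omega)))
        have h4 := hInvAdj _ _ (hf _ _ hadj1)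
        have hi : i = ⟨n-2, by omega⟩ := Fin.ext h
        rw [hi]
        exact hInvTrans _ _ _ h3 h4
      · have h3 : Inv (f ⟨0, by omega⟩) (f ⟨n-3, by omega⟩) :=
          hInvAdj _ _ (hf _ _ (hadj0 ⟨n-3, by omega⟩ (by show (1:ℕ) ≤ n - 3; omega) (by show n - 3 ≤ n - 3; omega)))
        have h4 := hInvAdj _ _ (hf _ _ hadj1)
        have h5 := hInvAdj _ _ (hf _ _ hadj2)
        have hi : i = ⟨n-1, by omega⟩ := Fin.ext h
        rw [hi]
        exact hInvTrans _ _ _ (hInvTrans _ _ _ h3 h4) h5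
    by_cases h0 : f ⟨0, by omega⟩ ∈ W
    · set t0 := ι (f ⟨0, (by omega : 0 < n)⟩) / 5 with ht0
      have hall : ∀ i, f i ∈ W.filter (fun y => ι y / 5 = t0) := by
        intro i
        rcases hchain i with h | h
        · exact absurd h0 h.1
        · exact Finset.mem_filter.2 ⟨h.2.1, h.2.2.symm⟩
      have himg : (Finset.univ.image f : Finset (Fin p)) ⊆
          W.filter (fun y => ι y / 5 = t0) := by
        intro x hx
        rw [Finset.mem_image] at hx
        obtain ⟨i, _, rfl⟩ := hx
        exact hall i
      have hcard1 : n ≤ 5 := by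
        calc n = (Finset.univ.image f : Finset (Fin p)).card := by
              rw [Finset.card_image_of_injective _ f.injective, Finset.card_univ,
                Fintype.card_fin]
          _ ≤ (W.filter (fun y => ι y / 5 = t0)).card := Finset.card_le_card himg
          _ = Nsize t0 := hcellcard t0
          _ ≤ 5 := hNsle t0
      omega
    · have hout : ∀ i, f i ∉ W := by
        intro i
        rcases hchain i with h | h
        · exact h.2
        · exact absurd h.1 h0
      apply hfree
      refine ⟨f, fun a b hab2 => ?_⟩
      rcases (hHadj _ _).1 (hf a b hab2) with h | h
      · exact ((hG2adj _ _).1 h).1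
      · exact absurd ((hKadj _ _).1 h).2.1 (hout a)
  -- conclusion
  refine ⟨H, hHfree, ?_⟩
  have hhe : ∀ (G0 : SimpleGraph (Fin p)) (_ : DecidableRel G0.Adj), True := fun _ _ => trivial
  have n1 : Nat.card G.edgeSet = G.edgeFinset.card := by
    rw [Nat.card_eq_fintype_card, ← Set.toFinset_card]
    exact congrArg Finset.card (Set.toFinset_congr rfl)
  have n2 : Nat.card H.edgeSet = H.edgeFinset.card := by
    rw [Nat.card_eq_fintype_card, ← Set.toFinset_card]
    exact congrArg Finset.card (Set.toFinset_congr rfl)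
  rw [n1, n2]
  omega

theorem stmt4 (p n : ℕ) (hn : 6 ≤ n) (hp : n ≤ p) (G : SimpleGraph (Fin p))
    (hfree : ¬ ContainsCopy G (TnStar n))
    (hext : Nat.card G.edgeSet = exNum p (TnStar n)) :
    ∀ v, Nat.card (G.neighborSet v) ≤ n - 2 := by
  classical
  letI : DecidableRel G.Adj := Classical.decRel _
  intro v
  by_contra h
  push_neg at h
  have hdegv : Nat.card (G.neighborSet v) = G.degree v := by
    rw [Nat.card_eq_fintype_card, G.card_neighborSet_eq_degree]
  rw [hdegv] at h
  have hdeg : n - 1 ≤ G.degree v := by omega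
  obtain ⟨H, hHfree, hHgt⟩ := exists_better hn G hfree v hdeg
  have hmem : Nat.card H.edgeSet ∈ {m : ℕ | ∃ G0 : SimpleGraph (Fin p),
      ¬ ContainsCopy G0 (TnStar n) ∧ Nat.card G0.edgeSet = m} := ⟨H, hHfree, rfl⟩
  have hbdd : BddAbove {m : ℕ | ∃ G0 : SimpleGraph (Fin p),
      ¬ ContainsCopy G0 (TnStar n) ∧ Nat.card G0.edgeSet = m} := by
    refine ⟨Nat.card (Sym2 (Fin p)), ?_⟩
    rintro m ⟨G0, _, rfl⟩
    have h2 := Nat.card_mono (Set.finite_univ) (Set.subset_univ G0.edgeSet)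
    rwa [Nat.card_univ] at h2
  have hle : Nat.card H.edgeSet ≤ exNum p (TnStar n) := le_csSup hbdd hmem
  rw [← hext] at hle
  omega
end

section
/- Let p ≥ n ≥ 5 and let G be an extremal T_n*-free graph of order p. If v_0 ∈ V(G) has degree n−2, then the component of G containing v_0 is isomorphic to K_{n−1}. -/
open SimpleGraph

lemma arith_key (c q' r : ℕ) (hc : 2 ≤ c) (hrc : r ≤ c + 1) :
    c * c + (c + 2) + 2 * ((c + 2) * q' + r) + 2 ≤ (q' + 1) * (c + 2) * (c + 1) + r * (r - 1) := by
  have h1 : 2 * q' ≤ (c * c + c) * q' :=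
    Nat.mul_le_mul_right q' (by nlinarith)
  rcases Nat.eq_zero_or_pos r with rfl | hrpos
  · nlinarith
  · obtain ⟨r', rfl⟩ : ∃ r', r = r' + 1 := ⟨r - 1, by omega⟩
    have e2 : (r' + 1) - 1 = r' := rfl
    rw [e2]
    have h2 : r' ≤ r' * r' := by
      rcases Nat.eq_zero_or_pos r' with rfl | h
      · simp
      · exact Nat.le_mul_of_pos_left r' h
    nlinarith

lemma le_exNum {p : ℕ} {W : Type*} (H : SimpleGraph W) (G : SimpleGraph (Fin p))
    (h : ¬ ContainsCopy G H) : Nat.card G.edgeSet ≤ exNum p H := by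
  apply le_csSup
  · refine ⟨Nat.card (Sym2 (Fin p)), ?_⟩
    rintro m ⟨G', -, rfl⟩
    exact Nat.card_le_card_of_injective (Subtype.val) Subtype.val_injective
  · exact ⟨G, h, rfl⟩

lemma confined {V W : Type*} {G : SimpleGraph V} {H : SimpleGraph W} (f : W → V)
    (hf : ∀ a b, H.Adj a b → G.Adj (f a) (f b)) (T : Set V)
    (hT : ∀ a b, G.Adj a b → (a ∈ T ↔ b ∈ T)) {a b : W} (hr : H.Reachable a b) :
    f a ∈ T ↔ f b ∈ T := by
  obtain ⟨w⟩ := hr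
  induction w with
  | nil => rfl
  | cons h w ih => exact (hT _ _ (hf _ _ h)).trans ih

lemma tnstar_reachable {n : ℕ} (hn : 5 ≤ n) (i : Fin n) :
    (TnStar n).Reachable ⟨0, by omega⟩ i := by
  have adj1 : ∀ j : Fin n, 1 ≤ j.val → j.val ≤ n - 3 →
      (TnStar n).Adj ⟨0, by omega⟩ j := by
    intro j h1 h2
    rw [TnStar, fromRel_adj]
    refine ⟨?_, Or.inl (Or.inl ⟨rfl, h1, h2⟩)⟩
    intro h; apply absurd (congrArg Fin.val h); simp; omega
  have adj2 : (TnStar n).Adj ⟨n-3, by omega⟩ ⟨n-2, by omega⟩ := by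
    rw [TnStar, fromRel_adj]
    refine ⟨?_, Or.inl (Or.inr (Or.inl ⟨rfl, rfl⟩))⟩
    intro h; apply absurd (congrArg Fin.val h); simp; omega
  have adj3 : (TnStar n).Adj ⟨n-2, by omega⟩ ⟨n-1, by omega⟩ := by
    rw [TnStar, fromRel_adj]
    refine ⟨?_, Or.inl (Or.inr (Or.inr ⟨rfl, rfl⟩))⟩
    intro h; apply absurd (congrArg Fin.val h); simp; omega
  have hi := i.isLt
  rcases Nat.lt_or_ge i.val 1 with h0 | h1
  · have : i = ⟨0, by omega⟩ := Fin.ext (by simp; omega)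
    rw [this]
  rcases le_or_gt i.val (n-3) with h3 | h3
  · exact (adj1 i h1 h3).reachable
  rcases Nat.lt_or_ge i.val (n-1) with h2 | h2
  · have : i = ⟨n-2, by omega⟩ := Fin.ext (by simp; omega)
    rw [this]
    exact ((adj1 ⟨n-3, by omega⟩ (by simp; omega) (by simp)).reachable).trans adj2.reachable
  · have : i = ⟨n-1, by omega⟩ := Fin.ext (by simp; omega)
    rw [this]
    exact (((adj1 ⟨n-3, by omega⟩ (by simp; omega) (by simp)).reachable).trans
      adj2.reachable).trans adj3.reachable

lemma copy_builder {n p : ℕ} (hn : 5 ≤ n) (G : SimpleGraph (Fin p))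
    (c y z : Fin p) (a : ℕ → Fin p)
    (hainj : ∀ i j, 1 ≤ i → i ≤ n-3 → 1 ≤ j → j ≤ n-3 → a i = a j → i = j)
    (hca : ∀ j, 1 ≤ j → j ≤ n-3 → G.Adj c (a j))
    (hay : G.Adj (a (n-3)) y) (hyz : G.Adj y z)
    (hcy : c ≠ y) (hcz : c ≠ z)
    (hya : ∀ j, 1 ≤ j → j ≤ n-3 → y ≠ a j)
    (hza : ∀ j, 1 ≤ j → j ≤ n-3 → z ≠ a j) :
    ContainsCopy G (TnStar n) := by
  have hyz' : y ≠ z := hyz.ne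
  have hc : ∀ j, 1 ≤ j → j ≤ n-3 → c ≠ a j := fun j h1 h2 => (hca j h1 h2).ne
  set f : Fin n → Fin p := fun i =>
    if i.val = 0 then c else if i.val ≤ n-3 then a i.val else if i.val = n-2 then y else z
    with hf
  have fval : ∀ i : Fin n,
      (i.val = 0 ∧ f i = c) ∨ (1 ≤ i.val ∧ i.val ≤ n-3 ∧ f i = a i.val) ∨
      (i.val = n-2 ∧ f i = y) ∨ (i.val = n-1 ∧ f i = z) := by
    intro i
    have hi := i.isLt
    by_cases h0 : i.val = 0
    · exact Or.inl ⟨h0, by simp [hf, h0]⟩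
    by_cases h1 : i.val ≤ n-3
    · refine Or.inr (Or.inl ⟨by omega, h1, ?_⟩)
      simp only [hf]; rw [if_neg h0, if_pos h1]
    by_cases h2 : i.val = n-2
    · refine Or.inr (Or.inr (Or.inl ⟨h2, ?_⟩))
      simp only [hf]; rw [if_neg h0, if_neg h1, if_pos h2]
    · refine Or.inr (Or.inr (Or.inr ⟨by omega, ?_⟩))
      simp only [hf]; rw [if_neg h0, if_neg h1, if_neg h2]
  have finj : Function.Injective f := by
    intro i j hij
    rcases fval i with ⟨hi, ei⟩ | ⟨hi1, hi2, ei⟩ | ⟨hi, ei⟩ | ⟨hi, ei⟩ <;>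
      rcases fval j with ⟨hj, ej⟩ | ⟨hj1, hj2, ej⟩ | ⟨hj, ej⟩ | ⟨hj, ej⟩ <;>
      rw [ei, ej] at hij <;> first
        | (exact Fin.ext (by omega))
        | (exact absurd hij (by first
            | exact hc _ hj1 hj2
            | exact Ne.symm (hc _ hi1 hi2)
            | exact hcy | exact Ne.symm hcy | exact hcz | exact Ne.symm hcz
            | exact Ne.symm (hya _ hi1 hi2) | exact hya _ hj1 hj2
            | exact Ne.symm (hza _ hi1 hi2) | exact hza _ hj1 hj2
            | exact hyz' | exact Ne.symm hyz'))
        | (exact Fin.ext (by omega : i.val = j.val) )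
        | (exact Fin.ext (hainj _ _ hi1 hi2 hj1 hj2 hij))
  refine ⟨⟨f, finj⟩, ?_⟩
  intro i j hadj
  rw [TnStar, fromRel_adj] at hadj
  obtain ⟨hne, hrel⟩ := hadj
  simp only [Function.Embedding.coeFn_mk]
  have main : ∀ i j : Fin n,
      ((i.val = 0 ∧ 1 ≤ j.val ∧ j.val ≤ n - 3) ∨ (i.val = n - 3 ∧ j.val = n - 2) ∨
        (i.val = n - 2 ∧ j.val = n - 1)) → G.Adj (f i) (f j) := by
    rintro i j (⟨h1, h2, h3⟩ | ⟨h1, h2⟩ | ⟨h1, h2⟩)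
    · have ei : f i = c := by simp [hf, h1]
      have ej : f j = a j.val := by simp only [hf]; rw [if_neg (by omega), if_pos h3]
      rw [ei, ej]; exact hca _ h2 h3
    · have ei : f i = a (n-3) := by
        simp only [hf]; rw [if_neg (by omega), if_pos (by omega), h1]
      have ej : f j = y := by
        simp only [hf]; rw [if_neg (by omega), if_neg (by omega), if_pos h2]
      rw [ei, ej]; exact hay
    · have ei : f i = y := by
        simp only [hf]; rw [if_neg (by omega), if_neg (by omega), if_pos h1]
      have ej : f j = z := by
        simp only [hf]; rw [if_neg (by omega), if_neg (by omega), if_neg (by omega)]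
      rw [ei, ej]; exact hyz
  rcases hrel with h | h
  · exact main i j h
  · exact (main j i h).symm

theorem stmt5 (p n : ℕ) (hn : 5 ≤ n) (hp : n ≤ p) (G : SimpleGraph (Fin p))
    (hfree : ¬ ContainsCopy G (TnStar n))
    (hext : Nat.card G.edgeSet = exNum p (TnStar n))
    (v₀ : Fin p) (hdeg : Nat.card (G.neighborSet v₀) = n - 2) :
    Nonempty (G.induce (G.connectedComponentMk v₀).supp ≃g
      (⊤ : SimpleGraph (Fin (n - 1)))) := by
  classical
  set S : Set (Fin p) := (G.connectedComponentMk v₀).supp with hS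
  have hSclosed : ∀ a b : Fin p, G.Adj a b → a ∈ S → b ∈ S := by
    intro a b hab ha
    rw [hS, ConnectedComponent.mem_supp_iff] at ha ⊢
    rw [← ha]
    exact ConnectedComponent.eq.2 hab.symm.reachable
  have hv₀S : v₀ ∈ S := by
    rw [hS, ConnectedComponent.mem_supp_iff]
  set NF : Finset (Fin p) := G.neighborFinset v₀ with hNF
  have hNFcard : NF.card = n - 2 := by
    rw [hNF, ← hdeg, neighborFinset_def, Set.toFinset_card, Nat.card_eq_fintype_card]
  have hv₀NF : v₀ ∉ NF := by simp [hNF]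
  set BF : Finset (Fin p) := insert v₀ NF with hBF
  have hBcard : BF.card = n - 1 := by
    rw [hBF, Finset.card_insert_of_notMem hv₀NF, hNFcard]; omega
  have hNS : ∀ u ∈ NF, u ∈ S := by
    intro u hu
    exact hSclosed v₀ u (by rwa [hNF, mem_neighborFinset] at hu) hv₀S
  have hBS : ∀ x ∈ BF, x ∈ S := by
    intro x hx
    rcases Finset.mem_insert.1 hx with rfl | hx
    · exact hv₀S
    · exact hNS x hx
  -- copy-building machinery: any configuration gives False
  have buildCopy : ∀ x u₀ : Fin p, x ∈ NF → u₀ ∈ NF → x ≠ u₀ →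
      ∀ y w : Fin p, G.Adj x y → G.Adj y w → y ∉ NF.erase u₀ → w ∉ NF.erase u₀ →
      v₀ ≠ y → v₀ ≠ w → False := by
    intro x u₀ hx hu₀ hxu₀ y w hxy hyw hyE hwE hv₀y hv₀w
    apply hfree
    have hxE : x ∈ NF.erase u₀ := Finset.mem_erase.2 ⟨hxu₀, hx⟩
    set E : Finset (Fin p) := (NF.erase u₀).erase x with hE
    have hEcard : E.card = n - 4 := by
      rw [hE, Finset.card_erase_of_mem hxE, Finset.card_erase_of_mem hu₀, hNFcard]; omega
    have hEsub : E ⊆ NF.erase u₀ := Finset.erase_subset _ _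
    set g := E.orderIsoOfFin hEcard with hg
    set a : ℕ → Fin p := fun j => if h : j - 1 < n - 4 then (g ⟨j-1, h⟩ : Fin p) else x
      with ha
    have haE : ∀ j, 1 ≤ j → j ≤ n - 3 → a j ∈ NF.erase u₀ := by
      intro j h1 h2
      simp only [ha]
      by_cases h : j - 1 < n - 4
      · rw [dif_pos h]; exact hEsub (g ⟨j-1, h⟩).2
      · rw [dif_neg h]; exact hxE
    have han3 : a (n-3) = x := by
      simp only [ha]; rw [dif_neg (by omega)]
    refine copy_builder hn G v₀ y w a ?_ ?_ ?_ hyw hv₀y hv₀w ?_ ?_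
    · intro i j hi1 hi2 hj1 hj2 hij
      simp only [ha] at hij
      by_cases h : i - 1 < n - 4 <;> by_cases h' : j - 1 < n - 4
      · rw [dif_pos h, dif_pos h'] at hij
        have := g.injective (Subtype.ext hij)
        have := congrArg Fin.val this
        simp only at this
        omega
      · rw [dif_pos h, dif_neg h'] at hij
        exact absurd hij (Finset.ne_of_mem_erase (g ⟨i-1, h⟩).2)
      · rw [dif_neg h, dif_pos h'] at hij
        exact absurd hij.symm (Finset.ne_of_mem_erase (g ⟨j-1, h'⟩).2)
      · omega
    · intro j h1 h2
      have := Finset.mem_of_mem_erase (haE j h1 h2)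
      rwa [hNF, mem_neighborFinset] at this
    · rw [han3]; exact hxy
    · intro j h1 h2
      exact fun hyj => hyE (hyj ▸ haE j h1 h2)
    · intro j h1 h2
      exact fun hwj => hwE (hwj ▸ haE j h1 h2)
  have hwBF : ∀ w : Fin p, w ∉ BF → w ∉ NF ∧ w ≠ v₀ := by
    intro w hw
    rw [hBF, Finset.mem_insert] at hw
    push_neg at hw
    exact ⟨hw.2, hw.1⟩
  have pendant_unique : ∀ w, w ∉ BF → ∀ u, u ∈ NF → G.Adj u w →
      ∀ z, G.Adj w z → z = u := by
    intro w hw u hu huw z hwz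
    by_contra hne
    obtain ⟨hwNF, hwv₀⟩ := hwBF w hw
    have hzv₀ : z ≠ v₀ := by
      rintro rfl
      exact hwNF (by rw [hNF, mem_neighborFinset]; exact hwz.symm)
    by_cases hzNF : z ∈ NF
    · have huz : u ≠ z := fun h => hne (h ▸ rfl)
      exact buildCopy u z hu hzNF huz w z huw hwz
        (fun h => hwNF (Finset.mem_of_mem_erase h))
        (fun h => (Finset.mem_erase.1 h).1 rfl) (Ne.symm hwv₀) (Ne.symm hzv₀)
    · have : (NF.erase u).Nonempty := by
        rw [← Finset.card_pos, Finset.card_erase_of_mem hu, hNFcard]; omega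
      obtain ⟨u₀, hu₀⟩ := this
      have hu₀NF : u₀ ∈ NF := Finset.mem_of_mem_erase hu₀
      have huu₀ : u ≠ u₀ := fun h => (Finset.mem_erase.1 hu₀).1 h.symm
      exact buildCopy u u₀ hu hu₀NF huu₀ w z huw hwz
        (fun h => hwNF (Finset.mem_of_mem_erase h))
        (fun h => hzNF (Finset.mem_of_mem_erase h)) (Ne.symm hwv₀) (Ne.symm hzv₀)
  have host_no_N : ∀ w, w ∉ BF → ∀ u, u ∈ NF → G.Adj u w →
      ∀ u'', u'' ∈ NF → ¬ G.Adj u u'' := by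
    intro w hw u hu huw u'' hu'' hadj
    obtain ⟨hwNF, hwv₀⟩ := hwBF w hw
    have hne : u'' ≠ u := hadj.ne'
    refine buildCopy u'' u hu'' hu hne u w hadj.symm huw
      (fun h => (Finset.mem_erase.1 h).1 rfl)
      (fun h => hwNF (Finset.mem_of_mem_erase h)) ?_ (Ne.symm hwv₀)
    intro h
    exact hv₀NF (h ▸ hu)
  have SsubT : ∀ x ∈ S, x ∈ BF ∨ ∃ u ∈ NF, G.Adj u x := by
    have closed : ∀ a b : Fin p, G.Adj a b → (a ∈ BF ∨ ∃ u ∈ NF, G.Adj u a) →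
        (b ∈ BF ∨ ∃ u ∈ NF, G.Adj u b) := by
      intro a b hab ha
      by_cases haBF : a ∈ BF
      · rcases Finset.mem_insert.1 haBF with rfl | haNF
        · left
          exact Finset.mem_insert_of_mem (by rw [hNF, mem_neighborFinset]; exact hab)
        · exact Or.inr ⟨a, haNF, hab⟩
      · rcases ha with h | ⟨u, hu, hua⟩
        · exact absurd h haBF
        · left
          have := pendant_unique a haBF u hu hua b hab
          exact this ▸ Finset.mem_insert_of_mem hu
    intro x hx
    rw [hS, ConnectedComponent.mem_supp_iff, ConnectedComponent.eq] at hx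
    obtain ⟨wk⟩ := hx.symm
    have aux : ∀ (a b : Fin p) (w : G.Walk a b),
        (a ∈ BF ∨ ∃ u ∈ NF, G.Adj u a) → (b ∈ BF ∨ ∃ u ∈ NF, G.Adj u b) := by
      intro a b w
      induction w with
      | nil => exact id
      | cons h w ih => exact fun ha => ih (closed _ _ h ha)
    exact aux v₀ x wk (Or.inl (Finset.mem_insert_self _ _))

  by_cases hSB : S.toFinset = BF
  · -- component is exactly B; show completeness via saturation, build iso
    have hcomplete : ∀ x ∈ S, ∀ y ∈ S, x ≠ y → G.Adj x y := by
      intro x hxS y hyS hxy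
      by_contra hnadj
      set G' : SimpleGraph (Fin p) := G ⊔ fromEdgeSet {s(x,y)} with hG'
      have hG'adj : ∀ a b : Fin p, G'.Adj a b ↔
          G.Adj a b ∨ (s(a,b) = s(x,y) ∧ a ≠ b) := by
        intro a b
        rw [hG', sup_adj, fromEdgeSet_adj]
        simp only [Set.mem_singleton_iff]
      have hS' : ∀ a b : Fin p, G'.Adj a b → (a ∈ S ↔ b ∈ S) := by
        intro a b hab
        rcases (hG'adj a b).1 hab with h | ⟨h, -⟩
        · exact ⟨hSclosed a b h, hSclosed b a h.symm⟩
        · rw [Sym2.eq_iff] at h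
          rcases h with ⟨rfl, rfl⟩ | ⟨rfl, rfl⟩
          · simp [hxS, hyS]
          · simp [hxS, hyS]
      have hfree' : ¬ ContainsCopy G' (TnStar n) := by
        rintro ⟨f, hf⟩
        by_cases h0 : f ⟨0, by omega⟩ ∈ S
        · have hall : ∀ i : Fin n, f i ∈ S := by
            intro i
            exact (confined f hf S hS' (tnstar_reachable hn i)).1 h0
          have : (Finset.univ : Finset (Fin n)).card ≤ BF.card := by
            apply Finset.card_le_card_of_injOn (fun i => f i)
            · intro i _
              rw [← hSB, Finset.mem_coe, Set.mem_toFinset]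
              exact hall i
            · intro i _ j _ hij
              exact f.injective hij
          rw [Finset.card_univ, Fintype.card_fin, hBcard] at this
          omega
        · apply hfree
          refine ⟨f, ?_⟩
          intro a b hab
          rcases (hG'adj _ _).1 (hf a b hab) with h | ⟨h, -⟩
          · exact h
          · exfalso
            apply h0
            rw [Sym2.eq_iff] at h
            have hfa : f a ∈ S := by
              rcases h with ⟨h1, -⟩ | ⟨h1, -⟩
              · rw [h1]; exact hxS
              · rw [h1]; exact hyS
            exact (confined f hf S hS' (tnstar_reachable hn a)).2 hfa
      have hcard' : Nat.card G'.edgeSet = Nat.card G.edgeSet + 1 := by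
        have hnd : ¬ (s(x,y) : Sym2 (Fin p)).IsDiag := by
          simp only [Sym2.isDiag_iff_proj_eq]
          exact hxy
        have hE' : G'.edgeSet = insert s(x,y) G.edgeSet := by
          rw [hG', edgeSet_sup, edgeSet_fromEdgeSet]
          ext e
          simp only [Set.mem_union, Set.mem_diff, Set.mem_singleton_iff,
            Set.mem_insert_iff, Set.mem_setOf_eq]
          constructor
          · rintro (h | ⟨rfl, -⟩)
            · exact Or.inr h
            · exact Or.inl rfl
          · rintro (rfl | h)
            · exact Or.inr ⟨rfl, hnd⟩
            · exact Or.inl h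
        rw [hE', Nat.card_coe_set_eq, Nat.card_coe_set_eq]
        exact Set.ncard_insert_of_notMem (fun h => hnadj ((G.mem_edgeSet).1 h))
          (Set.toFinite _)
      have hle := le_exNum (TnStar n) G' hfree'
      rw [hcard', hext] at hle
      omega
    have hcardS : Fintype.card S = n - 1 := by
      rw [← Set.toFinset_card, hSB, hBcard]
    refine ⟨?_⟩
    refine ⟨Fintype.equivFinOfCardEq hcardS, ?_⟩
    intro a b
    simp only [top_adj, comap_adj, Function.Embedding.coe_subtype]
    constructor
    · intro hne
      have hab : a ≠ b := fun h => hne (by rw [h])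
      exact hcomplete a.1 a.2 b.1 b.2 (fun h => hab (Subtype.ext h))
    · intro hadj
      intro h
      have := (Fintype.equivFinOfCardEq hcardS).injective h
      rw [this] at hadj
      exact G.loopless.irrefl _ hadj
  · -- there is a pendant; surgery gives a contradiction
    exfalso
    set SF : Finset (Fin p) := S.toFinset with hSF
    have hmemSF : ∀ x : Fin p, x ∈ SF ↔ x ∈ S := fun x => Set.mem_toFinset
    have hBsubS : BF ⊆ SF := fun x hx => (hmemSF x).2 (hBS x hx)
    obtain ⟨w₀, hw₀S, hw₀B⟩ : ∃ w, w ∈ SF ∧ w ∉ BF := by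
      by_contra h
      push_neg at h
      exact hSB (Finset.Subset.antisymm (fun x hx => h x hx) hBsubS)
    obtain ⟨u, huNF, huw₀⟩ : ∃ u ∈ NF, G.Adj u w₀ := by
      rcases SsubT w₀ ((hmemSF w₀).1 hw₀S) with h | h
      · exact absurd h hw₀B
      · exact h
    set m := SF.card with hm
    set K := n - 1 with hK
    have hKpos : 0 < K := by omega
    have hmK : K ≤ m := by
      calc K = BF.card := by rw [hBcard]
      _ ≤ SF.card := Finset.card_le_card hBsubS
    set q := m / K with hq
    set r := m % K with hr
    have hqr : K * q + r = m := Nat.div_add_mod m K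
    have hrK : r < K := Nat.mod_lt _ hKpos
    have hq1 : 1 ≤ q := by
      rw [hq]
      exact (Nat.one_le_div_iff hKpos).2 hmK
    have hqKm : q * K ≤ m := by
      rw [mul_comm]; omega
    -- rank function
    set gS := SF.orderIsoOfFin hm.symm with hgS
    set ι : Fin p → ℕ := fun x => if h : x ∈ SF then (gS.symm ⟨x, h⟩ : Fin m).val else 0
      with hι
    have hιval : ∀ (x : Fin p) (h : x ∈ SF), ι x = (gS.symm ⟨x, h⟩ : Fin m).val := by
      intro x h
      simp only [hι]
      rw [dif_pos h]
    have hιlt : ∀ x ∈ SF, ι x < m := by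
      intro x h
      rw [hιval x h]
      exact (gS.symm ⟨x, h⟩).isLt
    have hιinj : ∀ x ∈ SF, ∀ y ∈ SF, ι x = ι y → x = y := by
      intro x hx y hy hxy
      rw [hιval x hx, hιval y hy] at hxy
      have := gS.symm.injective (Fin.ext hxy)
      exact congrArg Subtype.val this
    have hιg : ∀ j : Fin m, (gS j : Fin p) ∈ SF ∧ ι (gS j : Fin p) = j.val := by
      intro j
      refine ⟨(gS j).2, ?_⟩
      rw [hιval _ (gS j).2]
      congr 1
      rw [show (⟨(gS j : Fin p), (gS j).2⟩ : {x // x ∈ SF}) = gS j from rfl]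
      exact gS.symm_apply_apply j
    -- the two replacement graphs
    set Blk : SimpleGraph (Fin p) :=
      { Adj := fun a b => a ≠ b ∧ a ∈ SF ∧ b ∈ SF ∧ ι a / K = ι b / K
        symm := ⟨by rintro a b ⟨h1, h2, h3, h4⟩; exact ⟨h1.symm, h3, h2, h4.symm⟩⟩
        loopless := ⟨by rintro a ⟨h, -⟩; exact h rfl⟩ } with hBlk
    set Gout : SimpleGraph (Fin p) :=
      { Adj := fun a b => G.Adj a b ∧ a ∉ SF ∧ b ∉ SF
        symm := ⟨by rintro a b ⟨h1, h2, h3⟩; exact ⟨h1.symm, h3, h2⟩⟩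
        loopless := ⟨by rintro a ⟨h, -⟩; exact G.loopless.irrefl a h⟩ } with hGout
    set Gin : SimpleGraph (Fin p) :=
      { Adj := fun a b => G.Adj a b ∧ a ∈ SF ∧ b ∈ SF
        symm := ⟨by rintro a b ⟨h1, h2, h3⟩; exact ⟨h1.symm, h3, h2⟩⟩
        loopless := ⟨by rintro a ⟨h, -⟩; exact G.loopless.irrefl a h⟩ } with hGin
    set G' : SimpleGraph (Fin p) := Blk ⊔ Gout with hG'
    -- freeness of G'
    have hfree' : ¬ ContainsCopy G' (TnStar n) := by
      rintro ⟨f, hf⟩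
      by_cases h0 : f ⟨0, by omega⟩ ∈ SF
      · set β := ι (f ⟨0, by omega⟩) / K with hβ
        have hclosed' : ∀ a b : Fin p, G'.Adj a b →
            ((a ∈ SF ∧ ι a / K = β) ↔ (b ∈ SF ∧ ι b / K = β)) := by
          rintro a b (⟨h1, h2, h3, h4⟩ | ⟨h1, h2, h3⟩)
          · constructor
            · rintro ⟨-, hb⟩; exact ⟨h3, h4 ▸ hb⟩
            · rintro ⟨-, hb⟩; exact ⟨h2, h4.symm ▸ hb⟩
          · constructor
            · rintro ⟨ha, -⟩; exact absurd ha h2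
            · rintro ⟨hb, -⟩; exact absurd hb h3
        have hall : ∀ i : Fin n, f i ∈ SF ∧ ι (f i) / K = β := by
          intro i
          exact (confined f hf {x | x ∈ SF ∧ ι x / K = β} hclosed'
            (tnstar_reachable hn i)).1 ⟨h0, rfl⟩
        have hinj : Function.Injective (fun i : Fin n => (⟨ι (f i) % K, Nat.mod_lt _ hKpos⟩ : Fin K)) := by
          intro i j hij
          simp only [Fin.mk.injEq] at hij
          have h1 := (hall i).2
          have h2 := (hall j).2
          have : ι (f i) = ι (f j) := by
            rw [← Nat.div_add_mod (ι (f i)) K, ← Nat.div_add_mod (ι (f j)) K, h1, h2, hij]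
          exact f.injective (hιinj _ (hall i).1 _ (hall j).1 this)
        have := Fintype.card_le_of_injective _ hinj
        simp only [Fintype.card_fin] at this
        omega
      · apply hfree
        refine ⟨f, ?_⟩
        intro a b hab
        have hallout : ∀ i : Fin n, f i ∉ SF := by
          intro i
          have hclosed' : ∀ a b : Fin p, G'.Adj a b → ((a ∈ SF) ↔ (b ∈ SF)) := by
            rintro a b (⟨h1, h2, h3, h4⟩ | ⟨h1, h2, h3⟩)
            · simp [h2, h3]
            · simp [h2, h3]
          intro hc
          exact h0 ((confined f hf {x | x ∈ SF} hclosed' (tnstar_reachable hn i)).2 hc)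
        rcases hf a b hab with ⟨h1, h2, h3, h4⟩ | ⟨h1, h2, h3⟩
        · exact absurd h2 (hallout a)
        · exact h1
    -- edge count bookkeeping
    have hGsplit : G = Gin ⊔ Gout := by
      ext a b
      constructor
      · intro hab
        by_cases ha : a ∈ SF
        · exact Or.inl ⟨hab, ha, (hmemSF b).2 (hSclosed a b hab ((hmemSF a).1 ha))⟩
        · refine Or.inr ⟨hab, ha, fun hb => ha ?_⟩
          exact (hmemSF a).2 (hSclosed b a hab.symm ((hmemSF b).1 hb))
      · rintro (⟨h, -, -⟩ | ⟨h, -, -⟩) <;> exact h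
    have hdisjBlkOut : Disjoint Blk.edgeSet Gout.edgeSet := by
      rw [Set.disjoint_left]
      intro e he1 he2
      induction e with
      | _ a b =>
        rw [mem_edgeSet] at he1 he2
        exact he2.2.1 he1.2.1
    have hdisjInOut : Disjoint Gin.edgeSet Gout.edgeSet := by
      rw [Set.disjoint_left]
      intro e he1 he2
      induction e with
      | _ a b =>
        rw [mem_edgeSet] at he1 he2
        exact he2.2.1 he1.2.1
    have hcardG : Nat.card G.edgeSet = Nat.card Gin.edgeSet + Nat.card Gout.edgeSet := by
      rw [Nat.card_coe_set_eq, Nat.card_coe_set_eq, Nat.card_coe_set_eq]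
      rw [show G.edgeSet = Gin.edgeSet ∪ Gout.edgeSet by rw [hGsplit, edgeSet_sup]]
      exact Set.ncard_union_eq hdisjInOut (Set.toFinite _) (Set.toFinite _)
    have hcardG' : Nat.card G'.edgeSet = Nat.card Blk.edgeSet + Nat.card Gout.edgeSet := by
      rw [Nat.card_coe_set_eq, Nat.card_coe_set_eq, Nat.card_coe_set_eq]
      rw [show G'.edgeSet = Blk.edgeSet ∪ Gout.edgeSet by rw [hG', edgeSet_sup]]
      exact Set.ncard_union_eq hdisjBlkOut (Set.toFinite _) (Set.toFinite _)
    have cardBridge : ∀ (H : SimpleGraph (Fin p)), Nat.card H.edgeSet = H.edgeFinset.card := by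
      intro H
      rw [Nat.card_eq_fintype_card]
      exact (Set.toFinset_card _).symm
    -- lower bound on Blk edges
    have hBlkLB : q * K * (K - 1) + r * (r - 1) ≤ 2 * Nat.card Blk.edgeSet := by
      rw [cardBridge, ← sum_degrees_eq_twice_card_edges]
      have hdegblk : ∀ x ∈ SF, ∀ c : ℕ, c ≤ K → (ι x / K) * K + c ≤ m →
          c - 1 ≤ Blk.degree x := by
        intro x hx c hcK hbm
        set b := ι x / K with hb
        set T : Finset (Fin p) := (Finset.range c).image
          (fun i => if h : b * K + i < m then (gS ⟨b * K + i, h⟩ : Fin p) else v₀) with hT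
        have hTmem : ∀ y ∈ T, y ∈ SF ∧ ι y / K = b := by
          intro y hy
          rw [hT, Finset.mem_image] at hy
          obtain ⟨i, hi, rfl⟩ := hy
          rw [Finset.mem_range] at hi
          have h : b * K + i < m := by omega
          rw [dif_pos h]
          obtain ⟨h1, h2⟩ := hιg ⟨b * K + i, h⟩
          refine ⟨h1, ?_⟩
          rw [h2]
          show (b * K + i) / K = b
          rw [Nat.add_comm (b * K) i, Nat.mul_comm b K, Nat.add_mul_div_left i b hKpos,
            Nat.div_eq_of_lt (by omega : i < K), Nat.zero_add]
        have hTcard : T.card = c := by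
          rw [hT, Finset.card_image_of_injOn, Finset.card_range]
          intro i hi j hj hij
          rw [Finset.mem_coe, Finset.mem_range] at hi hj
          have hij' : (if h : b * K + i < m then (gS ⟨b * K + i, h⟩ : Fin p) else v₀) =
              (if h : b * K + j < m then (gS ⟨b * K + j, h⟩ : Fin p) else v₀) := hij
          rw [dif_pos (by omega : b * K + i < m), dif_pos (by omega : b * K + j < m)] at hij'
          have := gS.injective (Subtype.ext hij')
          rw [Fin.mk.injEq] at this
          omega
        have hsub : T.erase x ⊆ Blk.neighborFinset x := by
          intro y hy
          obtain ⟨hyx, hyT⟩ := Finset.mem_erase.1 hy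
          obtain ⟨h1, h2⟩ := hTmem y hyT
          rw [mem_neighborFinset]
          exact ⟨Ne.symm hyx, hx, h1, by rw [h2]⟩
        calc c - 1 = T.card - 1 := by rw [hTcard]
          _ ≤ (T.erase x).card := Finset.pred_card_le_card_erase
          _ ≤ (Blk.neighborFinset x).card := Finset.card_le_card hsub
          _ = Blk.degree x := rfl
      have hdegfull : ∀ x ∈ SF, ι x < q * K → K - 1 ≤ Blk.degree x := by
        intro x hx hlt
        apply hdegblk x hx K le_rfl
        have hbq : ι x / K < q := (Nat.div_lt_iff_lt_mul hKpos).2 hlt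
        calc (ι x / K) * K + K = (ι x / K + 1) * K := by ring
          _ ≤ q * K := Nat.mul_le_mul_right K hbq
          _ ≤ m := hqKm
      have hdeglast : ∀ x ∈ SF, ¬ (ι x < q * K) → r - 1 ≤ Blk.degree x := by
        intro x hx hge
        apply hdegblk x hx r (le_of_lt hrK)
        have hxm := hιlt x hx
        have hbq : ι x / K = q := by
          apply le_antisymm
          · have : ι x < (q + 1) * K := by
              have : (q + 1) * K = K * q + K := by ring
              omega
            have := (Nat.div_lt_iff_lt_mul hKpos).2 this
            omega
          · exact (Nat.le_div_iff_mul_le hKpos).2 (by omega)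
        rw [hbq]
        have : q * K = K * q := Nat.mul_comm _ _
        omega
      set SF1 := SF.filter (fun v => ι v < q * K) with hSF1
      set SF2 := SF.filter (fun v => ¬ ι v < q * K) with hSF2
      have hSF1card : SF1.card = q * K := by
        apply le_antisymm
        · have : SF1.card ≤ (Finset.range (q * K)).card := by
            apply Finset.card_le_card_of_injOn ι
            · intro v hv
              rw [Finset.mem_coe, hSF1, Finset.mem_filter] at hv
              exact Finset.mem_range.2 hv.2
            · intro a ha b hb hab
              rw [Finset.mem_coe, hSF1, Finset.mem_filter] at ha hb
              exact hιinj a ha.1 b hb.1 hab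
          rwa [Finset.card_range] at this
        · have : (Finset.range (q * K)).card ≤ SF1.card := by
            apply Finset.card_le_card_of_injOn
              (fun j => if h : j < m then (gS ⟨j, h⟩ : Fin p) else v₀)
            · intro j hj
              rw [Finset.mem_coe, Finset.mem_range] at hj
              have hjm : j < m := by
                have : q * K = K * q := Nat.mul_comm _ _
                omega
              beta_reduce
              rw [dif_pos hjm]
              obtain ⟨h1, h2⟩ := hιg ⟨j, hjm⟩
              rw [Finset.mem_coe, hSF1, Finset.mem_filter]
              exact ⟨h1, by rw [h2]; exact hj⟩
            · intro a ha b hb hab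
              rw [Finset.mem_coe, Finset.mem_range] at ha hb
              have ham : a < m := by
                have : q * K = K * q := Nat.mul_comm _ _
                omega
              have hbm : b < m := by
                have : q * K = K * q := Nat.mul_comm _ _
                omega
              have hab' : (if h : a < m then (gS ⟨a, h⟩ : Fin p) else v₀) =
                  (if h : b < m then (gS ⟨b, h⟩ : Fin p) else v₀) := hab
              rw [dif_pos ham, dif_pos hbm] at hab'
              have := gS.injective (Subtype.ext hab')
              rw [Fin.mk.injEq] at this
              exact this
          rwa [Finset.card_range] at this
      have hSF2card : SF2.card = r := by
        have := Finset.card_filter_add_card_filter_not (s := SF)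
          (p := fun v => ι v < q * K)
        rw [← hSF1, ← hSF2] at this
        have hqK : q * K = K * q := Nat.mul_comm _ _
        omega
      have hs1 : SF1.card * (K - 1) ≤ ∑ v ∈ SF1, Blk.degree v := by
        rw [← smul_eq_mul]
        apply Finset.card_nsmul_le_sum
        intro x hx
        rw [hSF1, Finset.mem_filter] at hx
        exact hdegfull x hx.1 hx.2
      have hs2 : SF2.card * (r - 1) ≤ ∑ v ∈ SF2, Blk.degree v := by
        rw [← smul_eq_mul]
        apply Finset.card_nsmul_le_sum
        intro x hx
        rw [hSF2, Finset.mem_filter] at hx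
        exact hdeglast x hx.1 hx.2
      have hs3 : (∑ v ∈ SF1, Blk.degree v) + (∑ v ∈ SF2, Blk.degree v)
          = ∑ v ∈ SF, Blk.degree v := by
        rw [hSF1, hSF2]
        exact Finset.sum_filter_add_sum_filter_not SF _ _
      have heq : q * K * (K - 1) + r * (r - 1) = SF1.card * (K - 1) + SF2.card * (r - 1) := by
        rw [hSF1card, hSF2card]
      have hmain : q * K * (K - 1) + r * (r - 1) ≤ ∑ v ∈ SF, Blk.degree v := by
        rw [heq]
        omega
      refine le_trans hmain (le_trans (Finset.sum_le_sum_of_subset (Finset.subset_univ SF))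
        (le_of_eq (Finset.sum_congr rfl (fun v _ =>
          congrArg (@SimpleGraph.degree (Fin p) Blk v) (Subsingleton.elim _ _)))))
    -- upper bound on Gin edges
    set GB : SimpleGraph (Fin p) :=
      { Adj := fun a b => G.Adj a b ∧ a ∈ BF ∧ b ∈ BF
        symm := ⟨by rintro a b ⟨h1, h2, h3⟩; exact ⟨h1.symm, h3, h2⟩⟩
        loopless := ⟨by rintro a ⟨h, -⟩; exact G.loopless.irrefl a h⟩ } with hGB
    have hGBdeg0 : ∀ x : Fin p, x ∉ BF → GB.degree x = 0 := by
      intro x hx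
      rw [← card_neighborFinset_eq_degree, Finset.card_eq_zero]
      ext y
      simp only [mem_neighborFinset, Finset.notMem_empty, iff_false]
      rintro ⟨-, hxB, -⟩
      exact hx hxB
    have hGBdegv₀ : GB.degree v₀ ≤ n - 2 := by
      rw [← card_neighborFinset_eq_degree]
      have hsub : GB.neighborFinset v₀ ⊆ NF := by
        intro y hy
        rw [mem_neighborFinset] at hy
        rw [hNF, mem_neighborFinset]
        exact hy.1
      calc (GB.neighborFinset v₀).card ≤ NF.card := Finset.card_le_card hsub
        _ = n - 2 := hNFcard
    have hGBdegu : GB.degree u ≤ 1 := by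
      rw [← card_neighborFinset_eq_degree]
      have hsub : GB.neighborFinset u ⊆ {v₀} := by
        intro y hy
        rw [mem_neighborFinset] at hy
        obtain ⟨hadj, -, hyBF⟩ := hy
        rcases Finset.mem_insert.1 hyBF with rfl | hyNF
        · exact Finset.mem_singleton_self _
        · exact absurd hadj (host_no_N w₀ hw₀B u huNF huw₀ y hyNF)
      calc (GB.neighborFinset u).card ≤ ({v₀} : Finset (Fin p)).card :=
            Finset.card_le_card hsub
        _ = 1 := Finset.card_singleton _
    have hGBdegx : ∀ x ∈ NF.erase u, GB.degree x ≤ n - 3 := by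
      intro x hx
      rw [← card_neighborFinset_eq_degree]
      have hxNF := Finset.mem_of_mem_erase hx
      have hxu : x ≠ u := (Finset.mem_erase.1 hx).1
      have hsub : GB.neighborFinset x ⊆ (BF.erase u).erase x := by
        intro y hy
        rw [mem_neighborFinset] at hy
        obtain ⟨hadj, -, hyBF⟩ := hy
        refine Finset.mem_erase.2 ⟨hadj.ne', Finset.mem_erase.2 ⟨?_, hyBF⟩⟩
        rintro rfl
        exact (host_no_N w₀ hw₀B _ huNF huw₀ x hxNF) hadj.symm
      have hcard : ((BF.erase u).erase x).card = n - 3 := by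
        rw [Finset.card_erase_of_mem, Finset.card_erase_of_mem, hBcard] <;>
          first
          | omega
          | exact Finset.mem_insert_of_mem huNF
          | exact Finset.mem_erase.2 ⟨hxu, Finset.mem_insert_of_mem hxNF⟩
      calc (GB.neighborFinset x).card ≤ ((BF.erase u).erase x).card :=
            Finset.card_le_card hsub
        _ = n - 3 := hcard
    have hGBsum : 2 * Nat.card GB.edgeSet ≤ (n - 3) * (n - 3) + (n - 1) := by
      have key : (∑ v : Fin p, GB.degree v) ≤ (n - 3) * (n - 3) + (n - 1) := by
        have h0 : (∑ v : Fin p, GB.degree v) = ∑ v ∈ BF, GB.degree v := by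
          refine (Finset.sum_subset (Finset.subset_univ BF) ?_).symm
          intro x _ hx
          exact hGBdeg0 x hx
        have h3 : (∑ v ∈ NF.erase u, GB.degree v) ≤ (n - 3) * (n - 3) := by
          have := Finset.sum_le_card_nsmul (NF.erase u) _ (n - 3) (fun x hx => hGBdegx x hx)
          rwa [Finset.card_erase_of_mem huNF, hNFcard, smul_eq_mul] at this
        rw [h0]
        show (∑ v ∈ insert v₀ NF, GB.degree v) ≤ _
        rw [Finset.sum_insert hv₀NF, ← Finset.add_sum_erase NF _ huNF]
        omega
      rw [cardBridge, ← sum_degrees_eq_twice_card_edges]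
      refine le_trans (le_of_eq (Finset.sum_congr rfl (fun v _ =>
        congrArg (@SimpleGraph.degree (Fin p) GB v) (Subsingleton.elim _ _)))) key
    have hGinGB : Nat.card Gin.edgeSet ≤ Nat.card GB.edgeSet + (m - K) := by
      have e1 : Nat.card Gin.edgeSet = Gin.edgeFinset.card := by
        rw [Nat.card_eq_fintype_card]
        exact (Set.toFinset_card _).symm
      have e2 : Nat.card GB.edgeSet = GB.edgeFinset.card := by
        rw [Nat.card_eq_fintype_card]
        exact (Set.toFinset_card _).symm
      rw [e1, e2]
      have hsplit := Finset.card_filter_add_card_filter_not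
        (s := Gin.edgeFinset) (p := fun e => ∀ x ∈ e, x ∈ BF)
      have h1 : (Gin.edgeFinset.filter (fun e => ∀ x ∈ e, x ∈ BF)).card ≤
          GB.edgeFinset.card := by
        apply Finset.card_le_card
        intro e he
        rw [Finset.mem_filter, mem_edgeFinset] at he
        obtain ⟨he, hPe⟩ := he
        rw [mem_edgeFinset]
        induction e with
        | _ a b =>
          rw [mem_edgeSet] at he ⊢
          exact ⟨he.1, hPe a (Sym2.mem_mk_left a b), hPe b (Sym2.mem_mk_right a b)⟩
      have h2 : (Gin.edgeFinset.filter (fun e => ¬ ∀ x ∈ e, x ∈ BF)).card ≤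
          (SF \ BF).card := by
        have hdec : ∀ e ∈ Gin.edgeFinset.filter (fun e => ¬ ∀ x ∈ e, x ∈ BF),
            ∃ x, x ∈ e ∧ x ∉ BF ∧ x ∈ SF := by
          intro e he
          rw [Finset.mem_filter, mem_edgeFinset] at he
          obtain ⟨he, hPe⟩ := he
          push_neg at hPe
          obtain ⟨x, hx1, hx2⟩ := hPe
          refine ⟨x, hx1, hx2, ?_⟩
          revert hx1
          induction e with
          | _ a b =>
            intro hx1
            rw [mem_edgeSet] at he
            rcases Sym2.mem_iff.1 hx1 with rfl | rfl
            · exact he.2.1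
            · exact he.2.2
        apply Finset.card_le_card_of_injOn
          (fun e => if h : ∃ x, x ∈ e ∧ x ∉ BF ∧ x ∈ SF then h.choose else v₀)
        · intro e he
          have hex := hdec e he
          beta_reduce
          rw [dif_pos hex]
          obtain ⟨h1', h2', h3'⟩ := hex.choose_spec
          exact Finset.mem_sdiff.2 ⟨h3', h2'⟩
        · intro e1 he1 e2 he2 heq
          rw [Finset.mem_coe] at he1 he2
          have hex1 := hdec e1 he1
          have hex2 := hdec e2 he2
          have heq' : hex1.choose = hex2.choose := by
            simpa [dif_pos hex1, dif_pos hex2] using heq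
          set w := hex2.choose with hw
          obtain ⟨hw1, hw2, hw3⟩ := hex1.choose_spec
          obtain ⟨hw1', hw2', hw3'⟩ := hex2.choose_spec
          rw [heq'] at hw1
          -- w is a pendant; both edges contain w, so both are s(w, host)
          obtain ⟨uw, huwNF, huww⟩ : ∃ u' ∈ NF, G.Adj u' w := by
            rcases SsubT w ((hmemSF w).1 hw3') with h | h
            · exact absurd h hw2'
            · exact h
          have hkey : ∀ e, e ∈ Gin.edgeFinset.filter (fun e => ¬ ∀ x ∈ e, x ∈ BF) →
              w ∈ e → e = s(w, uw) := by
            intro e he hwe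
            rw [Finset.mem_filter, mem_edgeFinset] at he
            obtain ⟨he, -⟩ := he
            obtain ⟨z, hz⟩ : ∃ z, e = s(w, z) :=
              ⟨Sym2.Mem.other hwe, (Sym2.other_spec hwe).symm⟩
            have hadj : G.Adj w z := by
              rw [hz, mem_edgeSet] at he
              exact he.1
            have := pendant_unique w hw2' uw huwNF huww z hadj
            rw [hz, this]
          rw [hkey e1 he1 hw1, hkey e2 he2 hw1']
      have hcardSFBF : (SF \ BF).card = m - K := by
        rw [Finset.card_sdiff_of_subset hBsubS, hBcard]
      omega
    have hGinUB : 2 * Nat.card Gin.edgeSet ≤ (n - 3) * (n - 3) + (n - 1) + 2 * (m - K) := by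
      omega
    -- arithmetic
    have harith : (n - 3) * (n - 3) + (n - 1) + 2 * (m - K) + 2 ≤ q * K * (K - 1) + r * (r - 1) := by
      clear_value m K q r
      obtain ⟨q', rfl⟩ : ∃ q', q = q' + 1 := ⟨q - 1, by omega⟩
      have h1 : m - K = K * q' + r := by
        have : K * (q' + 1) = K * q' + K := by rw [Nat.mul_add, Nat.mul_one]
        omega
      have h2 : n - 1 = K := hK.symm
      obtain ⟨c, hc2, hc3, hcK⟩ : ∃ c, 2 ≤ c ∧ n - 3 = c ∧ K = c + 2 :=
        ⟨n - 3, by omega, rfl, by omega⟩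
      rw [h1, h2, hc3, hcK, show (c + 2) - 1 = c + 1 from rfl]
      exact arith_key c q' r hc2 (by omega)
    have hfinal := le_exNum (TnStar n) G' hfree'
    rw [← hext] at hfinal
    omega
end

section
/- Let n ≥ 4 and t ≥ 1, and let G be a connected extremal T_n*-free graph of order n−2+t with maximum degree exactly n−3. Then t ≤ n−4 and e(G) ≤ (n−3)². -/
open SimpleGraph

open Finset in

lemma walk_mem_closed {V : Type*} {G : SimpleGraph V} {C : Set V}
    (hC : ∀ ⦃x y⦄, x ∈ C → G.Adj x y → y ∈ C) :
    ∀ {a b : V}, G.Walk a b → a ∈ C → b ∈ C := by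
  intro a b w
  induction w with
  | nil => exact id
  | cons h p ih => exact fun ha => ih (hC ha h)

lemma card_filter_Ico {p : ℕ} (a b : ℕ) (hb : b ≤ p) :
    ((Finset.univ : Finset (Fin p)).filter (fun x => a ≤ x.val ∧ x.val < b)).card = b - a := by
  classical
  rw [← Finset.card_image_of_injective _ Fin.val_injective]
  have : (Finset.univ.filter (fun x : Fin p => a ≤ x.val ∧ x.val < b)).image Fin.val
      = Finset.Ico a b := by
    ext m
    simp only [Finset.mem_image, Finset.mem_filter, Finset.mem_univ, true_and, Finset.mem_Ico]
    constructor
    · rintro ⟨x, hx, rfl⟩; exact hx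
    · rintro ⟨h1, h2⟩; exact ⟨⟨m, lt_of_lt_of_le h2 hb⟩, ⟨h1, h2⟩, rfl⟩
  rw [this, Nat.card_Ico]

lemma exists_adj_conn {p : ℕ} {G : SimpleGraph (Fin p)} (h : G.Connected) (hp : 2 ≤ p)
    (x : Fin p) : ∃ y, G.Adj x y := by
  obtain ⟨y, hy⟩ := Fintype.exists_ne_of_one_lt_card (by rw [Fintype.card_fin]; omega) x
  obtain ⟨w⟩ := h.preconnected x y
  cases w with
  | nil => exact absurd rfl hy
  | cons hadj _ => exact ⟨_, hadj⟩

lemma mkCopy {p n : ℕ} (hn : 5 ≤ n) (G : SimpleGraph (Fin p))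
    (c x y z : Fin p) (L : Finset (Fin p)) (hL : L.card = n - 4)
    (hadjL : ∀ l ∈ L, G.Adj c l) (hcx : G.Adj c x) (hxy : G.Adj x y) (hyz : G.Adj y z)
    (hcL : c ∉ L) (hxL : x ∉ L) (hyL : y ∉ L) (hzL : z ∉ L)
    (hcy : c ≠ y) (hcz : c ≠ z) (hxz : x ≠ z) :
    ContainsCopy G (TnStar n) := by
  classical
  have e : Fin (n - 4) ≃ {l // l ∈ L} := (L.equivFin.trans (finCongr hL)).symm
  set g : ℕ → Fin p := fun k => if h : k < n - 4 then (e ⟨k, h⟩ : Fin p) else c with hg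
  have hgmem : ∀ k, k < n - 4 → g k ∈ L := by
    intro k h
    simp only [hg, dif_pos h]
    exact (e ⟨k, h⟩).2
  have hginj : ∀ k₁ k₂, k₁ < n - 4 → k₂ < n - 4 → g k₁ = g k₂ → k₁ = k₂ := by
    intro k₁ k₂ h₁ h₂ h
    simp only [hg, dif_pos h₁, dif_pos h₂] at h
    exact congrArg Fin.val (e.injective (Subtype.val_injective h))
  set f : Fin n → Fin p := fun i =>
    if i.val = 0 then c else if i.val ≤ n - 4 then g (i.val - 1)
    else if i.val = n - 3 then x else if i.val = n - 2 then y else z with hf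
  have hchar : ∀ i : Fin n,
      (i.val = 0 ∧ f i = c) ∨ (1 ≤ i.val ∧ i.val ≤ n - 4 ∧ f i = g (i.val - 1)) ∨
      (i.val = n - 3 ∧ f i = x) ∨ (i.val = n - 2 ∧ f i = y) ∨ (i.val = n - 1 ∧ f i = z) := by
    intro i
    have hi : i.val < n := i.isLt
    by_cases h0 : i.val = 0
    · exact Or.inl ⟨h0, by simp [hf, h0]⟩
    by_cases h1 : i.val ≤ n - 4
    · refine Or.inr (Or.inl ⟨by omega, h1, ?_⟩)
      simp only [hf]
      rw [if_neg h0, if_pos h1]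
    by_cases h2 : i.val = n - 3
    · refine Or.inr (Or.inr (Or.inl ⟨h2, ?_⟩))
      simp only [hf]
      rw [if_neg h0, if_neg h1, if_pos h2]
    by_cases h3 : i.val = n - 2
    · refine Or.inr (Or.inr (Or.inr (Or.inl ⟨h3, ?_⟩)))
      simp only [hf]
      rw [if_neg h0, if_neg h1, if_neg h2, if_pos h3]
    · refine Or.inr (Or.inr (Or.inr (Or.inr ⟨by omega, ?_⟩)))
      simp only [hf]
      rw [if_neg h0, if_neg h1, if_neg h2, if_neg h3]
  have hcx' := hcx.ne
  have hxy' := hxy.ne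
  have hyz' := hyz.ne
  have hinj : Function.Injective f := by
    intro i j h
    have hmi : ∀ k, 1 ≤ k → k ≤ n - 4 → g (k - 1) ∈ L := fun k h1 h2 => hgmem _ (by omega)
    rcases hchar i with ⟨hi1, hi2⟩ | ⟨hi0, hi1, hi2⟩ | ⟨hi1, hi2⟩ | ⟨hi1, hi2⟩ | ⟨hi1, hi2⟩ <;>
      rcases hchar j with ⟨hj1, hj2⟩ | ⟨hj0, hj1, hj2⟩ | ⟨hj1, hj2⟩ | ⟨hj1, hj2⟩ | ⟨hj1, hj2⟩ <;>
      rw [hi2, hj2] at h <;>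
      first
        | (exact Fin.ext (by omega))
        | (exact Fin.ext (by
            have := hginj _ _ (by omega) (by omega) h
            omega))
        | (exact absurd (by rw [h]; exact hmi _ hj0 hj1) hcL)
        | (exact absurd (by rw [h]; exact hmi _ hj0 hj1) hxL)
        | (exact absurd (by rw [h]; exact hmi _ hj0 hj1) hyL)
        | (exact absurd (by rw [h]; exact hmi _ hj0 hj1) hzL)
        | (exact absurd (by rw [← h]; exact hmi _ hi0 hi1) hcL)
        | (exact absurd (by rw [← h]; exact hmi _ hi0 hi1) hxL)
        | (exact absurd (by rw [← h]; exact hmi _ hi0 hi1) hyL)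
        | (exact absurd (by rw [← h]; exact hmi _ hi0 hi1) hzL)
        | (exact absurd h hcx')
        | (exact absurd h hcy)
        | (exact absurd h hcz)
        | (exact absurd h hxy')
        | (exact absurd h hxz)
        | (exact absurd h hyz')
        | (exact absurd h.symm hcx')
        | (exact absurd h.symm hcy)
        | (exact absurd h.symm hcz)
        | (exact absurd h.symm hxy')
        | (exact absurd h.symm hxz)
        | (exact absurd h.symm hyz')
  have hAdj : ∀ a b : Fin n,
      ((a.val = 0 ∧ 1 ≤ b.val ∧ b.val ≤ n - 3) ∨ (a.val = n - 3 ∧ b.val = n - 2) ∨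
        (a.val = n - 2 ∧ b.val = n - 1)) → G.Adj (f a) (f b) := by
    rintro a b (⟨ha, hb1, hb2⟩ | ⟨ha, hb⟩ | ⟨ha, hb⟩)
    · have hfa : f a = c := by simp [hf, ha]
      by_cases hb3 : b.val ≤ n - 4
      · have hfb : f b = g (b.val - 1) := by
          simp only [hf]
          rw [if_neg (by omega), if_pos hb3]
        rw [hfa, hfb]
        exact hadjL _ (hgmem _ (by omega))
      · have hfb : f b = x := by
          simp only [hf]
          rw [if_neg (by omega), if_neg hb3, if_pos (by omega)]
        rw [hfa, hfb]
        exact hcx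
    · have hfa : f a = x := by
        simp only [hf]
        rw [if_neg (by omega), if_neg (by omega), if_pos ha]
      have hfb : f b = y := by
        simp only [hf]
        rw [if_neg (by omega), if_neg (by omega), if_neg (by omega), if_pos hb]
      rw [hfa, hfb]; exact hxy
    · have hfa : f a = y := by
        simp only [hf]
        rw [if_neg (by omega), if_neg (by omega), if_neg (by omega), if_pos ha]
      have hfb : f b = z := by
        simp only [hf]
        rw [if_neg (by omega), if_neg (by omega), if_neg (by omega), if_neg (by omega)]
      rw [hfa, hfb]; exact hyz
  refine ⟨⟨f, hinj⟩, ?_⟩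
  intro a b hab
  rw [TnStar, SimpleGraph.fromRel_adj] at hab
  obtain ⟨hne, h | h⟩ := hab
  · exact hAdj a b h
  · exact (hAdj b a h).symm

lemma exNum_lower {n t : ℕ} (hn : 5 ≤ n) (htn : n - 3 ≤ t) :
    ∃ G₀ : SimpleGraph (Fin (n - 2 + t)), ¬ ContainsCopy G₀ (TnStar n) ∧
      Nat.card G₀.edgeSet = (n - 3) ^ 2 := by
  classical
  set p := n - 2 + t with hp
  set P : Fin p → Prop := fun x => x.val < n - 2 with hP
  set Q : Fin p → Prop := fun x => n - 2 ≤ x.val ∧ x.val < (n - 2) + (n - 3) with hQ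
  have hPQ : ∀ x, P x → Q x → False := fun x h1 h2 => by simp [hP, hQ] at h1 h2; omega
  set G₀ : SimpleGraph (Fin p) :=
    SimpleGraph.fromRel (fun a b => (P a ∧ P b) ∨ (Q a ∧ Q b)) with hG₀
  have hAdjIff : ∀ a b, G₀.Adj a b ↔ a ≠ b ∧ ((P a ∧ P b) ∨ (Q a ∧ Q b)) := by
    intro a b
    rw [hG₀, SimpleGraph.fromRel_adj]
    constructor
    · rintro ⟨h, h1 | h1⟩
      · exact ⟨h, h1⟩
      · exact ⟨h, h1.imp And.symm And.symm⟩
    · rintro ⟨h, h1⟩; exact ⟨h, Or.inl h1⟩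
  refine ⟨G₀, ?_, ?_⟩
  · rintro ⟨f, hf⟩
    -- all vertices in the image lie in the same block
    have same : ∀ a b : Fin n, (TnStar n).Adj a b →
        (P (f a) ∧ P (f b)) ∨ (Q (f a) ∧ Q (f b)) := fun a b h => ((hAdjIff _ _).1 (hf a b h)).2
    have adj0 : ∀ b : Fin n, 1 ≤ b.val → b.val ≤ n - 3 → (TnStar n).Adj ⟨0, by omega⟩ b := by
      intro b h1 h2
      rw [TnStar, SimpleGraph.fromRel_adj]
      exact ⟨by intro h; rw [← h] at h1; simp at h1, Or.inl (Or.inl ⟨rfl, h1, h2⟩)⟩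
    have adj23 : (TnStar n).Adj ⟨n - 3, by omega⟩ ⟨n - 2, by omega⟩ := by
      rw [TnStar, SimpleGraph.fromRel_adj]
      refine ⟨by intro h; have := congrArg Fin.val h; simp at this; omega,
        Or.inl (Or.inr (Or.inl ⟨rfl, rfl⟩))⟩
    have adj34 : (TnStar n).Adj ⟨n - 2, by omega⟩ ⟨n - 1, by omega⟩ := by
      rw [TnStar, SimpleGraph.fromRel_adj]
      refine ⟨by intro h; have := congrArg Fin.val h; simp at this; omega,
        Or.inl (Or.inr (Or.inr ⟨rfl, rfl⟩))⟩
    set v₀ : Fin n := ⟨0, by omega⟩ with hv₀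
    -- trans of "same block"
    have tr : ∀ {a b c : Fin p}, ((P a ∧ P b) ∨ (Q a ∧ Q b)) → ((P b ∧ P c) ∨ (Q b ∧ Q c)) →
        ((P a ∧ P c) ∨ (Q a ∧ Q c)) := by
      rintro a b c (⟨h1, h2⟩ | ⟨h1, h2⟩) (⟨h3, h4⟩ | ⟨h3, h4⟩)
      · exact Or.inl ⟨h1, h4⟩
      · exact absurd h2 (fun h => hPQ _ h h3)
      · exact absurd h3 (fun h => hPQ _ h h2)
      · exact Or.inr ⟨h1, h4⟩
    have key : ∀ b : Fin n, (P (f v₀) ∧ P (f b)) ∨ (Q (f v₀) ∧ Q (f b)) := by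
      intro b
      have hb : b.val < n := b.isLt
      by_cases h0 : b.val = 0
      · have : b = v₀ := Fin.ext (by simpa [hv₀] using h0)
        rw [this]
        rcases same _ _ (adj0 ⟨1, by omega⟩ (by simp) (by simp; omega)) with ⟨h, _⟩ | ⟨h, _⟩
        · exact Or.inl ⟨h, h⟩
        · exact Or.inr ⟨h, h⟩
      by_cases h1 : b.val ≤ n - 3
      · exact same _ _ (adj0 b (by omega) h1)
      have h33 : (P (f v₀) ∧ P (f ⟨n - 3, by omega⟩)) ∨ (Q (f v₀) ∧ Q (f ⟨n - 3, by omega⟩)) :=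
        same _ _ (adj0 ⟨n - 3, by omega⟩ (by simp; omega) (by simp))
      by_cases h2 : b.val = n - 2
      · have : b = ⟨n - 2, by omega⟩ := Fin.ext h2
        rw [this]
        exact tr h33 (same _ _ adj23)
      · have hbv : b.val = n - 1 := by omega
        have : b = ⟨n - 1, by omega⟩ := Fin.ext hbv
        rw [this]
        exact tr (tr h33 (same _ _ adj23)) (same _ _ adj34)
    -- cardinality contradiction
    have hinj : Function.Injective f := f.injective
    rcases key v₀ with ⟨h, _⟩ | ⟨h, _⟩
    · have hsub : (Finset.univ : Finset (Fin n)).image f ⊆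
          Finset.univ.filter (fun x : Fin p => 0 ≤ x.val ∧ x.val < n - 2) := by
        intro x hx
        simp only [Finset.mem_image] at hx
        obtain ⟨b, _, rfl⟩ := hx
        rcases key b with ⟨_, h2⟩ | ⟨h2, _⟩
        · simp only [Finset.mem_filter, Finset.mem_univ, true_and]
          exact ⟨Nat.zero_le _, h2⟩
        · exact absurd h (fun hh => hPQ _ hh h2)
      have hc := Finset.card_le_card hsub
      rw [Finset.card_image_of_injective _ hinj, card_filter_Ico 0 (n - 2) (by omega)] at hc
      simp at hc
      omega
    · have hsub : (Finset.univ : Finset (Fin n)).image f ⊆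
          Finset.univ.filter (fun x : Fin p => n - 2 ≤ x.val ∧ x.val < (n - 2) + (n - 3)) := by
        intro x hx
        simp only [Finset.mem_image] at hx
        obtain ⟨b, _, rfl⟩ := hx
        rcases key b with ⟨h2, _⟩ | ⟨_, h2⟩
        · exact absurd h2 (fun hh => hPQ _ hh h)
        · simp only [Finset.mem_filter, Finset.mem_univ, true_and]
          exact h2
      have hc := Finset.card_le_card hsub
      rw [Finset.card_image_of_injective _ hinj,
        card_filter_Ico (n - 2) ((n - 2) + (n - 3)) (by omega)] at hc
      simp at hc
      omega
  · -- edge count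
    have hdeg : ∀ x : Fin p, G₀.degree x =
        (if P x then n - 3 else if Q x then n - 4 else 0) := by
      intro x
      by_cases hx : P x
      · rw [if_pos hx]
        have : G₀.neighborFinset x =
            (Finset.univ.filter (fun y : Fin p => 0 ≤ y.val ∧ y.val < n - 2)).erase x := by
          ext y
          simp only [SimpleGraph.mem_neighborFinset, hAdjIff, Finset.mem_erase,
            Finset.mem_filter, Finset.mem_univ, true_and]
          constructor
          · rintro ⟨hne, ⟨_, h2⟩ | ⟨h1, _⟩⟩
            · exact ⟨hne.symm, Nat.zero_le _, h2⟩
            · exact absurd hx (fun hh => hPQ _ hh h1)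
          · rintro ⟨hne, _, h2⟩
            exact ⟨hne.symm, Or.inl ⟨hx, h2⟩⟩
        rw [← SimpleGraph.card_neighborFinset_eq_degree, this, Finset.card_erase_of_mem,
          card_filter_Ico 0 (n - 2) (by omega)]
        · omega
        · simp only [Finset.mem_filter, Finset.mem_univ, true_and]
          exact ⟨Nat.zero_le _, hx⟩
      by_cases hx2 : Q x
      · rw [if_neg hx, if_pos hx2]
        have : G₀.neighborFinset x =
            (Finset.univ.filter (fun y : Fin p => n - 2 ≤ y.val ∧ y.val < (n - 2) + (n - 3))).erase x := by
          ext y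
          simp only [SimpleGraph.mem_neighborFinset, hAdjIff, Finset.mem_erase,
            Finset.mem_filter, Finset.mem_univ, true_and]
          constructor
          · rintro ⟨hne, ⟨h1, _⟩ | ⟨_, h2⟩⟩
            · exact absurd h1 (fun hh => hPQ _ hh hx2)
            · exact ⟨hne.symm, h2⟩
          · rintro ⟨hne, h2⟩
            exact ⟨hne.symm, Or.inr ⟨hx2, h2⟩⟩
        rw [← SimpleGraph.card_neighborFinset_eq_degree, this, Finset.card_erase_of_mem,
          card_filter_Ico (n - 2) ((n - 2) + (n - 3)) (by omega)]
        · omega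
        · simp only [Finset.mem_filter, Finset.mem_univ, true_and]
          exact hx2
      · rw [if_neg hx, if_neg hx2]
        rw [← SimpleGraph.card_neighborFinset_eq_degree, Finset.card_eq_zero]
        ext y
        simp only [SimpleGraph.mem_neighborFinset, hAdjIff, Finset.notMem_empty, iff_false]
        rintro ⟨_, ⟨h1, _⟩ | ⟨h1, _⟩⟩
        · exact hx h1
        · exact hx2 h1
    have hsum : ∑ x : Fin p, G₀.degree x = 2 * (n - 3) ^ 2 := by
      rw [Finset.sum_congr rfl (fun x _ => hdeg x)]
      rw [Finset.sum_ite, Finset.sum_ite, Finset.sum_const, Finset.sum_const, Finset.sum_const]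
      have e1 : (Finset.univ.filter (fun x : Fin p => P x)).card = n - 2 := by
        have : (Finset.univ.filter (fun x : Fin p => P x)) =
            Finset.univ.filter (fun x : Fin p => 0 ≤ x.val ∧ x.val < n - 2) := by
          ext x; simp [hP]
        rw [this, card_filter_Ico 0 (n - 2) (by omega)]
        omega
      have e2 : ((Finset.univ.filter (fun x : Fin p => ¬ P x)).filter
          (fun x : Fin p => Q x)).card = n - 3 := by
        have : ((Finset.univ.filter (fun x : Fin p => ¬ P x)).filter (fun x : Fin p => Q x)) =
            Finset.univ.filter (fun x : Fin p => n - 2 ≤ x.val ∧ x.val < (n - 2) + (n - 3)) := by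
          ext x
          simp only [Finset.mem_filter, Finset.mem_univ, true_and, hQ, hP]
          omega
        rw [this, card_filter_Ico (n - 2) ((n - 2) + (n - 3)) (by omega)]
        omega
      rw [e1, e2]
      simp only [smul_eq_mul, mul_zero, add_zero]
      have h3 : ∃ a, n = a + 5 := ⟨n - 5, by omega⟩
      obtain ⟨a, rfl⟩ := h3
      have : a + 5 - 2 = a + 3 := by omega
      rw [this]
      have : a + 5 - 3 = a + 2 := by omega
      rw [this]
      have : a + 5 - 4 = a + 1 := by omega
      rw [this]
      ring
    have := G₀.sum_degrees_eq_twice_card_edges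
    rw [hsum] at this
    have hcard : G₀.edgeFinset.card = (n - 3) ^ 2 := by omega
    rw [Nat.card_eq_fintype_card, ← SimpleGraph.edgeFinset_card, hcard]

theorem stmt6 (n t : ℕ) (hn : 4 ≤ n) (ht : 1 ≤ t) (G : SimpleGraph (Fin (n - 2 + t)))
    (hconn : G.Connected)
    (hfree : ¬ ContainsCopy G (TnStar n))
    (hext : Nat.card G.edgeSet = exNum (n - 2 + t) (TnStar n))
    (hde : ∀ v, Nat.card (G.neighborSet v) ≤ n - 3)
    (hmax : ∃ v, Nat.card (G.neighborSet v) = n - 3) :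
    t ≤ n - 4 ∧ Nat.card G.edgeSet ≤ (n - 3) ^ 2 := by
  classical
  haveI : DecidableRel G.Adj := fun a b => Classical.dec _
  have hdeg_eq : ∀ u, Nat.card (G.neighborSet u) = G.degree u := by
    intro u
    rw [Nat.card_eq_fintype_card, SimpleGraph.card_neighborSet_eq_degree]
  obtain ⟨v, hv⟩ := hmax
  rw [hdeg_eq] at hv
  have hde' : ∀ u, G.degree u ≤ n - 3 := fun u => by rw [← hdeg_eq]; exact hde u
  have hp3 : 3 ≤ n - 2 + t := by omega
  rcases Nat.lt_or_ge n 5 with h4 | h5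
  · -- n = 4 : impossible (max degree 1, connected, ≥ 3 vertices)
    exfalso
    have hv1 : G.degree v = 1 := by omega
    obtain ⟨x, hx⟩ := Finset.card_eq_one.mp
      ((SimpleGraph.card_neighborFinset_eq_degree G v).trans hv1)
    have hvx : G.Adj v x := by
      rw [← SimpleGraph.mem_neighborFinset, hx]; exact Finset.mem_singleton_self x
    have hxv : G.neighborFinset x = {v} := by
      have h1 : v ∈ G.neighborFinset x := by
        rw [SimpleGraph.mem_neighborFinset]; exact hvx.symm
      have h2 : (G.neighborFinset x).card ≤ 1 := by
        rw [SimpleGraph.card_neighborFinset_eq_degree]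
        have := hde' x
        omega
      have h3 : ({v} : Finset _) ⊆ G.neighborFinset x := Finset.singleton_subset_iff.mpr h1
      exact (Finset.eq_of_subset_of_card_le h3 (by simpa using h2)).symm
    have hclosed : ∀ ⦃a b : Fin (n - 2 + t)⦄, a ∈ ({v, x} : Set (Fin (n - 2 + t))) →
        G.Adj a b → b ∈ ({v, x} : Set (Fin (n - 2 + t))) := by
      rintro a b (rfl | rfl) hab
      · have : b ∈ G.neighborFinset a := by rwa [SimpleGraph.mem_neighborFinset]
        rw [hx] at this
        simp at this
        simp [this]
      · have : b ∈ G.neighborFinset a := by rwa [SimpleGraph.mem_neighborFinset]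
        rw [hxv] at this
        simp at this
        simp [this]
    have hall : ∀ u : Fin (n - 2 + t), u ∈ ({v, x} : Set (Fin (n - 2 + t))) := by
      intro u
      obtain ⟨w⟩ := hconn.preconnected v u
      exact walk_mem_closed hclosed w (by simp)
    have hsub : (Finset.univ : Finset (Fin (n - 2 + t))) ⊆ {v, x} := by
      intro u _
      have := hall u
      simp only [Set.mem_insert_iff, Set.mem_singleton_iff] at this
      simp [this]
    have hcards := Finset.card_le_card hsub
    rw [Finset.card_univ, Fintype.card_fin] at hcards
    have h2 : ({v, x} : Finset (Fin (n - 2 + t))).card ≤ 2 :=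
      (Finset.card_insert_le _ _).trans (by simp)
    omega
  -- main case n ≥ 5
  set Nv := G.neighborFinset v with hNvdef
  have hNvcard : Nv.card = n - 3 := by
    rw [hNvdef, SimpleGraph.card_neighborFinset_eq_degree]; exact hv
  have hvNv : v ∉ Nv := by simp [hNvdef]
  have hCore : ∀ w u y, w ∈ Nv → G.Adj w u → u ∉ insert v Nv → G.Adj u y →
      y ∉ insert v Nv → False := by
    intro w u y hw hwu hu huy hy
    simp only [Finset.mem_insert, not_or] at hu hy
    apply hfree
    refine mkCopy h5 G v w u y (Nv.erase w) ?_ ?_ ?_ ?_ ?_ ?_ ?_ ?_ ?_ ?_ ?_ ?_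
    · rw [Finset.card_erase_of_mem hw, hNvcard]
      omega
    · intro l hl
      have : l ∈ Nv := Finset.mem_of_mem_erase hl
      rwa [hNvdef, SimpleGraph.mem_neighborFinset] at this
    · rwa [hNvdef, SimpleGraph.mem_neighborFinset] at hw
    · exact hwu
    · exact huy
    · exact fun h => hvNv (Finset.mem_of_mem_erase h)
    · exact Finset.notMem_erase w Nv
    · exact fun h => hu.2 (Finset.mem_of_mem_erase h)
    · exact fun h => hy.2 (Finset.mem_of_mem_erase h)
    · exact fun h => hu.1 h.symm
    · exact fun h => hy.1 h.symm
    · exact fun h => hy.2 (h ▸ hw)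
  have hL1 : ∀ u, u ∉ insert v Nv → ∀ y, G.Adj u y → y ∈ Nv := by
    have hC : ∀ x : Fin (n - 2 + t), x = v ∨ x ∈ Nv ∨ ∃ w ∈ Nv, G.Adj w x := by
      intro x
      have hclosed : ∀ ⦃a b : Fin (n - 2 + t)⦄,
          a ∈ {y : Fin (n - 2 + t) | y = v ∨ y ∈ Nv ∨ ∃ w ∈ Nv, G.Adj w y} → G.Adj a b →
          b ∈ {y : Fin (n - 2 + t) | y = v ∨ y ∈ Nv ∨ ∃ w ∈ Nv, G.Adj w y} := by
        rintro a b ha hab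
        simp only [Set.mem_setOf_eq] at ha ⊢
        rcases ha with rfl | ha | ⟨w, hw, hwa⟩
        · exact Or.inr (Or.inl (by rwa [hNvdef, SimpleGraph.mem_neighborFinset]))
        · exact Or.inr (Or.inr ⟨a, ha, hab⟩)
        · by_cases hav : a = v
          · subst hav
            exact Or.inr (Or.inl (by rwa [hNvdef, SimpleGraph.mem_neighborFinset]))
          by_cases haN : a ∈ Nv
          · exact Or.inr (Or.inr ⟨a, haN, hab⟩)
          by_cases hbv : b = v
          · exfalso
            apply haN
            rw [hNvdef, SimpleGraph.mem_neighborFinset]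
            rw [hbv] at hab
            exact hab.symm
          by_cases hbN : b ∈ Nv
          · exact Or.inr (Or.inl hbN)
          · exact absurd (hCore w a b hw hwa (by simp [hav, haN]) hab (by simp [hbv, hbN])) id
      obtain ⟨w⟩ := hconn.preconnected v x
      exact walk_mem_closed hclosed w (Or.inl rfl)
    intro u hu y huy
    have hu' := hu
    simp only [Finset.mem_insert, not_or] at hu'
    rcases hC u with rfl | huN | ⟨w, hw, hwu⟩
    · exact absurd rfl hu'.1
    · exact absurd huN hu'.2
    · by_cases hyN : y ∈ Nv
      · exact hyN
      by_cases hyv : y = v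
      · exfalso
        apply hu'.2
        rw [hNvdef, SimpleGraph.mem_neighborFinset]
        rw [hyv] at huy
        exact huy.symm
      · exact absurd (hCore w u y hw hwu hu huy (by simp [hyv, hyN])) id
  have hecard : Nat.card G.edgeSet = G.edgeFinset.card := by
    rw [Nat.card_eq_fintype_card, ← SimpleGraph.edgeFinset_card]
  set E2 := G.edgeFinset.filter (fun e => ¬ v ∈ e) with hE2def
  have hsplit : G.edgeFinset.card = (n - 3) + E2.card := by
    rw [← Finset.card_filter_add_card_filter_not (s := G.edgeFinset)
      (p := fun e => v ∈ e)]
    congr 1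
    rw [← SimpleGraph.incidenceFinset_eq_filter, SimpleGraph.card_incidenceFinset_eq_degree]
    exact hv
  have hE2hit : ∀ e ∈ E2, ∃ w ∈ Nv, w ∈ e := by
    intro e he
    rw [hE2def, Finset.mem_filter, SimpleGraph.mem_edgeFinset] at he
    obtain ⟨he1, he2⟩ := he
    revert he1 he2
    induction e using Sym2.ind with
    | _ a b =>
      intro he1 he2
      rw [SimpleGraph.mem_edgeSet] at he1
      rw [Sym2.mem_iff] at he2
      push_neg at he2
      by_cases haN : a ∈ Nv
      · exact ⟨a, haN, by simp⟩
      · have : b ∈ Nv := hL1 a (by simp [Ne.symm he2.1, haN]) b he1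
        exact ⟨b, this, by simp⟩
  have hFcard : ∀ w ∈ Nv, (E2.filter (fun e => w ∈ e)).card ≤ G.degree w - 1 := by
    intro w hw
    have hadjvw : G.Adj v w := by rwa [hNvdef, SimpleGraph.mem_neighborFinset] at hw
    have hsub : E2.filter (fun e => w ∈ e) ⊆ (G.incidenceFinset w).erase s(v, w) := by
      intro e he
      rw [Finset.mem_filter, hE2def, Finset.mem_filter] at he
      rw [Finset.mem_erase, SimpleGraph.incidenceFinset_eq_filter, Finset.mem_filter]
      refine ⟨fun h => he.1.2 (h ▸ Sym2.mem_mk_left v w), he.1.1, he.2⟩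
    have hmem : s(v, w) ∈ G.incidenceFinset w := by
      rw [SimpleGraph.incidenceFinset_eq_filter, Finset.mem_filter, SimpleGraph.mem_edgeFinset,
        SimpleGraph.mem_edgeSet]
      exact ⟨hadjvw, Sym2.mem_mk_right v w⟩
    have hc := Finset.card_le_card hsub
    rw [Finset.card_erase_of_mem hmem, SimpleGraph.card_incidenceFinset_eq_degree] at hc
    exact hc
  have hFcard' : ∀ w ∈ Nv, (E2.filter (fun e => w ∈ e)).card ≤ n - 4 := by
    intro w hw
    have h1 := hFcard w hw
    have h2 := hde' w
    omega
  have hswap : ∑ w ∈ Nv, (E2.filter (fun e => w ∈ e)).card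
      = ∑ e ∈ E2, (Nv.filter (fun w => w ∈ e)).card := by
    simp_rw [Finset.card_filter]
    rw [Finset.sum_comm]
  have hE2le : E2.card ≤ ∑ w ∈ Nv, (E2.filter (fun e => w ∈ e)).card := by
    rw [hswap]
    calc E2.card = ∑ _e ∈ E2, 1 := by simp
      _ ≤ ∑ e ∈ E2, (Nv.filter (fun w => w ∈ e)).card := by
          refine Finset.sum_le_sum fun e he => ?_
          obtain ⟨w, hw, hwe⟩ := hE2hit e he
          exact Finset.card_pos.mpr ⟨w, Finset.mem_filter.mpr ⟨hw, hwe⟩⟩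
  have hE2top : E2.card ≤ (n - 3) * (n - 4) := by
    refine le_trans hE2le (le_trans (Finset.sum_le_sum hFcard') ?_)
    rw [Finset.sum_const, hNvcard, smul_eq_mul]
  have harith : (n - 3) + (n - 3) * (n - 4) = (n - 3) ^ 2 := by
    obtain ⟨a, rfl⟩ : ∃ a, n = a + 5 := ⟨n - 5, by omega⟩
    have h1 : a + 5 - 3 = a + 2 := by omega
    have h2 : a + 5 - 4 = a + 1 := by omega
    rw [h1, h2]; ring
  have hUB : G.edgeFinset.card ≤ (n - 3) ^ 2 := by
    rw [hsplit, ← harith]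
    omega
  refine ⟨?_, by rw [hecard]; exact hUB⟩
  by_contra hT
  have htn : n - 3 ≤ t := by omega
  obtain ⟨G₀, hG₀free, hG₀card⟩ := exNum_lower h5 htn
  have hBdd : BddAbove {m : ℕ | ∃ G' : SimpleGraph (Fin (n - 2 + t)),
      ¬ ContainsCopy G' (TnStar n) ∧ Nat.card G'.edgeSet = m} := by
    refine ⟨Nat.card (Sym2 (Fin (n - 2 + t))), ?_⟩
    rintro m ⟨G', -, rfl⟩
    exact Nat.card_le_card_of_injective
      (fun e : G'.edgeSet => (e : Sym2 (Fin (n - 2 + t)))) Subtype.val_injective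
  have hlow : (n - 3) ^ 2 ≤ Nat.card G.edgeSet := by
    rw [hext]
    exact le_csSup hBdd ⟨G₀, hG₀free, hG₀card⟩
  have heq : G.edgeFinset.card = (n - 3) ^ 2 := le_antisymm hUB (hecard ▸ hlow)
  have hE2eq : E2.card = (n - 3) * (n - 4) := by
    have h1 : (n - 3) + E2.card = (n - 3) + (n - 3) * (n - 4) := by
      rw [harith, ← heq, hsplit]
    omega
  have hFeq : ∀ w ∈ Nv, (E2.filter (fun e => w ∈ e)).card = n - 4 := by
    by_contra hcon
    push_neg at hcon
    obtain ⟨w₀, hw₀, hne⟩ := hcon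
    have hlt : (E2.filter (fun e => w₀ ∈ e)).card < n - 4 :=
      lt_of_le_of_ne (hFcard' w₀ hw₀) hne
    have hstr : ∑ w ∈ Nv, (E2.filter (fun e => w ∈ e)).card < ∑ _w ∈ Nv, (n - 4) :=
      Finset.sum_lt_sum hFcard' ⟨w₀, hw₀, hlt⟩
    rw [Finset.sum_const, hNvcard, smul_eq_mul] at hstr
    exact absurd (lt_of_le_of_lt (hE2eq ▸ hE2le) hstr) (lt_irrefl _)
  have hdegw : ∀ w ∈ Nv, G.degree w = n - 3 := by
    intro w hw
    have h1 := hFcard w hw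
    rw [hFeq w hw] at h1
    have h2 := hde' w
    omega
  have hsum_eq : ∑ e ∈ E2, (Nv.filter (fun w => w ∈ e)).card = (n - 3) * (n - 4) := by
    rw [← hswap, Finset.sum_congr rfl hFeq, Finset.sum_const, hNvcard, smul_eq_mul]
  have hone : ∀ e ∈ E2, (Nv.filter (fun w => w ∈ e)).card = 1 := by
    by_contra hcon
    push_neg at hcon
    obtain ⟨e₀, he₀, hne⟩ := hcon
    have h1 : ∀ e ∈ E2, 1 ≤ (Nv.filter (fun w => w ∈ e)).card := by
      intro e he
      obtain ⟨w, hw, hwe⟩ := hE2hit e he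
      exact Finset.card_pos.mpr ⟨w, Finset.mem_filter.mpr ⟨hw, hwe⟩⟩
    have h2 : 1 < (Nv.filter (fun w => w ∈ e₀)).card :=
      lt_of_le_of_ne (h1 e₀ he₀) (Ne.symm hne)
    have hstr : ∑ _e ∈ E2, 1 < ∑ e ∈ E2, (Nv.filter (fun w => w ∈ e)).card :=
      Finset.sum_lt_sum h1 ⟨e₀, he₀, h2⟩
    rw [Finset.sum_const, smul_eq_mul, mul_one, hsum_eq, hE2eq] at hstr
    exact absurd hstr (lt_irrefl _)
  have hNvNv : ∀ w₁ ∈ Nv, ∀ w₂ ∈ Nv, ¬ G.Adj w₁ w₂ := by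
    intro w₁ h₁ w₂ h₂ hadj
    have hv1 : G.Adj v w₁ := by rwa [hNvdef, SimpleGraph.mem_neighborFinset] at h₁
    have hv2 : G.Adj v w₂ := by rwa [hNvdef, SimpleGraph.mem_neighborFinset] at h₂
    have he : s(w₁, w₂) ∈ E2 := by
      rw [hE2def, Finset.mem_filter, SimpleGraph.mem_edgeFinset, SimpleGraph.mem_edgeSet,
        Sym2.mem_iff]
      push_neg
      exact ⟨hadj, hv1.ne, hv2.ne⟩
    have hone' := hone _ he
    have hsub : ({w₁, w₂} : Finset (Fin (n - 2 + t))) ⊆ Nv.filter (fun w => w ∈ s(w₁, w₂)) := by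
      intro x hx
      rw [Finset.mem_insert, Finset.mem_singleton] at hx
      rcases hx with rfl | rfl
      · exact Finset.mem_filter.mpr ⟨h₁, Sym2.mem_mk_left _ _⟩
      · exact Finset.mem_filter.mpr ⟨h₂, Sym2.mem_mk_right _ _⟩
    have hcard2 : ({w₁, w₂} : Finset (Fin (n - 2 + t))).card = 2 := by
      rw [Finset.card_insert_of_notMem (by simpa using hadj.ne), Finset.card_singleton]
    have hle := Finset.card_le_card hsub
    rw [hcard2, hone'] at hle
    omega
  -- final embedding
  obtain ⟨w, hw⟩ : Nv.Nonempty := Finset.card_pos.mp (by rw [hNvcard]; omega)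
  have hadjvw : G.Adj v w := by rwa [hNvdef, SimpleGraph.mem_neighborFinset] at hw
  set Nw := G.neighborFinset w with hNwdef
  have hNwcard : Nw.card = n - 3 := by
    rw [hNwdef, SimpleGraph.card_neighborFinset_eq_degree]; exact hdegw w hw
  have hvNw : v ∈ Nw := by
    rw [hNwdef, SimpleGraph.mem_neighborFinset]; exact hadjvw.symm
  have hLcard : (Nw.erase v).card = n - 4 := by
    rw [Finset.card_erase_of_mem hvNw, hNwcard]
    omega
  have hLout : ∀ x ∈ Nw.erase v, x ∉ insert v Nv := by
    intro x hx
    rw [Finset.mem_erase] at hx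
    obtain ⟨hxv, hxNw⟩ := hx
    have hadjx : G.Adj w x := by rwa [hNwdef, SimpleGraph.mem_neighborFinset] at hxNw
    rw [Finset.mem_insert]
    push_neg
    exact ⟨hxv, fun hxNv => hNvNv w hw x hxNv hadjx⟩
  set S := (Finset.univ : Finset (Fin (n - 2 + t))) \ insert v Nv with hSdef
  have hScard : S.card = t := by
    rw [hSdef, Finset.card_sdiff_of_subset (Finset.subset_univ _),
      Finset.card_insert_of_notMem hvNv, hNvcard, Finset.card_univ, Fintype.card_fin]
    omega
  have hsub2 : Nw.erase v ⊆ S := by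
    intro x hx
    rw [hSdef, Finset.mem_sdiff]
    exact ⟨Finset.mem_univ x, hLout x hx⟩
  obtain ⟨s, hsS, hsL⟩ : ∃ s ∈ S, s ∉ Nw.erase v := by
    by_contra hcon
    push_neg at hcon
    have := Finset.card_le_card hcon
    rw [hScard, hLcard] at this
    omega
  have hsIns : s ∉ insert v Nv := (Finset.mem_sdiff.mp hsS).2
  have hsv : s ≠ v := by
    intro h; exact hsIns (h ▸ Finset.mem_insert_self v Nv)
  have hsNv : s ∉ Nv := fun h => hsIns (Finset.mem_insert_of_mem h)
  have hsNw : s ∉ Nw := fun h => hsL (Finset.mem_erase.mpr ⟨hsv, h⟩)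
  obtain ⟨w', hadjsw'⟩ := exists_adj_conn hconn (by omega) s
  have hw'Nv : w' ∈ Nv := hL1 s hsIns w' hadjsw'
  have hadjvw' : G.Adj v w' := by rwa [hNvdef, SimpleGraph.mem_neighborFinset] at hw'Nv
  have hww' : w ≠ w' := by
    intro h
    apply hsNw
    rw [hNwdef, SimpleGraph.mem_neighborFinset, h]
    exact hadjsw'.symm
  apply hfree
  refine mkCopy h5 G w v w' s (Nw.erase v) hLcard ?_ hadjvw.symm hadjvw' hadjsw'.symm
    ?_ ?_ ?_ ?_ hww' ?_ hsv.symm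
  · intro l hl
    have : l ∈ Nw := Finset.mem_of_mem_erase hl
    rwa [hNwdef, SimpleGraph.mem_neighborFinset] at this
  · intro h
    have : w ∈ Nw := Finset.mem_of_mem_erase h
    rw [hNwdef, SimpleGraph.mem_neighborFinset] at this
    exact G.irrefl this
  · exact Finset.notMem_erase v Nw
  · intro h
    exact (hLout w' h) (Finset.mem_insert_of_mem hw'Nv)
  · exact hsL
  · intro h
    exact hsNv (h ▸ hw)
end
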